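/- arXiv:1409.1833 — 10 statements merged into one kernel-verified Lean document; each statement's English description precedes it below -/
import Mathlib

section
/- Let (p,q) be a non-strict pair in X. Then bisec(p,q) = B₁ ∪ B₂ ∪ B₃, where B₂ = C(p,φ) ∩ C(q,φ), B₃ = C(p,−φ) ∩ C(q,−φ), and B₁ is a set for which there exists a homeomorphism f : [0,1] → B₁ with f(0) = s_b and f(1) = s_t. -/
variable {X : Type*} [NormedAddCommGroup X] [NormedSpace ℝ X]

/-- The bisector of two points: all points equidistant from `p` and `q`. -/
def bisec (p q : X) : Set X := {z : X | ‖z - p‖ = ‖z - q‖}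

/-- The pair `(p, q)` is strict if the unit sphere contains no nondegenerate
segment parallel to `p - q`. -/
def strictPair (p q : X) : Prop :=
  ¬ ∃ a b : X, a ≠ b ∧ segment ℝ a b ⊆ {x : X | ‖x‖ = 1} ∧ ∃ t : ℝ, b - a = t • (p - q)

/-- The cone `C(x, φ) = {x + a : φ(a) = ‖a‖}`. -/
def cone (x : X) (φ : X →L[ℝ] ℝ) : Set X := {z : X | φ (z - x) = ‖z - x‖}


section auxlemmas

lemma aux_pos (a d : X) (T : ℝ) (hT : 1 ≤ T) (hTd : 2 * ‖a‖ < T * ‖d‖) :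
    ‖a + (T - 1) • d‖ < ‖a + T • d‖ := by
  have hT0 : (0:ℝ) < T := lt_of_lt_of_le one_pos hT
  have hcombo : a + (T - 1) • d = (1 - T⁻¹) • (a + T • d) + T⁻¹ • a := by
    match_scalars <;> field_simp <;> ring
  have h1 : ‖a + (T-1) • d‖ ≤ (1 - T⁻¹) * ‖a + T • d‖ + T⁻¹ * ‖a‖ := by
    have g1 : (0:ℝ) ≤ 1 - T⁻¹ := by
      nlinarith [mul_inv_cancel₀ (ne_of_gt hT0), inv_pos.mpr hT0]
    have g2 : (0:ℝ) ≤ T⁻¹ := by positivity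
    rw [hcombo]
    refine (norm_add_le _ _).trans ?_
    rw [norm_smul, norm_smul, Real.norm_eq_abs, Real.norm_eq_abs,
      abs_of_nonneg g1, abs_of_nonneg g2]
  have h2 : T * ‖d‖ - ‖a‖ ≤ ‖a + T • d‖ := by
    have e : T * ‖d‖ = ‖(a + T • d) - a‖ := by
      rw [add_sub_cancel_left, norm_smul, Real.norm_eq_abs, abs_of_pos hT0]
    have := norm_sub_le (a + T • d) a
    linarith [this, e ▸ this]
  have hinv : (0:ℝ) < T⁻¹ := inv_pos.mpr hT0
  have hN : ‖a‖ < ‖a + T • d‖ := by linarith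
  nlinarith [mul_pos hinv (sub_pos.mpr hN)]

lemma aux_neg (a d : X) (T : ℝ) (hT : T ≤ 0) (hTd : 2 * ‖a‖ < (1 - T) * ‖d‖) :
    ‖a + T • d‖ < ‖a + (T - 1) • d‖ := by
  have h := aux_pos a (-d) (1 - T) (by linarith) (by rwa [norm_neg])
  have e1 : a + (1 - T - 1) • (-d) = a + T • d := by module
  have e2 : a + (1 - T) • (-d) = a + (T - 1) • d := by module
  rwa [e1, e2] at h

lemma two_points_pos (p q : X) (hpq : p ≠ q) (φ : X →L[ℝ] ℝ)
    (hψuniq : ∀ ψ : X →L[ℝ] ℝ, ‖ψ‖ = 1 → ψ (q - p) = 0 → ψ = φ ∨ ψ = -φ)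
    (z z' : X) (hz : ‖z - p‖ = ‖z - q‖) (hz' : ‖z' - p‖ = ‖z' - q‖)
    (s : ℝ) (hs : z' - z = s • (q - p)) (hspos : 0 < s) :
    (z ∈ cone p φ ∩ cone q φ ∧ z' ∈ cone p φ ∩ cone q φ) ∨
      (z ∈ cone p (-φ) ∩ cone q (-φ) ∧ z' ∈ cone p (-φ) ∩ cone q (-φ)) := by
  obtain ⟨d, hd⟩ : ∃ d : X, d = q - p := ⟨q - p, rfl⟩
  obtain ⟨a, ha⟩ : ∃ a : X, a = z - p := ⟨z - p, rfl⟩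
  have hzq : z - q = a - d := by rw [ha, hd]; abel
  have hz'eq : z' = z + s • d := by
    rw [← hd] at hs; rw [← hs]; abel
  have hz'p : z' - p = a + s • d := by rw [hz'eq, ha]; abel
  have hz'q : z' - q = a + (s - 1) • d := by
    rw [hz'eq, ha, hd]; module
  have hn1 : ‖a - d‖ = ‖a‖ := by rw [← hzq, ← hz, ha]
  have hn2 : ‖a + (s - 1) • d‖ = ‖a + s • d‖ := by rw [← hz'q, ← hz'p, hz']
  have hane : a ≠ 0 := by
    intro h0
    apply hpq
    have h1 : ‖a - d‖ = 0 := by rw [hn1, h0, norm_zero]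
    rw [h0, zero_sub, norm_neg, norm_eq_zero] at h1
    rw [hd] at h1
    exact (sub_eq_zero.mp h1).symm
  have hr0 : 0 < ‖a‖ := norm_pos_iff.mpr hane
  have hsp : (0:ℝ) < s + 1 := by linarith
  have hlam0 : 0 < s / (s + 1) := div_pos hspos hsp
  have hlam1 : s / (s + 1) < 1 := (div_lt_one hsp).mpr (by linarith)
  have hc0 : a = (s / (s+1)) • (a - d) + (1 - s / (s+1)) • (a + s • d) := by
    match_scalars <;> field_simp <;> ring
  have hc1 : a + (s - 1) • d
      = (1 - s / (s+1)) • (a - d) + (s / (s+1)) • (a + s • d) := by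
    match_scalars <;> field_simp <;> ring
  have hle1 : ‖a‖ ≤ (s / (s+1)) * ‖a‖ + (1 - s / (s+1)) * ‖a + s • d‖ := by
    calc ‖a‖ = ‖(s / (s+1)) • (a - d) + (1 - s / (s+1)) • (a + s • d)‖ := by rw [← hc0]
    _ ≤ ‖(s / (s+1)) • (a - d)‖ + ‖(1 - s / (s+1)) • (a + s • d)‖ := norm_add_le _ _
    _ = (s / (s+1)) * ‖a‖ + (1 - s / (s+1)) * ‖a + s • d‖ := by
        rw [norm_smul, norm_smul, Real.norm_eq_abs, Real.norm_eq_abs,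
          abs_of_pos hlam0, abs_of_pos (by linarith), hn1]
  have hle2 : ‖a + s • d‖ ≤ (1 - s / (s+1)) * ‖a‖ + (s / (s+1)) * ‖a + s • d‖ := by
    calc ‖a + s • d‖ = ‖(1 - s / (s+1)) • (a - d) + (s / (s+1)) • (a + s • d)‖ := by
          rw [← hc1, hn2]
    _ ≤ ‖(1 - s / (s+1)) • (a - d)‖ + ‖(s / (s+1)) • (a + s • d)‖ := norm_add_le _ _
    _ = (1 - s / (s+1)) * ‖a‖ + (s / (s+1)) * ‖a + s • d‖ := by
        rw [norm_smul, norm_smul, Real.norm_eq_abs, Real.norm_eq_abs,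
          abs_of_pos hlam0, abs_of_pos (by linarith), hn1]
  have hNr : ‖a + s • d‖ = ‖a‖ := by
    have hpos : (0:ℝ) < 1 - s / (s+1) := by linarith
    have h1 : (1 - s / (s+1)) * ‖a‖ ≤ (1 - s / (s+1)) * ‖a + s • d‖ := by nlinarith
    have h2 : (1 - s / (s+1)) * ‖a + s • d‖ ≤ (1 - s / (s+1)) * ‖a‖ := by nlinarith
    have g1 := le_of_mul_le_mul_left h1 hpos
    have g2 := le_of_mul_le_mul_left h2 hpos
    linarith
  obtain ⟨ψ, hψn, hψa⟩ := exists_dual_vector ℝ a (norm_ne_zero_iff.mpr hane)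
  have hψa' : ψ a = ‖a‖ := by exact_mod_cast hψa
  have hbd : ∀ x : X, ψ x ≤ ‖x‖ := by
    intro x
    calc ψ x ≤ |ψ x| := le_abs_self _
    _ = ‖ψ x‖ := (Real.norm_eq_abs _).symm
    _ ≤ ‖ψ‖ * ‖x‖ := ψ.le_opNorm x
    _ = ‖x‖ := by rw [hψn, one_mul]
  have hx1 : ψ (a - d) ≤ ‖a‖ := by rw [← hn1]; exact hbd _
  have hy1 : ψ (a + s • d) ≤ ‖a‖ := by rw [← hNr]; exact hbd _
  have hcomb : ‖a‖ = (s / (s+1)) * ψ (a - d) + (1 - s / (s+1)) * ψ (a + s • d) := by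
    conv_lhs => rw [← hψa', hc0]
    rw [map_add, map_smul, map_smul, smul_eq_mul, smul_eq_mul]
  have t1 : 0 ≤ (s / (s+1)) * (‖a‖ - ψ (a - d)) :=
    mul_nonneg (le_of_lt hlam0) (by linarith)
  have t2 : 0 ≤ (1 - s / (s+1)) * (‖a‖ - ψ (a + s • d)) :=
    mul_nonneg (by linarith) (by linarith)
  have hsum : (s / (s+1)) * (‖a‖ - ψ (a - d))
      + (1 - s / (s+1)) * (‖a‖ - ψ (a + s • d)) = 0 := by
    linear_combination hcomb
  have hx2 : ψ (a - d) = ‖a‖ := by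
    have h0 : (s / (s+1)) * (‖a‖ - ψ (a - d)) = 0 := by linarith
    have := (mul_eq_zero.mp h0).resolve_left (ne_of_gt hlam0)
    linarith
  have hy2 : ψ (a + s • d) = ‖a‖ := by
    have h0 : (1 - s / (s+1)) * (‖a‖ - ψ (a + s • d)) = 0 := by linarith
    have := (mul_eq_zero.mp h0).resolve_left (by intro h; linarith)
    linarith
  have hψd : ψ d = 0 := by
    have h := map_sub ψ a d
    rw [hx2, hψa'] at h
    linarith
  have hψsd : ψ (a + (s-1) • d) = ‖a‖ := by
    rw [map_add, map_smul, smul_eq_mul, hψd, hψa']; ring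
  have hdqp : ψ (q - p) = 0 := by rw [← hd]; exact hψd
  rcases hψuniq ψ hψn hdqp with hc | hc
  · left
    subst hc
    refine ⟨⟨?_, ?_⟩, ?_, ?_⟩
    · show ψ (z - p) = ‖z - p‖
      rw [← ha, hψa']
    · show ψ (z - q) = ‖z - q‖
      rw [hzq, hx2, hn1.symm, ← hzq]
    · show ψ (z' - p) = ‖z' - p‖
      rw [hz'p, hy2, ← hNr]
    · show ψ (z' - q) = ‖z' - q‖
      rw [hz'q, hψsd, ← hNr, ← hn2]
  · right
    have hval : ∀ x : X, (-φ) x = ψ x := by intro x; rw [hc]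
    refine ⟨⟨?_, ?_⟩, ?_, ?_⟩
    · show (-φ) (z - p) = ‖z - p‖
      rw [hval, ← ha, hψa']
    · show (-φ) (z - q) = ‖z - q‖
      rw [hval, hzq, hx2, hn1.symm, ← hzq]
    · show (-φ) (z' - p) = ‖z' - p‖
      rw [hval, hz'p, hy2, ← hNr]
    · show (-φ) (z' - q) = ‖z' - q‖
      rw [hval, hz'q, hψsd, ← hNr, ← hn2]

lemma two_points (p q : X) (hpq : p ≠ q) (φ : X →L[ℝ] ℝ)
    (hker : ∀ x : X, φ x = 0 → ∃ s : ℝ, x = s • (q - p))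
    (hψuniq : ∀ ψ : X →L[ℝ] ℝ, ‖ψ‖ = 1 → ψ (q - p) = 0 → ψ = φ ∨ ψ = -φ)
    (z z' : X) (hz : ‖z - p‖ = ‖z - q‖) (hz' : ‖z' - p‖ = ‖z' - q‖)
    (hne : z ≠ z') (hlev : φ z = φ z') :
    (z ∈ cone p φ ∩ cone q φ ∧ z' ∈ cone p φ ∩ cone q φ) ∨
      (z ∈ cone p (-φ) ∩ cone q (-φ) ∧ z' ∈ cone p (-φ) ∩ cone q (-φ)) := by
  obtain ⟨s, hs⟩ := hker (z' - z) (by rw [map_sub, hlev, sub_self])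
  rcases lt_trichotomy s 0 with h | h | h
  · have hs' : z - z' = (-s) • (q - p) := by rw [neg_smul, ← hs]; abel
    rcases two_points_pos p q hpq φ hψuniq z' z hz' hz (-s) hs' (by linarith) with
      ⟨h1, h2⟩ | ⟨h1, h2⟩
    · exact Or.inl ⟨h2, h1⟩
    · exact Or.inr ⟨h2, h1⟩
  · exfalso
    rw [h, zero_smul] at hs
    exact hne (sub_eq_zero.mp hs).symm
  · exact two_points_pos p q hpq φ hψuniq z z' hz hz' s hs h

end auxlemmas

set_option maxHeartbeats 2000000 in
open Module in
theorem bisector_decomposition_nonstrict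
    (hdim : Module.finrank ℝ X = 2) (p q : X) (hpq : p ≠ q)
    (hns : ¬ strictPair p q)
    (φ : X →L[ℝ] ℝ) (hφ : ‖φ‖ = 1) (hφpq : φ (p - q) = 0)
    (u u' : X) (huu' : u ≠ u')
    (hface : {x : X | ‖x‖ ≤ 1 ∧ φ x = 1} = segment ℝ u u')
    (hlabel : ∃ c : ℝ, 0 < c ∧ u' - u = c • (q - p))
    (s_t s_b : X)
    (hst1 : ∃ t : ℝ, 0 ≤ t ∧ s_t = p + t • u')
    (hst2 : ∃ t : ℝ, 0 ≤ t ∧ s_t = q + t • u)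
    (hsb1 : ∃ t : ℝ, 0 ≤ t ∧ s_b = p - t • u)
    (hsb2 : ∃ t : ℝ, 0 ≤ t ∧ s_b = q - t • u') :
    ∃ B₁ : Set X,
      (∃ f : (Set.Icc (0:ℝ) 1) ≃ₜ B₁,
        ((f ⟨0, by norm_num⟩ : B₁) : X) = s_b ∧ ((f ⟨1, by norm_num⟩ : B₁) : X) = s_t) ∧
      bisec p q = B₁ ∪ (cone p φ ∩ cone q φ) ∪ (cone p (-φ) ∩ cone q (-φ)) := by
  obtain ⟨κ, hκ, hκeq⟩ := hlabel
  have hφle : ∀ x : X, φ x ≤ ‖x‖ := by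
    intro x
    calc φ x ≤ |φ x| := le_abs_self _
    _ = ‖φ x‖ := (Real.norm_eq_abs _).symm
    _ ≤ ‖φ‖ * ‖x‖ := φ.le_opNorm x
    _ = ‖x‖ := by rw [hφ, one_mul]
  have humem : u ∈ {x : X | ‖x‖ ≤ 1 ∧ φ x = 1} := by
    rw [hface]; exact left_mem_segment ℝ u u'
  have hu'mem : u' ∈ {x : X | ‖x‖ ≤ 1 ∧ φ x = 1} := by
    rw [hface]; exact right_mem_segment ℝ u u'
  have hφu : φ u = 1 := humem.2
  have hφu' : φ u' = 1 := hu'mem.2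
  have hnu : ‖u‖ = 1 := le_antisymm humem.1 (by rw [← hφu]; exact hφle u)
  have hnu' : ‖u'‖ = 1 := le_antisymm hu'mem.1 (by rw [← hφu']; exact hφle u')
  have hφd : φ (q - p) = 0 := by
    have : φ (q - p) = - φ (p - q) := by rw [← map_neg]; congr 1; abel
    rw [this, hφpq, neg_zero]
  -- linear independence and coordinates
  have hindep : LinearIndependent ℝ ![u, u'] := by
    rw [LinearIndependent.pair_iff]
    intro a b hab
    have h1 : a + b = 0 := by
      have := congrArg φ hab
      simpa [hφu, hφu'] using this
    have h2 : a • (u - u') = 0 := by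
      have hb : b = -a := by linarith
      rw [hb] at hab
      rw [smul_sub, ← hab]; module
    have h3 : a = 0 := by
      rcases smul_eq_zero.mp h2 with h | h
      · exact h
      · exact absurd (sub_eq_zero.mp h) huu'
    exact ⟨h3, by linarith⟩
  have hcard : Fintype.card (Fin 2) = finrank ℝ X := by rw [hdim]; rfl
  have hcoord : ∀ x : X, ∃ a b : ℝ, x = a • u + b • u' := by
    intro x
    let bas := basisOfLinearIndependentOfCardEqFinrank hindep hcard
    have hb : ⇑bas = ![u, u'] := coe_basisOfLinearIndependentOfCardEqFinrank hindep hcard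
    refine ⟨bas.repr x 0, bas.repr x 1, ?_⟩
    have hx := bas.sum_repr x
    rw [Fin.sum_univ_two] at hx
    have h0 : bas 0 = u := by rw [hb]; rfl
    have h1 : bas 1 = u' := by rw [hb]; rfl
    rw [h0, h1] at hx
    exact hx.symm
  have huniq : ∀ a b a' b' : ℝ, a • u + b • u' = a' • u + b' • u' → a = a' ∧ b = b' := by
    intro a b a' b' h
    have h0 : (a - a') • u + (b - b') • u' = 0 := by
      rw [sub_smul, sub_smul]
      rw [show a • u - a' • u + (b • u' - b' • u') = (a • u + b • u') - (a' • u + b' • u') by abel,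
        h, sub_self]
    obtain ⟨h1, h2⟩ := LinearIndependent.pair_iff.mp hindep _ _ h0
    exact ⟨by linarith, by linarith⟩
  have hκne : κ ≠ 0 := ne_of_gt hκ
  have hκipos : 0 < κ⁻¹ := inv_pos.mpr hκ
  have hqp : q - p = (-(κ⁻¹)) • u + κ⁻¹ • u' := by
    calc q - p = κ⁻¹ • (κ • (q - p)) := by rw [smul_smul, inv_mul_cancel₀ hκne, one_smul]
    _ = κ⁻¹ • (u' - u) := by rw [← hκeq]
    _ = (-(κ⁻¹)) • u + κ⁻¹ • u' := by module
  have hker : ∀ x : X, φ x = 0 → ∃ s : ℝ, x = s • (q - p) := by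
    intro x hx
    obtain ⟨a, b, hab⟩ := hcoord x
    have hab0 : a + b = 0 := by
      have h := congrArg φ hab
      rw [hx] at h
      simpa [hφu, hφu'] using h.symm
    refine ⟨-(a * κ), ?_⟩
    have : x = (-a) • (u' - u) := by
      rw [hab, show b = -a by linarith]; module
    rw [this, hκeq, smul_smul, neg_mul]
  have hψuniq : ∀ ψ : X →L[ℝ] ℝ, ‖ψ‖ = 1 → ψ (q - p) = 0 → ψ = φ ∨ ψ = -φ := by
    intro ψ hψn hψd
    have huu : ψ u' = ψ u := by
      have h1 : ψ (u' - u) = 0 := by rw [hκeq, map_smul, hψd, smul_eq_mul, mul_zero]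
      rw [map_sub] at h1; linarith
    have hc : ψ = (ψ u) • φ := by
      ext x
      obtain ⟨a, b, hab⟩ := hcoord x
      rw [hab]
      simp only [map_add, map_smul, smul_eq_mul, hφu, hφu', huu,
        ContinuousLinearMap.smul_apply]
      ring
    have hna : |ψ u| = 1 := by
      have : ‖ψ‖ = |ψ u| * ‖φ‖ := by
        conv_lhs => rw [hc]
        rw [norm_smul (ψ u) φ, Real.norm_eq_abs]
      rw [hψn, hφ, mul_one] at this
      linarith
    rcases abs_eq (by norm_num : (0:ℝ) ≤ 1) |>.mp hna with h | h
    · left; rw [hc, h, one_smul]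
    · right; rw [hc, h]; ext x; simp
  -- the values of s_t and s_b
  have hstv : s_t = p + κ⁻¹ • u' ∧ s_t = q + κ⁻¹ • u := by
    obtain ⟨t1, ht1, e1⟩ := hst1
    obtain ⟨t2, ht2, e2⟩ := hst2
    have e3 : p + t1 • u' = q + t2 • u := by rw [← e1, e2]
    have e4 : (-t2) • u + t1 • u' = (-(κ⁻¹)) • u + κ⁻¹ • u' := by
      rw [← hqp]
      have : q - p = t1 • u' - t2 • u := by
        rw [show q = p + t1 • u' - t2 • u by rw [e3]; abel]; abel
      rw [this]; module
    obtain ⟨g1, g2⟩ := huniq _ _ _ _ e4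
    have ht2' : t2 = κ⁻¹ := by linarith
    exact ⟨by rw [e1, g2], by rw [e2, ht2']⟩
  have hsbv : s_b = p - κ⁻¹ • u ∧ s_b = q - κ⁻¹ • u' := by
    obtain ⟨t3, ht3, e1⟩ := hsb1
    obtain ⟨t4, ht4, e2⟩ := hsb2
    have e3 : p - t3 • u = q - t4 • u' := by rw [← e1, e2]
    have e4 : (-t3) • u + t4 • u' = (-(κ⁻¹)) • u + κ⁻¹ • u' := by
      rw [← hqp]
      have : q - p = t4 • u' - t3 • u := by
        rw [show q = p - t3 • u + t4 • u' by rw [e3]; abel]; abel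
      rw [this]; module
    obtain ⟨g1, g2⟩ := huniq _ _ _ _ e4
    have ht3' : t3 = κ⁻¹ := by linarith
    exact ⟨by rw [e1, ht3'], by rw [e2, g2]⟩
  have hφst : φ s_t = φ p + κ⁻¹ := by
    rw [hstv.1, map_add, map_smul, hφu', smul_eq_mul, mul_one]
  have hφsb : φ s_b = φ p - κ⁻¹ := by
    rw [hsbv.1, map_sub, map_smul, hφu, smul_eq_mul, mul_one]
  -- cone over the face
  have hKnorm : ∀ lam mu : ℝ, 0 ≤ lam → 0 ≤ mu → ‖lam • u + mu • u'‖ = lam + mu := by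
    intro lam mu hlam hmu
    refine le_antisymm ?_ ?_
    · calc ‖lam • u + mu • u'‖ ≤ ‖lam • u‖ + ‖mu • u'‖ := norm_add_le _ _
      _ = lam + mu := by
          rw [norm_smul, norm_smul, Real.norm_eq_abs, Real.norm_eq_abs,
            abs_of_nonneg hlam, abs_of_nonneg hmu, hnu, hnu', mul_one, mul_one]
    · calc lam + mu = φ (lam • u + mu • u') := by
            simp [map_add, hφu, hφu']
      _ ≤ ‖lam • u + mu • u'‖ := hφle _
  have hKmem : ∀ a : X, φ a = ‖a‖ → ∃ lam mu : ℝ, 0 ≤ lam ∧ 0 ≤ mu ∧ a = lam • u + mu • u' := by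
    intro a hA
    rcases eq_or_ne a 0 with h0 | h0
    · exact ⟨0, 0, le_refl _, le_refl _, by simp [h0]⟩
    · have hr : 0 < ‖a‖ := norm_pos_iff.mpr h0
      have hmem : ‖a‖⁻¹ • a ∈ {x : X | ‖x‖ ≤ 1 ∧ φ x = 1} := by
        constructor
        · rw [norm_smul, Real.norm_eq_abs, abs_of_pos (inv_pos.mpr hr),
            inv_mul_cancel₀ (ne_of_gt hr)]
        · rw [map_smul, smul_eq_mul, hA, inv_mul_cancel₀ (ne_of_gt hr)]
      rw [hface] at hmem
      obtain ⟨α, β, hα, hβ, hαβ, hcomb⟩ := hmem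
      refine ⟨‖a‖ * α, ‖a‖ * β, mul_nonneg (le_of_lt hr) hα, mul_nonneg (le_of_lt hr) hβ, ?_⟩
      have ha2 : a = ‖a‖ • (‖a‖⁻¹ • a) := by
        rw [smul_smul, mul_inv_cancel₀ (ne_of_gt hr), one_smul]
      calc a = ‖a‖ • (‖a‖⁻¹ • a) := ha2
      _ = ‖a‖ • (α • u + β • u') := by rw [hcomb]
      _ = (‖a‖ * α) • u + (‖a‖ * β) • u' := by rw [smul_add, smul_smul, smul_smul]
  -- cones are inside the bisector
  have hconeP : ∀ z : X, z ∈ cone p φ ∩ cone q φ → ‖z - p‖ = ‖z - q‖ := by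
    intro z hz
    obtain ⟨h1, h2⟩ := hz
    have h1' : φ (z - p) = ‖z - p‖ := h1
    have h2' : φ (z - q) = ‖z - q‖ := h2
    rw [← h1', ← h2']
    have : φ (z - p) - φ (z - q) = φ (q - p) := by
      rw [← map_sub]; congr 1; abel
    rw [hφd] at this
    linarith
  have hconeM : ∀ z : X, z ∈ cone p (-φ) ∩ cone q (-φ) → ‖z - p‖ = ‖z - q‖ := by
    intro z hz
    obtain ⟨h1, h2⟩ := hz
    have h1' : -φ (z - p) = ‖z - p‖ := h1
    have h2' : -φ (z - q) = ‖z - q‖ := h2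
    rw [← h1', ← h2']
    have : φ (z - p) - φ (z - q) = φ (q - p) := by
      rw [← map_sub]; congr 1; abel
    rw [hφd] at this
    linarith
  -- upper cone: level bound and rigidity
  have hCpUB : ∀ z : X, z ∈ cone p φ ∩ cone q φ →
      φ p + κ⁻¹ ≤ φ z ∧ (φ z = φ p + κ⁻¹ → z = s_t) := by
    intro z hz
    obtain ⟨h1, h2⟩ := hz
    obtain ⟨l1, m1, hl1, hm1, he1⟩ := hKmem (z - p) h1
    obtain ⟨l2, m2, hl2, hm2, he2⟩ := hKmem (z - q) h2
    have he3 : l2 • u + m2 • u' = (l1 + κ⁻¹) • u + (m1 - κ⁻¹) • u' := by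
      rw [← he2, show z - q = (z - p) - (q - p) by abel, he1, hqp]
      module
    obtain ⟨g1, g2⟩ := huniq _ _ _ _ he3
    have hm1' : κ⁻¹ ≤ m1 := by linarith
    have hφz : φ z = φ p + (l1 + m1) := by
      have := congrArg φ he1
      rw [map_sub] at this
      simp only [map_add, map_smul, smul_eq_mul, hφu, hφu', mul_one] at this
      linarith
    constructor
    · rw [hφz]; linarith
    · intro heq
      have hl10 : l1 = 0 := by rw [hφz] at heq; linarith
      have hm1e : m1 = κ⁻¹ := by rw [hφz] at heq; linarith
      have : z - p = κ⁻¹ • u' := by rw [he1, hl10, hm1e, zero_smul, zero_add]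
      rw [hstv.1, ← this]; abel
  have hCmLB : ∀ z : X, z ∈ cone p (-φ) ∩ cone q (-φ) →
      φ z ≤ φ p - κ⁻¹ ∧ (φ z = φ p - κ⁻¹ → z = s_b) := by
    intro z hz
    obtain ⟨h1, h2⟩ := hz
    have h1' : φ (p - z) = ‖p - z‖ := by
      have h1'' : -φ (z - p) = ‖z - p‖ := h1
      rw [show p - z = -(z - p) by abel, map_neg, norm_neg, h1'']
    have h2' : φ (q - z) = ‖q - z‖ := by
      have h2'' : -φ (z - q) = ‖z - q‖ := h2
      rw [show q - z = -(z - q) by abel, map_neg, norm_neg, h2'']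
    obtain ⟨l1, m1, hl1, hm1, he1⟩ := hKmem (p - z) h1'
    obtain ⟨l2, m2, hl2, hm2, he2⟩ := hKmem (q - z) h2'
    have he3 : l2 • u + m2 • u' = (l1 - κ⁻¹) • u + (m1 + κ⁻¹) • u' := by
      rw [← he2, show q - z = (p - z) + (q - p) by abel, he1, hqp]
      module
    obtain ⟨g1, g2⟩ := huniq _ _ _ _ he3
    have hl1' : κ⁻¹ ≤ l1 := by linarith
    have hφz : φ z = φ p - (l1 + m1) := by
      have := congrArg φ he1
      rw [map_sub] at this
      simp only [map_add, map_smul, smul_eq_mul, hφu, hφu', mul_one] at this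
      linarith
    constructor
    · rw [hφz]; linarith
    · intro heq
      have hm10 : m1 = 0 := by rw [hφz] at heq; linarith
      have hl1e : l1 = κ⁻¹ := by rw [hφz] at heq; linarith
      have : p - z = κ⁻¹ • u := by rw [he1, hm10, hl1e, zero_smul, add_zero]
      rw [hsbv.1, ← this]; abel
  -- s_t and s_b are in the respective cones
  have hstC : s_t ∈ cone p φ ∩ cone q φ := by
    constructor
    · show φ (s_t - p) = ‖s_t - p‖
      have e : s_t - p = κ⁻¹ • u' := by rw [hstv.1]; abel
      rw [e]; simp [map_smul, hφu', norm_smul, abs_of_pos hκipos, abs_of_pos hκ, hnu']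
    · show φ (s_t - q) = ‖s_t - q‖
      have e : s_t - q = κ⁻¹ • u := by rw [hstv.2]; abel
      rw [e]; simp [map_smul, hφu, norm_smul, abs_of_pos hκipos, abs_of_pos hκ, hnu]
  have hsbC : s_b ∈ cone p (-φ) ∩ cone q (-φ) := by
    constructor
    · show -φ (s_b - p) = ‖s_b - p‖
      have e : s_b - p = -(κ⁻¹ • u) := by rw [hsbv.1]; abel
      rw [e]; simp [map_neg, map_smul, hφu, norm_neg, norm_smul, abs_of_pos hκipos, abs_of_pos hκ, hnu]
    · show -φ (s_b - q) = ‖s_b - q‖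
      have e : s_b - q = -(κ⁻¹ • u') := by rw [hsbv.2]; abel
      rw [e]; simp [map_neg, map_smul, hφu', norm_neg, norm_smul, abs_of_pos hκipos, abs_of_pos hκ, hnu']
  -- existence of bisector points at every level
  have hdne : q - p ≠ 0 := sub_ne_zero.mpr (Ne.symm hpq)
  have hdpos : 0 < ‖q - p‖ := norm_pos_iff.mpr hdne
  have hGex : ∀ c : ℝ, ∃ z : X, ‖z - p‖ = ‖z - q‖ ∧ φ z = c := by
    intro c
    set a : X := (c - φ p) • u with ha
    set g : ℝ → ℝ := fun T => ‖a + T • (q - p)‖ - ‖a + (T - 1) • (q - p)‖ with hg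
    have hcont : Continuous g := by
      apply Continuous.sub
      · exact (continuous_const.add (continuous_id.smul continuous_const)).norm
      · exact (continuous_const.add ((continuous_id.sub continuous_const).smul
          continuous_const)).norm
    set Tp : ℝ := 2 * ‖a‖ / ‖q - p‖ + 1 with hTp
    set Tm : ℝ := -(2 * ‖a‖ / ‖q - p‖ + 1) with hTm
    have hTpval : Tp * ‖q - p‖ = 2 * ‖a‖ + ‖q - p‖ := by
      rw [hTp, add_mul, one_mul, div_mul_cancel₀ _ (ne_of_gt hdpos)]
    have hTp1 : (1:ℝ) ≤ Tp := by
      have h0 : (0:ℝ) ≤ 2 * ‖a‖ / ‖q - p‖ := by positivity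
      rw [hTp]; linarith
    have hgp : 0 < g Tp := by
      have := aux_pos a (q - p) Tp hTp1 (by rw [hTpval]; linarith)
      simp only [hg]; linarith
    have hTm0 : Tm ≤ 0 := by
      have h0 : (0:ℝ) ≤ 2 * ‖a‖ / ‖q - p‖ := by positivity
      rw [hTm]; linarith
    have hTmval : (1 - Tm) * ‖q - p‖ = 2 * ‖a‖ + 2 * ‖q - p‖ := by
      have e0 : (1 - Tm) = 2 * ‖a‖ / ‖q - p‖ + 2 := by rw [hTm]; ring
      rw [e0, add_mul, div_mul_cancel₀ _ (ne_of_gt hdpos)]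
    have hgm : g Tm < 0 := by
      have := aux_neg a (q - p) Tm hTm0 (by rw [hTmval]; linarith)
      simp only [hg]; linarith
    have hle : Tm ≤ Tp := by
      have h1 : 0 ≤ 2 * ‖a‖ / ‖q - p‖ := by positivity
      rw [hTp, hTm]; linarith
    have := intermediate_value_Icc hle hcont.continuousOn
    obtain ⟨T, hTmem, hT0⟩ := this ⟨le_of_lt hgm, le_of_lt hgp⟩
    refine ⟨p + (c - φ p) • u + T • (q - p), ?_, ?_⟩
    · have e1 : p + (c - φ p) • u + T • (q - p) - p = a + T • (q - p) := by
        rw [ha]; abel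
      have e2 : p + (c - φ p) • u + T • (q - p) - q = a + (T - 1) • (q - p) := by
        rw [ha]; module
      rw [e1, e2]
      have h' : ‖a + T • (q - p)‖ - ‖a + (T - 1) • (q - p)‖ = 0 := hT0
      linarith
    · simp only [map_add, map_smul, smul_eq_mul, hφu, hφd, mul_one, mul_zero, add_zero]
      ring
  -- boundedness of the bisector inside the slab
  set R : ℝ := ‖p‖ + κ⁻¹ + (2 * κ⁻¹ / ‖q - p‖ + 1) * ‖q - p‖ with hR
  have hbound : ∀ z : X, ‖z - p‖ = ‖z - q‖ → |φ z - φ p| ≤ κ⁻¹ → ‖z‖ ≤ R := by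
    intro z hz hφz
    set a : X := (φ z - φ p) • u with ha
    have hanorm : ‖a‖ ≤ κ⁻¹ := by
      rw [ha, norm_smul, Real.norm_eq_abs, hnu, mul_one]
      exact hφz
    obtain ⟨T, hT⟩ := hker (z - p - a) (by
      rw [map_sub, map_sub, ha, map_smul, smul_eq_mul, hφu, mul_one]; ring)
    have hzp : z - p = a + T • (q - p) := by rw [← hT]; abel
    have hzq : z - q = a + (T - 1) • (q - p) := by
      rw [show z - q = (z - p) - (q - p) by abel, hzp]; module
    have heq : ‖a + T • (q - p)‖ = ‖a + (T - 1) • (q - p)‖ := by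
      rw [← hzp, ← hzq]; exact hz
    have hTub : T ≤ 2 * κ⁻¹ / ‖q - p‖ + 1 := by
      by_contra hlt
      push_neg at hlt
      have h1 : (1:ℝ) ≤ T := by
        have : (0:ℝ) ≤ 2 * κ⁻¹ / ‖q - p‖ := by positivity
        linarith
      have h2 : 2 * ‖a‖ < T * ‖q - p‖ := by
        have e : (2 * κ⁻¹ / ‖q - p‖ + 1) * ‖q - p‖ = 2 * κ⁻¹ + ‖q - p‖ := by
          rw [add_mul, one_mul, div_mul_cancel₀ _ (ne_of_gt hdpos)]
        have : (2 * κ⁻¹ / ‖q - p‖ + 1) * ‖q - p‖ < T * ‖q - p‖ :=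
          mul_lt_mul_of_pos_right hlt hdpos
        rw [e] at this
        linarith
      exact absurd heq (ne_of_lt (aux_pos a (q - p) T h1 h2)).symm
    have hTlb : -(2 * κ⁻¹ / ‖q - p‖ + 1) ≤ T := by
      by_contra hlt
      push_neg at hlt
      have h1 : T ≤ 0 := by
        have : (0:ℝ) ≤ 2 * κ⁻¹ / ‖q - p‖ := by positivity
        linarith
      have h2 : 2 * ‖a‖ < (1 - T) * ‖q - p‖ := by
        have e : (2 * κ⁻¹ / ‖q - p‖ + 1) * ‖q - p‖ = 2 * κ⁻¹ + ‖q - p‖ := by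
          rw [add_mul, one_mul, div_mul_cancel₀ _ (ne_of_gt hdpos)]
        have h3 : 2 * κ⁻¹ / ‖q - p‖ + 1 < 1 - T := by linarith
        have : (2 * κ⁻¹ / ‖q - p‖ + 1) * ‖q - p‖ < (1 - T) * ‖q - p‖ :=
          mul_lt_mul_of_pos_right h3 hdpos
        rw [e] at this
        linarith
      exact absurd heq (ne_of_lt (aux_neg a (q - p) T h1 h2))
    have hTabs : |T| ≤ 2 * κ⁻¹ / ‖q - p‖ + 1 := abs_le.mpr ⟨hTlb, hTub⟩
    calc ‖z‖ = ‖p + (a + T • (q - p))‖ := by rw [← hzp]; congr 1; abel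
    _ ≤ ‖p‖ + ‖a + T • (q - p)‖ := norm_add_le _ _
    _ ≤ ‖p‖ + (‖a‖ + ‖T • (q - p)‖) := by linarith [norm_add_le a (T • (q - p))]
    _ = ‖p‖ + ‖a‖ + |T| * ‖q - p‖ := by rw [norm_smul T (q - p), Real.norm_eq_abs]; ring
    _ ≤ R := by
        rw [hR]
        have : |T| * ‖q - p‖ ≤ (2 * κ⁻¹ / ‖q - p‖ + 1) * ‖q - p‖ :=
          mul_le_mul_of_nonneg_right hTabs (le_of_lt hdpos)
        linarith
  -- uniqueness of bisector points inside the slab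
  have huniqpt : ∀ z z' : X, ‖z - p‖ = ‖z - q‖ → ‖z' - p‖ = ‖z' - q‖ → φ z = φ z' →
      φ p - κ⁻¹ ≤ φ z → φ z ≤ φ p + κ⁻¹ → z = z' := by
    intro z z' h h' hl h1 h2
    by_contra hne
    rcases two_points p q hpq φ hker hψuniq z z' h h' hne hl with ⟨ha1, ha2⟩ | ⟨ha1, ha2⟩
    · have e1 := hCpUB z ha1
      have e2 := hCpUB z' ha2
      have hz1 : z = s_t := e1.2 (le_antisymm h2 e1.1)
      have hz2 : z' = s_t := e2.2 (le_antisymm (by rw [← hl]; exact h2) e2.1)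
      exact hne (hz1.trans hz2.symm)
    · have e1 := hCmLB z ha1
      have e2 := hCmLB z' ha2
      have hz1 : z = s_b := e1.2 (le_antisymm e1.1 h1)
      have hz2 : z' = s_b := e2.2 (le_antisymm e2.1 (by rw [← hl]; exact h1))
      exact hne (hz1.trans hz2.symm)
  -- the middle piece
  set Bone : Set X := {z : X | ‖z - p‖ = ‖z - q‖ ∧ φ z ∈ Set.Icc (φ p - κ⁻¹) (φ p + κ⁻¹)}
    with hBone
  -- decomposition
  have hdecomp : bisec p q = Bone ∪ (cone p φ ∩ cone q φ) ∪ (cone p (-φ) ∩ cone q (-φ)) := by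
    apply Set.eq_of_subset_of_subset
    · intro z hz
      have hzb : ‖z - p‖ = ‖z - q‖ := hz
      rcases le_or_gt (φ z) (φ p + κ⁻¹) with h1 | h1
      · rcases le_or_gt (φ p - κ⁻¹) (φ z) with h2 | h2
        · exact Or.inl (Or.inl ⟨hzb, Set.mem_Icc.mpr ⟨h2, h1⟩⟩)
        · right
          obtain ⟨hh, hhh⟩ : ∃ hh : ℝ, hh = (φ p - κ⁻¹) - φ z := ⟨_, rfl⟩
          have hhpos : 0 < hh := by rw [hhh]; linarith
          obtain ⟨w, hw⟩ : ∃ w : X, w = s_b - hh • u := ⟨_, rfl⟩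
          have hwP : w ∈ cone p (-φ) ∩ cone q (-φ) := by
            constructor
            · show -φ (w - p) = ‖w - p‖
              have e : w - p = -((κ⁻¹ + hh) • u) := by rw [hw, hsbv.1, add_smul]; abel
              rw [e]
              have h3 : 0 ≤ κ⁻¹ + hh := by positivity
              simp [map_neg, map_smul, hφu, norm_neg, norm_smul, abs_of_nonneg h3, hnu]
            · show -φ (w - q) = ‖w - q‖
              have e : w - q = -(hh • u + κ⁻¹ • u') := by rw [hw, hsbv.2]; abel
              rw [e, map_neg, neg_neg, norm_neg,
                hKnorm hh κ⁻¹ (le_of_lt hhpos) (le_of_lt hκipos)]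
              simp [map_add, map_smul, hφu, hφu']
              try ring
          have hwlev : φ w = φ z := by
            rw [hw, map_sub, map_smul, smul_eq_mul, hφu, hφsb, hhh]; ring
          rcases eq_or_ne z w with hzw | hzw
          · rw [hzw]; exact hwP
          · rcases two_points p q hpq φ hker hψuniq z w hzb (hconeM w hwP) hzw hwlev.symm with
              ⟨hc1, _⟩ | ⟨hc1, _⟩
            · exfalso
              have := (hCpUB z hc1).1
              linarith
            · exact hc1
      · left; right
        obtain ⟨hh, hhh⟩ : ∃ hh : ℝ, hh = φ z - (φ p + κ⁻¹) := ⟨_, rfl⟩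
        have hhpos : 0 < hh := by rw [hhh]; linarith
        obtain ⟨w, hw⟩ : ∃ w : X, w = s_t + hh • u' := ⟨_, rfl⟩
        have hwP : w ∈ cone p φ ∩ cone q φ := by
          constructor
          · show φ (w - p) = ‖w - p‖
            have e : w - p = (κ⁻¹ + hh) • u' := by rw [hw, hstv.1, add_smul]; abel
            rw [e]
            have h3 : 0 ≤ κ⁻¹ + hh := by positivity
            simp [map_smul, hφu', norm_smul, abs_of_nonneg h3, hnu']
          · show φ (w - q) = ‖w - q‖
            have e : w - q = κ⁻¹ • u + hh • u' := by rw [hw, hstv.2]; abel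
            rw [e, hKnorm κ⁻¹ hh (le_of_lt hκipos) (le_of_lt hhpos)]
            simp [map_add, map_smul, hφu, hφu']
        have hwlev : φ w = φ z := by
          rw [hw, map_add, map_smul, smul_eq_mul, hφu', hφst, hhh]; ring
        rcases eq_or_ne z w with hzw | hzw
        · rw [hzw]; exact hwP
        · rcases two_points p q hpq φ hker hψuniq z w hzb (hconeP w hwP) hzw hwlev.symm with
            ⟨hc1, _⟩ | ⟨hc1, _⟩
          · exact hc1
          · exfalso
            have := (hCmLB z hc1).1
            linarith
    · intro z hz
      rcases hz with (hz | hz) | hz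
      · exact hz.1
      · exact hconeP z hz
      · exact hconeM z hz
  -- homeomorphism construction
  haveI hfd : FiniteDimensional ℝ X :=
    FiniteDimensional.of_finrank_eq_succ (n := 1) (by rw [hdim])
  have hicc : ∀ t : ℝ, t ∈ Set.Icc (0:ℝ) 1 →
      φ p - κ⁻¹ ≤ (φ p - κ⁻¹) + t * (2 * κ⁻¹) ∧
        (φ p - κ⁻¹) + t * (2 * κ⁻¹) ≤ φ p + κ⁻¹ := by
    intro t ht
    obtain ⟨h0, h1⟩ := ht
    constructor
    · nlinarith
    · nlinarith
  have hexz : ∀ t : ℝ, ∃ z : X, ‖z - p‖ = ‖z - q‖ ∧ φ z = (φ p - κ⁻¹) + t * (2 * κ⁻¹) :=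
    fun t => hGex _
  obtain ⟨Z, hZspec⟩ : ∃ Z : ℝ → X, ∀ t : ℝ,
      ‖Z t - p‖ = ‖Z t - q‖ ∧ φ (Z t) = (φ p - κ⁻¹) + t * (2 * κ⁻¹) :=
    ⟨fun t => (hexz t).choose, fun t => (hexz t).choose_spec⟩
  have hZuniq : ∀ t : ℝ, t ∈ Set.Icc (0:ℝ) 1 → ∀ z : X, ‖z - p‖ = ‖z - q‖ →
      φ z = (φ p - κ⁻¹) + t * (2 * κ⁻¹) → z = Z t := by
    intro t ht z hzb hzl
    refine huniqpt z (Z t) hzb (hZspec t).1 (by rw [hzl, (hZspec t).2]) ?_ ?_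
    · rw [hzl]; exact (hicc t ht).1
    · rw [hzl]; exact (hicc t ht).2
  obtain ⟨Γ, hΓ⟩ : ∃ Γ : Set (ℝ × X), Γ = {w : ℝ × X | w.1 ∈ Set.Icc (0:ℝ) 1 ∧
      ‖w.2 - p‖ = ‖w.2 - q‖ ∧ φ w.2 = (φ p - κ⁻¹) + w.1 * (2 * κ⁻¹)} := ⟨_, rfl⟩
  have hΓc : IsCompact Γ := by
    apply IsCompact.of_isClosed_subset (isCompact_Icc.prod (isCompact_closedBall (0:X) R))
    · rw [hΓ]
      have c1 : IsClosed {w : ℝ × X | w.1 ∈ Set.Icc (0:ℝ) 1} :=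
        isClosed_Icc.preimage continuous_fst
      have c2 : IsClosed {w : ℝ × X | ‖w.2 - p‖ = ‖w.2 - q‖} :=
        isClosed_eq ((continuous_snd.sub continuous_const).norm)
          ((continuous_snd.sub continuous_const).norm)
      have c3 : IsClosed {w : ℝ × X | φ w.2 = (φ p - κ⁻¹) + w.1 * (2 * κ⁻¹)} :=
        isClosed_eq (φ.continuous.comp continuous_snd)
          (continuous_const.add (continuous_fst.mul continuous_const))
      exact c1.inter (c2.inter c3)
    · rw [hΓ]
      rintro ⟨t, z⟩ ⟨h1, h2, h3⟩
      refine Set.mem_prod.mpr ⟨h1, ?_⟩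
      rw [Metric.mem_closedBall, dist_zero_right]
      apply hbound z h2
      rw [h3, abs_le]
      obtain ⟨g0, g1⟩ := h1
      constructor
      · nlinarith
      · nlinarith
  haveI : CompactSpace Γ := isCompact_iff_compactSpace.mp hΓc
  have hmemΓ : ∀ t : ℝ, t ∈ Set.Icc (0:ℝ) 1 → (t, Z t) ∈ Γ := by
    intro t ht
    rw [hΓ]
    exact ⟨ht, (hZspec t).1, (hZspec t).2⟩
  have hmemB : ∀ w : ℝ × X, w ∈ Γ → w.2 ∈ Bone := by
    intro w hwm
    rw [hΓ] at hwm
    rw [hBone]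
    exact ⟨hwm.2.1, Set.mem_Icc.mpr ⟨le_of_le_of_eq (hicc _ hwm.1).1 hwm.2.2.symm,
      (le_of_eq hwm.2.2).trans (hicc _ hwm.1).2⟩⟩
  have hΓ1 : ∀ w : ℝ × X, w ∈ Γ → w.1 ∈ Set.Icc (0:ℝ) 1 ∧ ‖w.2 - p‖ = ‖w.2 - q‖ ∧
      φ w.2 = (φ p - κ⁻¹) + w.1 * (2 * κ⁻¹) := by
    intro w hw; rwa [hΓ] at hw
  have hB1 : ∀ z : X, z ∈ Bone → ‖z - p‖ = ‖z - q‖ ∧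
      φ z ∈ Set.Icc (φ p - κ⁻¹) (φ p + κ⁻¹) := by
    intro z hz; rwa [hBone] at hz
  let E1 : Γ ≃ Set.Icc (0:ℝ) 1 :=
    { toFun := fun w => ⟨w.1.1, (hΓ1 w.1 w.2).1⟩
      invFun := fun t => ⟨(t.1, Z t.1), hmemΓ t.1 t.2⟩
      left_inv := by
        rintro ⟨⟨t, z⟩, hw⟩
        have hw' := hΓ1 _ hw
        exact Subtype.ext (Prod.ext rfl (hZuniq t hw'.1 z hw'.2.1 hw'.2.2).symm)
      right_inv := fun t => Subtype.ext rfl }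
  have hE1c : Continuous (E1 : Γ → Set.Icc (0:ℝ) 1) :=
    Continuous.subtype_mk (continuous_fst.comp continuous_subtype_val) _
  have h2κ : (2:ℝ) * κ⁻¹ ≠ 0 := by positivity
  let E2 : Γ ≃ Bone :=
    { toFun := fun w => ⟨w.1.2, hmemB w.1 w.2⟩
      invFun := fun z => ⟨((φ z.1 - (φ p - κ⁻¹)) / (2 * κ⁻¹), z.1), by
        rw [hΓ]
        have hz2 := (hB1 z.1 z.2).2
        rw [Set.mem_Icc] at hz2
        refine ⟨⟨?_, ?_⟩, (hB1 z.1 z.2).1, ?_⟩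
        · exact div_nonneg (by linarith [hz2.1]) (by positivity)
        · rw [div_le_one (by positivity)]; linarith [hz2.2]
        · rw [div_mul_cancel₀ _ h2κ]; ring⟩
      left_inv := by
        rintro ⟨⟨t, z⟩, hw⟩
        have hw' := hΓ1 _ hw
        refine Subtype.ext (Prod.ext ?_ rfl)
        show (φ z - (φ p - κ⁻¹)) / (2 * κ⁻¹) = t
        rw [hw'.2.2]
        field_simp
        ring
      right_inv := fun z => Subtype.ext rfl }
  have hE2c : Continuous (E2 : Γ → Bone) :=
    Continuous.subtype_mk (continuous_snd.comp continuous_subtype_val) _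
  let H1 := Continuous.homeoOfEquivCompactToT2 (f := E1) hE1c
  let H2 := Continuous.homeoOfEquivCompactToT2 (f := E2) hE2c
  refine ⟨Bone, ⟨H1.symm.trans H2, ?_, ?_⟩, hdecomp⟩
  · have h0 : (((H1.symm.trans H2) ⟨0, by norm_num⟩ : Bone) : X) = Z 0 := rfl
    rw [h0]
    refine (hZuniq 0 (by norm_num) s_b (hconeM s_b hsbC) ?_).symm
    rw [hφsb]; ring
  · have h1 : (((H1.symm.trans H2) ⟨1, by norm_num⟩ : Bone) : X) = Z 1 := rfl
    rw [h1]
    refine (hZuniq 1 (by norm_num) s_t (hconeP s_t hstC) ?_).symm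
    rw [hφst]; ring
end

section
/- Let (p,q) be a non-strict pair in X. Then the bisector bisec(p,q) has nonempty interior in ℝ². -/
variable {X : Type*} [NormedAddCommGroup X] [NormedSpace ℝ X]

theorem bisector_nonstrict_has_interior_points
    (hdim : Module.finrank ℝ X = 2) (p q : X) (hpq : p ≠ q)
    (hns : ¬ strictPair p q) :
    (interior (bisec p q)).Nonempty := by
  have hfd : FiniteDimensional ℝ X := FiniteDimensional.of_finrank_eq_succ hdim
  rw [strictPair, not_not] at hns
  obtain ⟨a, b, hab, hseg, t, ht⟩ := hns
  have htne : t ≠ 0 := by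
    rintro rfl
    simp only [zero_smul] at ht
    exact hab (sub_eq_zero.mp ht).symm
  have ha1 : ‖a‖ = 1 := hseg (left_mem_segment ℝ a b)
  have hb1 : ‖b‖ = 1 := hseg (right_mem_segment ℝ a b)
  have hm : ‖midpoint ℝ a b‖ = 1 := hseg (midpoint_mem_segment a b)
  have hm0 : midpoint ℝ a b ≠ 0 := by
    intro h; rw [h, norm_zero] at hm; norm_num at hm
  obtain ⟨φ, hφ1, hφm⟩ := exists_dual_vector ℝ (midpoint ℝ a b) (norm_ne_zero_iff.mpr hm0)
  have hle : ∀ x : X, φ x ≤ ‖x‖ := by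
    intro x
    calc φ x ≤ |φ x| := le_abs_self _
    _ = ‖φ x‖ := (Real.norm_eq_abs _).symm
    _ ≤ ‖φ‖ * ‖x‖ := φ.le_opNorm x
    _ = ‖x‖ := by rw [hφ1, one_mul]
  have hsum : φ a + φ b = 2 := by
    have : φ (midpoint ℝ a b) = 1 := by rw [hφm, hm]; norm_num
    have h2 : midpoint ℝ a b = (2:ℝ)⁻¹ • (a + b) := by
      rw [midpoint_eq_smul_add]; norm_num
    rw [h2] at this
    simp only [map_smul, map_add, smul_eq_mul] at this
    linarith
  have hφa : φ a = 1 := by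
    have h1 := hle a; have h2 := hle b; rw [ha1] at h1; rw [hb1] at h2; linarith
  have hφb : φ b = 1 := by linarith [hle a, hle b, ha1 ▸ hle a]
  have hφpq : φ (p - q) = 0 := by
    have h0 : φ (b - a) = 0 := by rw [map_sub, hφa, hφb, sub_self]
    rw [ht, map_smul, smul_eq_mul] at h0
    exact (mul_eq_zero.mp h0).resolve_left htne
  -- linear independence of a and b
  have hli : LinearIndependent ℝ ![a, b] := by
    rw [LinearIndependent.pair_iff]
    intro s u hsu
    have hphi : s + u = 0 := by
      have := congrArg φ hsu
      simpa [map_add, map_smul, hφa, hφb] using this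
    have hu : u = -s := by linarith
    have : s • (a - b) = 0 := by
      rw [smul_sub]
      rw [hu] at hsu
      simpa [neg_smul, sub_eq_add_neg] using hsu
    rcases smul_eq_zero.mp this with h | h
    · exact ⟨h, by rw [hu, h, neg_zero]⟩
    · exact absurd (sub_eq_zero.mp h) hab
  have hcard : Fintype.card (Fin 2) = Module.finrank ℝ X := by simp [hdim]
  let B := basisOfLinearIndependentOfCardEqFinrank hli hcard
  have hB0 : B 0 = a := by
    have := coe_basisOfLinearIndependentOfCardEqFinrank hli hcard
    rw [show B 0 = (⇑B) 0 from rfl, this]; rfl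
  have hB1 : B 1 = b := by
    have := coe_basisOfLinearIndependentOfCardEqFinrank hli hcard
    rw [show B 1 = (⇑B) 1 from rfl, this]; rfl
  -- coordinate functionals
  have hrepr : ∀ x : X, x = B.coord 0 x • a + B.coord 1 x • b := by
    intro x
    have := B.sum_repr x
    rw [Fin.sum_univ_two, hB0, hB1] at this
    simp only [Module.Basis.coord_apply]
    exact this.symm
  have hca : B.coord 0 a = 1 ∧ B.coord 1 a = 0 ∧ B.coord 0 b = 0 ∧ B.coord 1 b = 1 := by
    rw [← hB0, ← hB1]
    simp [Module.Basis.coord_apply, Module.Basis.repr_self]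
  obtain ⟨hca0, hca1, hcb0, hcb1⟩ := hca
  -- on the positive cone the norm is linear and equal to φ
  have key : ∀ x : X, 0 ≤ B.coord 0 x → 0 ≤ B.coord 1 x → ‖x‖ = φ x := by
    intro x hc hd
    set c := B.coord 0 x with hcdef
    set d := B.coord 1 x with hddef
    have hx : x = c • a + d • b := hrepr x
    have hφx : φ x = c + d := by
      rw [hx]; simp [map_add, map_smul, hφa, hφb]
    have hub : ‖x‖ ≤ c + d := by
      calc ‖x‖ = ‖c • a + d • b‖ := by rw [← hx]
      _ ≤ ‖c • a‖ + ‖d • b‖ := norm_add_le _ _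
      _ = c + d := by rw [norm_smul, norm_smul, ha1, hb1, Real.norm_eq_abs,
          Real.norm_eq_abs, abs_of_nonneg hc, abs_of_nonneg hd, mul_one, mul_one]
    have hlb := hle x
    linarith [hφx ▸ hub, hφx ▸ hlb]
  -- the open set
  set U : Set X := {w : X | 0 < B.coord 0 (w - p) ∧ 0 < B.coord 1 (w - p) ∧
      0 < B.coord 0 (w - q) ∧ 0 < B.coord 1 (w - q)} with hUdef
  have hUopen : IsOpen U := by
    have hcont : ∀ (i : Fin 2) (r : X), Continuous fun w : X => B.coord i (w - r) := by
      intro i r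
      exact (LinearMap.continuous_of_finiteDimensional (B.coord i)).comp
        (continuous_id.sub continuous_const)
    have : U = ({w : X | 0 < B.coord 0 (w - p)} ∩ {w : X | 0 < B.coord 1 (w - p)}) ∩
        ({w : X | 0 < B.coord 0 (w - q)} ∩ {w : X | 0 < B.coord 1 (w - q)}) := by
      ext w; simp [hUdef, and_assoc]
    rw [this]
    exact ((isOpen_lt continuous_const (hcont 0 p)).inter
      (isOpen_lt continuous_const (hcont 1 p))).inter
      ((isOpen_lt continuous_const (hcont 0 q)).inter
      (isOpen_lt continuous_const (hcont 1 q)))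
  -- U is contained in the bisector
  have hUsub : U ⊆ bisec p q := by
    rintro w ⟨h1, h2, h3, h4⟩
    have hp' : ‖w - p‖ = φ (w - p) := key _ h1.le h2.le
    have hq' : ‖w - q‖ = φ (w - q) := key _ h3.le h4.le
    have : φ (w - p) = φ (w - q) := by
      have : φ (w - p) - φ (w - q) = φ (q - p) := by
        rw [← map_sub]; congr 1; abel
      have hqp : φ (q - p) = 0 := by
        rw [show q - p = -(p - q) by abel, map_neg, hφpq, neg_zero]
      linarith [this, hqp]
    show ‖w - p‖ = ‖w - q‖
    rw [hp', hq', this]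
  -- U is nonempty
  have hUne : U.Nonempty := by
    set R : ℝ := |t|⁻¹ + 1 with hRdef
    have habs : |t⁻¹| ≤ |t|⁻¹ := by rw [abs_inv]
    have hR1 : t⁻¹ < R := lt_of_le_of_lt (le_abs_self _) (by rw [abs_inv] at *; linarith [habs])
    have hR2 : -R < t⁻¹ := by
      have := neg_abs_le t⁻¹
      rw [abs_inv] at this
      linarith
    have hRpos : 0 < R := by positivity
    have hwp : (p + R • (a + b)) - p = R • a + R • b := by rw [smul_add]; abel
    have hpq' : p - q = t⁻¹ • (b - a) := by
      rw [ht, smul_smul, inv_mul_cancel₀ htne, one_smul]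
    have hwq : (p + R • (a + b)) - q = (R - t⁻¹) • a + (R + t⁻¹) • b := by
      rw [show (p + R • (a + b)) - q = R • (a + b) + (p - q) by abel, hpq']
      module
    refine ⟨p + R • (a + b), ?_, ?_, ?_, ?_⟩ <;>
      simp only [hUdef, Set.mem_setOf_eq, hwp, hwq, map_add, map_smul, smul_eq_mul,
        hca0, hca1, hcb0, hcb1, mul_one, mul_zero, add_zero, zero_add] <;>
      linarith
  obtain ⟨w, hw⟩ := hUne
  exact ⟨w, interior_maximal hUsub hUopen hw⟩
end

section
/- Let (p,q) be a non-strict pair in X. Then bisec(p,q) is contained in the interior of the bent strip conv({p + t·u : t ≥ 0} ∪ {q + t·u′ : t ≥ 0}) ∪ conv({p − t·u′ : t ≥ 0} ∪ {q − t·u : t ≥ 0}), where conv denotes the convex hull. -/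
variable {X : Type*} [NormedAddCommGroup X] [NormedSpace ℝ X]

/-- Auxiliary: coordinates adapted to a functional `φ` in a 2-dimensional space. -/
theorem aux_coord_exists (hdim : Module.finrank ℝ X = 2) (e u : X) (he : e ≠ 0)
    (φ : X →L[ℝ] ℝ) (hφe : φ e = 0) (hφu : φ u = 1) :
    ∃ ψ : X →L[ℝ] ℝ, ∀ x : X, x = ψ x • e + φ x • u := by
  have : FiniteDimensional ℝ X := Module.finite_of_finrank_eq_succ hdim
  have li : LinearIndependent ℝ ![e, u] := by
    rw [LinearIndependent.pair_iff]
    intro s t hst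
    have h1 : φ (s • e + t • u) = 0 := by rw [hst]; simp
    have ht : t = 0 := by simpa [hφe, hφu] using h1
    subst ht
    have h2 : s • e = 0 := by simpa using hst
    exact ⟨(smul_eq_zero.mp h2).resolve_right he, rfl⟩
  have hcard : Fintype.card (Fin 2) = Module.finrank ℝ X := by simp [hdim]
  let B : Module.Basis (Fin 2) ℝ X := basisOfLinearIndependentOfCardEqFinrank li hcard
  have hB : ⇑B = ![e, u] := coe_basisOfLinearIndependentOfCardEqFinrank li hcard
  have hB0 : B 0 = e := by rw [hB]; rfl
  have hB1 : B 1 = u := by rw [hB]; rfl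
  refine ⟨LinearMap.toContinuousLinearMap (B.coord 0), fun x => ?_⟩
  have hrep := B.sum_repr x
  rw [Fin.sum_univ_two, hB0, hB1] at hrep
  have hφx : φ x = B.repr x 1 := by
    conv_lhs => rw [← hrep]
    simp [hφe, hφu]
  simp only [LinearMap.coe_toContinuousLinearMap', Module.Basis.coord_apply]
  rw [hφx, hrep]

set_option maxHeartbeats 1000000 in
theorem bisector_subset_interior_bent_strip
    (hdim : Module.finrank ℝ X = 2) (p q : X) (hpq : p ≠ q)
    (hns : ¬ strictPair p q)
    (φ : X →L[ℝ] ℝ) (hφ : ‖φ‖ = 1) (hφpq : φ (p - q) = 0)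
    (u u' : X) (huu' : u ≠ u')
    (hface : {x : X | ‖x‖ ≤ 1 ∧ φ x = 1} = segment ℝ u u')
    (hlabel : ∃ c : ℝ, 0 < c ∧ u' - u = c • (q - p)) :
    bisec p q ⊆ interior
      (convexHull ℝ ({z : X | ∃ t : ℝ, 0 ≤ t ∧ z = p + t • u} ∪
          {z : X | ∃ t : ℝ, 0 ≤ t ∧ z = q + t • u'}) ∪
       convexHull ℝ ({z : X | ∃ t : ℝ, 0 ≤ t ∧ z = p - t • u'} ∪
          {z : X | ∃ t : ℝ, 0 ≤ t ∧ z = q - t • u})) := by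
  obtain ⟨c, hc, hu'⟩ := hlabel
  set e : X := q - p with he_def
  have he : e ≠ 0 := sub_ne_zero.mpr (Ne.symm hpq)
  have hφe : φ e = 0 := by
    rw [he_def]; rw [map_sub] at hφpq ⊢; linarith
  have hu'eq : u' = u + c • e := by rw [← hu']; abel
  have hq : q = p + e := by rw [he_def]; abel
  have hu_mem : u ∈ {x : X | ‖x‖ ≤ 1 ∧ φ x = 1} := hface.symm ▸ left_mem_segment ℝ u u'
  have hφu : φ u = 1 := hu_mem.2
  have hnu : ‖u‖ = 1 := by
    refine le_antisymm hu_mem.1 ?_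
    have h1 := φ.le_opNorm u
    rw [hφ, one_mul, Real.norm_eq_abs, hφu] at h1
    norm_num at h1
    exact h1
  -- the one-variable gauge function
  set g : ℝ → ℝ := fun s => ‖u + s • e‖ with hg_def
  have hg_ge : ∀ s : ℝ, 1 ≤ g s := by
    intro s
    have h1 := φ.le_opNorm (u + s • e)
    rw [hφ, one_mul, Real.norm_eq_abs] at h1
    have h2 : φ (u + s • e) = 1 := by simp [hφu, hφe]
    rw [h2] at h1; norm_num at h1; exact h1
  have hg1 : ∀ s : ℝ, 0 ≤ s → s ≤ c → g s = 1 := by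
    intro s hs0 hsc
    have hmem : u + s • e ∈ segment ℝ u u' := by
      refine ⟨1 - s/c, s/c, ?_, by positivity, by ring, ?_⟩
      · have : s/c ≤ 1 := (div_le_one hc).mpr hsc
        linarith
      · rw [hu'eq]; match_scalars <;> (field_simp; try ring; try tauto)
    rw [← hface] at hmem
    exact le_antisymm hmem.1 (hg_ge s)
  have hg_gt : ∀ s : ℝ, s < 0 ∨ c < s → 1 < g s := by
    intro s hs
    rcases lt_or_ge 1 (g s) with h | h
    · exact h
    · exfalso
      have hmem : u + s • e ∈ {x : X | ‖x‖ ≤ 1 ∧ φ x = 1} := ⟨h, by simp [hφu, hφe]⟩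
      rw [hface] at hmem
      obtain ⟨a, b, ha, hb, hab, habe⟩ := hmem
      have hkey : (b * c - s) • e = 0 := by
        have h0 : a • u + b • u' - (u + s • e) = 0 := sub_eq_zero.mpr habe
        rw [hu'eq, show a • u + b • (u + c • e) - (u + s • e)
            = (a + b - 1) • u + (b * c - s) • e by module, hab] at h0
        simpa using h0
      have hs' : s = b * c := by
        have := (smul_eq_zero.mp hkey).resolve_right he
        linarith
      have hb1 : b ≤ 1 := by linarith
      rcases hs with h' | h'
      · nlinarith
      · nlinarith
  have L1 : ∀ s t : ℝ, s < t → t ≤ 0 → g t < g s := by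
    intro s t hst ht0
    have hs0 : s < 0 := lt_of_lt_of_le hst ht0
    have hl0 : 0 ≤ t / s := by
      rw [div_nonneg_iff]; right; exact ⟨ht0, hs0.le⟩
    have hl1 : t / s < 1 := by
      rw [div_lt_one_iff]
      right; right; exact ⟨hs0, hst⟩
    have hid : u + t • e = (t/s) • (u + s • e) + (1 - t/s) • u := by
      match_scalars <;> (field_simp [hs0.ne]; try ring)
    have hconv : g t ≤ (t/s) * g s + (1 - t/s) * 1 := by
      rw [hg_def]
      simp only
      rw [hid]
      refine le_trans (norm_add_le _ _) ?_
      rw [norm_smul, norm_smul, Real.norm_eq_abs, Real.norm_eq_abs,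
        abs_of_nonneg hl0, abs_of_nonneg (by linarith), hnu]
    have := hg_gt s (Or.inl hs0)
    nlinarith
  have L2 : ∀ s t : ℝ, c ≤ s → s < t → g s < g t := by
    intro s t hcs hst
    have htc : c < t := lt_of_le_of_lt hcs hst
    have hden : 0 < t - c := by linarith
    set l := (t - s) / (t - c) with hl_def
    have hl0 : 0 < l := div_pos (by linarith) hden
    have hl1 : l ≤ 1 := (div_le_one hden).mpr (by linarith)
    have hid : u + s • e = l • (u + c • e) + (1 - l) • (u + t • e) := by
      match_scalars <;> (rw [hl_def]; field_simp [hden.ne']; try ring)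
    have hconv : g s ≤ l * 1 + (1 - l) * g t := by
      rw [hg_def]
      simp only
      rw [hid]
      refine le_trans (norm_add_le _ _) ?_
      rw [norm_smul, norm_smul, Real.norm_eq_abs, Real.norm_eq_abs,
        abs_of_nonneg hl0.le, abs_of_nonneg (by linarith)]
      have h1 := hg1 c hc.le le_rfl
      rw [hg_def] at h1
      simp only at h1
      rw [h1]
    have := hg_gt t (Or.inr htc)
    nlinarith
  have hscale : ∀ A B : ℝ, B ≠ 0 → ‖A • e + B • u‖ = |B| * g (A / B) := by
    intro A B hB
    have key : A • e + B • u = B • (u + (A / B) • e) := by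
      match_scalars <;> (field_simp; try ring; try tauto)
    rw [key, norm_smul, Real.norm_eq_abs]
  -- coordinates
  obtain ⟨ψ, hψ⟩ := aux_coord_exists hdim e u he φ hφe hφu
  set al : X → ℝ := fun w => ψ (w - p) with hal_def
  set be : X → ℝ := fun w => φ (w - p) with hbe_def
  have hcoord : ∀ w : X, w - p = al w • e + be w • u := fun w => hψ (w - p)
  have hal_cont : Continuous al := ψ.continuous.comp (continuous_sub_right p)
  have hbe_cont : Continuous be := φ.continuous.comp (continuous_sub_right p)
  -- the open sets
  set O1 : Set X := {w | 0 < be w ∧ 0 < al w ∧ al w < 1 + c * be w} with hO1_def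
  set O2 : Set X := {w | be w < 0 ∧ c * be w < al w ∧ al w < 1} with hO2_def
  set O3 : Set X := {w | 0 < al w ∧ al w < 1 ∧ c * be w < al w ∧ al w < 1 + c * be w}
    with hO3_def
  have hO1_open : IsOpen O1 := by
    have h1 : IsOpen {w : X | 0 < be w} := isOpen_lt continuous_const hbe_cont
    have h2 : IsOpen {w : X | 0 < al w} := isOpen_lt continuous_const hal_cont
    have h3 : IsOpen {w : X | al w < 1 + c * be w} :=
      isOpen_lt hal_cont (continuous_const.add (continuous_const.mul hbe_cont))
    exact h1.and (h2.and h3)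
  have hO2_open : IsOpen O2 := by
    have h1 : IsOpen {w : X | be w < 0} := isOpen_lt hbe_cont continuous_const
    have h2 : IsOpen {w : X | c * be w < al w} :=
      isOpen_lt (continuous_const.mul hbe_cont) hal_cont
    have h3 : IsOpen {w : X | al w < 1} := isOpen_lt hal_cont continuous_const
    exact h1.and (h2.and h3)
  have hO3_open : IsOpen O3 := by
    have h1 : IsOpen {w : X | 0 < al w} := isOpen_lt continuous_const hal_cont
    have h2 : IsOpen {w : X | al w < 1} := isOpen_lt hal_cont continuous_const
    have h3 : IsOpen {w : X | c * be w < al w} :=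
      isOpen_lt (continuous_const.mul hbe_cont) hal_cont
    have h4 : IsOpen {w : X | al w < 1 + c * be w} :=
      isOpen_lt hal_cont (continuous_const.add (continuous_const.mul hbe_cont))
    exact h1.and (h2.and (h3.and h4))
  -- membership in the convex hulls
  have hup : ∀ w : X, 0 ≤ be w → 0 ≤ al w → al w ≤ 1 + c * be w →
      w ∈ convexHull ℝ ({z : X | ∃ t : ℝ, 0 ≤ t ∧ z = p + t • u} ∪
        {z : X | ∃ t : ℝ, 0 ≤ t ∧ z = q + t • u'}) := by
    intro w hB hA hA2
    have h1 : w = al w • e + be w • u + p := sub_eq_iff_eq_add.mp (hcoord w)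
    obtain ⟨A, hA'⟩ : ∃ a : ℝ, a = al w := ⟨_, rfl⟩
    obtain ⟨B, hB'⟩ : ∃ b : ℝ, b = be w := ⟨_, rfl⟩
    rw [← hA'] at hA hA2 h1
    rw [← hB'] at hB hA2 h1
    have hD : (0:ℝ) < 1 + c * B := by nlinarith
    have hw : w = (1 - A / (1 + c * B)) • (p + B • u)
        + (A / (1 + c * B)) • (q + B • u') := by
      rw [h1, hq, hu'eq]
      match_scalars <;> (field_simp; try ring; try tauto)
    rw [hw]
    refine convex_convexHull ℝ _ ?_ ?_ ?_ ?_ ?_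
    · exact subset_convexHull ℝ _ (Or.inl ⟨B, hB, rfl⟩)
    · exact subset_convexHull ℝ _ (Or.inr ⟨B, hB, rfl⟩)
    · have : A / (1 + c * B) ≤ 1 := (div_le_one hD).mpr hA2
      linarith
    · exact div_nonneg hA hD.le
    · ring
  have hdown : ∀ w : X, be w ≤ 0 → c * be w ≤ al w → al w ≤ 1 →
      w ∈ convexHull ℝ ({z : X | ∃ t : ℝ, 0 ≤ t ∧ z = p - t • u'} ∪
        {z : X | ∃ t : ℝ, 0 ≤ t ∧ z = q - t • u}) := by
    intro w hB hA hA2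
    have h1 : w = al w • e + be w • u + p := sub_eq_iff_eq_add.mp (hcoord w)
    obtain ⟨A, hA'⟩ : ∃ a : ℝ, a = al w := ⟨_, rfl⟩
    obtain ⟨B, hB'⟩ : ∃ b : ℝ, b = be w := ⟨_, rfl⟩
    rw [← hA'] at hA hA2 h1
    rw [← hB'] at hB hA h1
    have hD : (0:ℝ) < 1 - c * B := by nlinarith
    have hw : w = ((1 - A) / (1 - c * B)) • (p - (-B) • u')
        + (1 - (1 - A) / (1 - c * B)) • (q - (-B) • u) := by
      rw [h1, hq, hu'eq]
      match_scalars <;> (field_simp; try ring; try tauto)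
    rw [hw]
    refine convex_convexHull ℝ _ ?_ ?_ ?_ ?_ ?_
    · exact subset_convexHull ℝ _ (Or.inl ⟨-B, by linarith, rfl⟩)
    · exact subset_convexHull ℝ _ (Or.inr ⟨-B, by linarith, rfl⟩)
    · exact div_nonneg (by linarith) hD.le
    · have : (1 - A) / (1 - c * B) ≤ 1 := (div_le_one hD).mpr (by linarith)
      linarith
    · ring
  -- the open set is contained in the bent strip
  have hOT : O1 ∪ O2 ∪ O3 ⊆
      (convexHull ℝ ({z : X | ∃ t : ℝ, 0 ≤ t ∧ z = p + t • u} ∪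
          {z : X | ∃ t : ℝ, 0 ≤ t ∧ z = q + t • u'}) ∪
       convexHull ℝ ({z : X | ∃ t : ℝ, 0 ≤ t ∧ z = p - t • u'} ∪
          {z : X | ∃ t : ℝ, 0 ≤ t ∧ z = q - t • u})) := by
    rintro w ((⟨h1, h2, h3⟩ | ⟨h1, h2, h3⟩) | ⟨h1, h2, h3, h4⟩)
    · exact Or.inl (hup w h1.le h2.le h3.le)
    · exact Or.inr (hdown w h1.le h2.le h3.le)
    · rcases le_or_gt 0 (be w) with hB | hB
      · exact Or.inl (hup w hB h1.le h4.le)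
      · exact Or.inr (hdown w hB.le h3.le h2.le)
  -- the bisector is contained in the open set
  intro z hz
  refine interior_maximal hOT ((hO1_open.union hO2_open).union hO3_open) ?_
  have hzp : z - p = al z • e + be z • u := hcoord z
  have hzq : z - q = (al z - 1) • e + be z • u := by
    have h1 : z - q = (z - p) - e := by rw [he_def]; abel
    rw [h1, hzp]; module
  have heq : ‖al z • e + be z • u‖ = ‖(al z - 1) • e + be z • u‖ := by
    rw [← hzp, ← hzq]; exact hz
  rcases lt_trichotomy (be z) 0 with hB | hB | hB
  · -- be z < 0
    have hBne : be z ≠ 0 := hB.ne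
    have heq' : g (al z / be z) = g ((al z - 1) / be z) := by
      have h1 := hscale (al z) (be z) hBne
      have h2 := hscale (al z - 1) (be z) hBne
      rw [h1, h2] at heq
      exact mul_left_cancel₀ (abs_ne_zero.mpr hBne) heq
    have hA1 : al z < 1 := by
      by_contra h
      push_neg at h
      have hlt : al z / be z < (al z - 1) / be z :=
        div_lt_div_of_neg_of_lt hB (by linarith)
      have hle : (al z - 1) / be z ≤ 0 :=
        div_nonpos_of_nonneg_of_nonpos (by linarith) hB.le
      have := L1 (al z / be z) ((al z - 1) / be z) hlt hle
      linarith [heq'.ge, heq'.le, this]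
    have hA2 : c * be z < al z := by
      by_contra h
      push_neg at h
      have hge : c ≤ al z / be z := (le_div_iff_of_neg hB).mpr h
      have hlt : al z / be z < (al z - 1) / be z :=
        div_lt_div_of_neg_of_lt hB (by linarith)
      have := L2 (al z / be z) ((al z - 1) / be z) hge hlt
      linarith [heq'.ge, heq'.le, this]
    exact Or.inl (Or.inr ⟨hB, hA2, hA1⟩)
  · -- be z = 0
    have h1 : ‖al z • e‖ = ‖(al z - 1) • e‖ := by
      have := heq
      rw [hB] at this
      simpa using this
    rw [norm_smul, norm_smul, Real.norm_eq_abs, Real.norm_eq_abs] at h1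
    have habs : |al z| = |al z - 1| :=
      mul_right_cancel₀ (norm_ne_zero_iff.mpr he) h1
    have hA : al z = 1/2 := by
      rcases abs_eq_abs.mp habs with h | h
      · linarith
      · linarith
    refine Or.inr ⟨by rw [hA]; norm_num, by rw [hA]; norm_num,
      by rw [hA, hB]; norm_num, by rw [hA, hB]; norm_num⟩
  · -- 0 < be z
    have hBne : be z ≠ 0 := hB.ne'
    have heq' : g (al z / be z) = g ((al z - 1) / be z) := by
      have h1 := hscale (al z) (be z) hBne
      have h2 := hscale (al z - 1) (be z) hBne
      rw [h1, h2] at heq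
      exact mul_left_cancel₀ (abs_ne_zero.mpr hBne) heq
    have hA1 : 0 < al z := by
      by_contra h
      push_neg at h
      have hlt : (al z - 1) / be z < al z / be z :=
        (div_lt_div_iff_of_pos_right hB).mpr (by linarith)
      have hle : al z / be z ≤ 0 := div_nonpos_of_nonpos_of_nonneg h hB.le
      have := L1 ((al z - 1) / be z) (al z / be z) hlt hle
      linarith [heq'.ge, heq'.le, this]
    have hA2 : al z < 1 + c * be z := by
      by_contra h
      push_neg at h
      have hge : c ≤ (al z - 1) / be z := (le_div_iff₀ hB).mpr (by linarith)
      have hlt : (al z - 1) / be z < al z / be z :=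
        (div_lt_div_iff_of_pos_right hB).mpr (by linarith)
      have := L2 ((al z - 1) / be z) (al z / be z) hge hlt
      linarith [heq'.ge, heq'.le, this]
    exact Or.inl (Or.inl ⟨hB, hA1, hA2⟩)
end

section
/- Let (p,q) be a non-strict pair in X. Then bisec(p,q) ∩ {z ∈ X : φ(z − p) ≥ φ(s_t − p)} = C(p,φ) ∩ C(q,φ). -/
variable {X : Type*} [NormedAddCommGroup X] [NormedSpace ℝ X]

set_option maxHeartbeats 1000000 in
private lemma key_lemma {X : Type*} [NormedAddCommGroup X] [NormedSpace ℝ X]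
    (φ : X →L[ℝ] ℝ) (u u' : X) (hu'n : ‖u'‖ = 1)
    (A Bc : X →ₗ[ℝ] ℝ)
    (hrepr : ∀ v : X, v = A v • u + Bc v • u')
    (hφAB : ∀ v : X, φ v = A v + Bc v)
    (hφle : ∀ v : X, φ v ≤ ‖v‖)
    (r m : ℝ) (hm : 0 < m)
    (x y z : X) (hx : ‖x‖ ≤ r) (hy : ‖y‖ = r) (hz : ‖z‖ ≤ r)
    (hφx : φ x = m) (hφy : φ y = m) (hφz : φ z = m)
    (h1 : Bc x < Bc y) (h2 : Bc y < Bc z) : m = r := by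
  have hmr : m ≤ r := by rw [← hφy, ← hy]; exact hφle y
  have hA : ∀ v : X, φ v = m → A v = m - Bc v := by
    intro v hv
    have := hφAB v
    linarith
  set s : ℝ := (Bc y - Bc x) / (Bc z - Bc x) with hs_def
  have hzx : (0:ℝ) < Bc z - Bc x := by linarith
  have hs0 : 0 < s := div_pos (by linarith) hzx
  have hs1 : s < 1 := (div_lt_one hzx).2 (by linarith)
  have hsmul : s * (Bc z - Bc x) = Bc y - Bc x := div_mul_cancel₀ _ (ne_of_gt hzx)
  have hyv : y = (1 - s) • x + s • z := by
    calc y = A y • u + Bc y • u' := hrepr y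
      _ = (1 - s) • x + s • z := by
          rw [hrepr x, hrepr z, hA y hφy, hA x hφx, hA z hφz]
          match_scalars
          · linear_combination hsmul
          · linear_combination - hsmul
  have hy0 : y ≠ 0 := by
    intro h
    rw [h] at hφy
    simp at hφy
    linarith
  obtain ⟨g, hg1, hgy⟩ := exists_dual_vector ℝ y (norm_ne_zero_iff.2 hy0)
  have hgy' : g y = r := by rw [← hy]; exact_mod_cast hgy
  have hb : ∀ v : X, g v ≤ ‖v‖ := by
    intro v
    calc g v ≤ |g v| := le_abs_self _
      _ = ‖g v‖ := (Real.norm_eq_abs _).symm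
      _ ≤ ‖g‖ * ‖v‖ := g.le_opNorm v
      _ = ‖v‖ := by rw [hg1, one_mul]
  have hgx : g x ≤ r := le_trans (hb x) hx
  have hgz : g z ≤ r := le_trans (hb z) hz
  have hcomb : g y = (1 - s) * g x + s * g z := by
    rw [hyv]; simp
  have e1 : g x = r := by nlinarith
  have e2 : g z = r := by nlinarith
  have hzxv : z - x = (Bc z - Bc x) • (u' - u) := by
    nth_rewrite 1 [hrepr z, hrepr x]
    rw [hA z hφz, hA x hφx]
    module
  have hgu : (Bc z - Bc x) * (g u' - g u) = 0 := by
    have h := congrArg g hzxv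
    simp [map_sub, smul_eq_mul] at h
    rw [e2, e1] at h
    linarith [h]
  have hgu' : g u' = g u := by
    rcases mul_eq_zero.1 hgu with h | h
    · exact absurd h (ne_of_gt hzx)
    · linarith
  have hgy2 : g y = m * g u' := by
    have h := congrArg g (hrepr y)
    simp [smul_eq_mul] at h
    rw [h, hgu', hA y hφy]
    ring
  have hu1 : g u' ≤ 1 := by
    calc g u' ≤ ‖u'‖ := hb u'
      _ = 1 := hu'n
  have : m * g u' ≤ m * 1 := mul_le_mul_of_nonneg_left hu1 (le_of_lt hm)
  rw [hgy'] at hgy2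
  linarith

set_option maxHeartbeats 1000000 in
theorem bisector_upper_part_eq_cone_inter
    (hdim : Module.finrank ℝ X = 2) (p q : X) (hpq : p ≠ q)
    (hns : ¬ strictPair p q)
    (φ : X →L[ℝ] ℝ) (hφ : ‖φ‖ = 1) (hφpq : φ (p - q) = 0)
    (u u' : X) (huu' : u ≠ u')
    (hface : {x : X | ‖x‖ ≤ 1 ∧ φ x = 1} = segment ℝ u u')
    (hlabel : ∃ c : ℝ, 0 < c ∧ u' - u = c • (q - p))
    (s_t : X)
    (hst1 : ∃ t : ℝ, 0 ≤ t ∧ s_t = p + t • u')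
    (hst2 : ∃ t : ℝ, 0 ≤ t ∧ s_t = q + t • u) :
    bisec p q ∩ {z : X | φ (s_t - p) ≤ φ (z - p)} = cone p φ ∩ cone q φ := by
  classical
  have hφle : ∀ v : X, φ v ≤ ‖v‖ := by
    intro v
    calc φ v ≤ |φ v| := le_abs_self _
      _ = ‖φ v‖ := (Real.norm_eq_abs _).symm
      _ ≤ ‖φ‖ * ‖v‖ := φ.le_opNorm v
      _ = ‖v‖ := by rw [hφ, one_mul]
  have hu_mem : u ∈ {x : X | ‖x‖ ≤ 1 ∧ φ x = 1} := by
    rw [hface]; exact left_mem_segment ℝ u u'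
  have hu'_mem : u' ∈ {x : X | ‖x‖ ≤ 1 ∧ φ x = 1} := by
    rw [hface]; exact right_mem_segment ℝ u u'
  obtain ⟨hu_le, hφu⟩ := hu_mem
  obtain ⟨hu'_le, hφu'⟩ := hu'_mem
  have hun : ‖u‖ = 1 := le_antisymm hu_le (by rw [← hφu]; exact hφle u)
  have hu'n : ‖u'‖ = 1 := le_antisymm hu'_le (by rw [← hφu']; exact hφle u')
  have hu'0 : u' ≠ 0 := by intro h; rw [h] at hu'n; simp at hu'n
  rw [map_sub] at hφpq
  obtain ⟨c, hc, hcu⟩ := hlabel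
  obtain ⟨t1, ht1, hs1⟩ := hst1
  obtain ⟨t2, ht2, hs2⟩ := hst2
  have ht12 : t1 = t2 := by
    have h1 : φ s_t = φ p + t1 := by rw [hs1]; simp [hφu']
    have h2 : φ s_t = φ q + t2 := by rw [hs2]; simp [hφu]
    linarith
  have h3 : p + t1 • u' = q + t1 • u := by rw [← hs1, ht12, ← hs2]
  have hqp : q - p = t1 • (u' - u) := by
    rw [smul_sub, sub_eq_sub_iff_add_eq_add, ← h3, add_comm]
  have huu0 : u' - u ≠ 0 := sub_ne_zero.mpr (Ne.symm huu')
  have hct : c * t1 = 1 := by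
    have h4 : u' - u = (c * t1) • (u' - u) := by rw [mul_smul, ← hqp, ← hcu]
    by_contra hne
    have h5 : (1 - c * t1) • (u' - u) = 0 := by
      rw [sub_smul, one_smul, ← h4, sub_self]
    rcases smul_eq_zero.1 h5 with h | h
    · exact hne (by linarith)
    · exact huu0 h
  have ht : 0 < t1 := by
    rcases ht1.lt_or_eq with h | h
    · exact h
    · exfalso; rw [← h, mul_zero] at hct; norm_num at hct
  -- basis
  have hLI : LinearIndependent ℝ ![u, u'] := by
    rw [linearIndependent_fin2]
    refine ⟨by simpa using hu'0, fun a ha => ?_⟩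
    simp only [Matrix.cons_val_one, Matrix.head_cons, Matrix.cons_val_zero] at ha
    have h5 := congrArg φ ha
    simp [hφu, hφu'] at h5
    rw [h5, one_smul] at ha
    exact huu' ha.symm
  have hfd : FiniteDimensional ℝ X := FiniteDimensional.of_finrank_eq_succ hdim
  let Bas : Module.Basis (Fin 2) ℝ X := basisOfLinearIndependentOfCardEqFinrank hLI (by simp [hdim])
  have hB0 : Bas 0 = u := by
    simp [Bas, coe_basisOfLinearIndependentOfCardEqFinrank]
  have hB1 : Bas 1 = u' := by
    simp [Bas, coe_basisOfLinearIndependentOfCardEqFinrank]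
  set A : X →ₗ[ℝ] ℝ := Bas.coord 0 with hA_def
  set Bc : X →ₗ[ℝ] ℝ := Bas.coord 1 with hBc_def
  have hrepr : ∀ v : X, v = A v • u + Bc v • u' := by
    intro v
    have h6 := Bas.sum_repr v
    rw [Fin.sum_univ_two, hB0, hB1] at h6
    exact h6.symm
  have hAu : A u = 1 := by rw [← hB0]; simp [hA_def]
  have hAu' : A u' = 0 := by rw [← hB1]; simp [hA_def]
  have hBu : Bc u = 0 := by rw [← hB0]; simp [hBc_def]
  have hBu' : Bc u' = 1 := by rw [← hB1]; simp [hBc_def]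
  have hφAB : ∀ v : X, φ v = A v + Bc v := by
    intro v
    have h6 := congrArg φ (hrepr v)
    simpa [hφu, hφu'] using h6
  have hpos : ∀ v : X, v ≠ 0 → φ v = ‖v‖ → 0 ≤ A v ∧ 0 ≤ Bc v := by
    intro v hv0 hv
    have hn : (0:ℝ) < ‖v‖ := norm_pos_iff.2 hv0
    have hmem : ‖v‖⁻¹ • v ∈ segment ℝ u u' := by
      rw [← hface]
      constructor
      · rw [norm_smul, Real.norm_eq_abs, abs_of_pos (inv_pos.2 hn),
          inv_mul_cancel₀ (ne_of_gt hn)]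
      · rw [map_smul, smul_eq_mul, hv, inv_mul_cancel₀ (ne_of_gt hn)]
    obtain ⟨a, b, ha, hb, hab, habv⟩ := hmem
    have hv2 : v = (‖v‖ * a) • u + (‖v‖ * b) • u' := by
      have h7 : v = ‖v‖ • (‖v‖⁻¹ • v) := by
        rw [smul_smul, mul_inv_cancel₀ (ne_of_gt hn), one_smul]
      nth_rewrite 1 [h7]
      rw [← habv, smul_add, smul_smul, smul_smul]
    have hAv : A v = ‖v‖ * a := by
      have := congrArg A hv2
      simpa [hAu, hAu'] using this
    have hBv : Bc v = ‖v‖ * b := by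
      have := congrArg Bc hv2
      simpa [hBu, hBu'] using this
    exact ⟨hAv ▸ mul_nonneg hn.le ha, hBv ▸ mul_nonneg hn.le hb⟩
  have hφst : φ (s_t - p) = t1 := by
    rw [hs1]
    simp [hφu']
  have hBqp : Bc (q - p) = t1 := by rw [hqp]; simp [hBu, hBu']
  ext z
  simp only [Set.mem_inter_iff, Set.mem_setOf_eq, bisec, cone]
  constructor
  · rintro ⟨hbis, hup⟩
    rw [hφst] at hup
    set r : ℝ := ‖z - p‖ with hr
    set m : ℝ := φ (z - p) with hm
    have hm0 : 0 < m := lt_of_lt_of_le ht hup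
    have hw'eq : z - q = (z - p) - t1 • (u' - u) := by rw [← hqp]; abel
    have hφw' : φ (z - q) = m := by
      rw [hw'eq]
      simp only [map_sub, map_smul, smul_eq_mul, hφu, hφu', hm]
      ring
    have hnw' : ‖z - q‖ = r := hbis.symm
    have hmr : m ≤ r := by rw [hm, hr]; exact hφle (z - p)
    have hr0 : 0 < r := lt_of_lt_of_le hm0 hmr
    have hBw' : Bc (z - q) = Bc (z - p) - t1 := by
      rw [hw'eq]
      simp only [map_sub, map_smul, smul_eq_mul, hBu, hBu']
      ring
    have key : m = r := by
      by_cases hEx1 : ∃ x : X, ‖x‖ ≤ r ∧ φ x = m ∧ Bc (z - p) < Bc x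
      · obtain ⟨x, hx1, hx2, hx3⟩ := hEx1
        exact key_lemma φ u u' hu'n A Bc hrepr hφAB hφle r m hm0
          (z - q) (z - p) x (le_of_eq hnw') hr.symm hx1 hφw' hm.symm hx2
          (by rw [hBw']; linarith) hx3
      by_cases hEx2 : ∃ x : X, ‖x‖ ≤ r ∧ φ x = m ∧ Bc x < Bc (z - p) - t1
      · obtain ⟨x, hx1, hx2, hx3⟩ := hEx2
        exact key_lemma φ u u' hu'n A Bc hrepr hφAB hφle r m hm0
          x (z - q) (z - p) hx1 hnw' (le_of_eq hr.symm) hx2 hφw' hm.symm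
          (by rw [hBw']; linarith) (by rw [hBw']; linarith)
      push_neg at hEx1 hEx2
      have hrm : 0 < r + m := by linarith
      have hφnegw : φ (-(z - p)) = -m := by rw [map_neg, ← hm]
      have hφnegw' : φ (-(z - q)) = -m := by rw [map_neg, hφw']
      have hBnegw : Bc (-(z - p)) = -Bc (z - p) := by rw [map_neg]
      have hBnegw' : Bc (-(z - q)) = -(Bc (z - p) - t1) := by rw [map_neg, hBw']
      -- point P
      have hbigPn : ‖(2 * m) • (r • u') + (r - m) • (-(z - p))‖ ≤ (r + m) * r := by
        calc ‖(2 * m) • (r • u') + (r - m) • (-(z - p))‖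
            ≤ ‖(2 * m) • (r • u')‖ + ‖(r - m) • (-(z - p))‖ := norm_add_le _ _
          _ = (2 * m) * r + (r - m) * r := by
              rw [norm_smul, norm_smul, norm_smul, norm_neg, ← hr, hu'n,
                Real.norm_eq_abs, Real.norm_eq_abs, Real.norm_eq_abs,
                abs_of_nonneg (by linarith : (0:ℝ) ≤ 2 * m),
                abs_of_nonneg (by linarith : (0:ℝ) ≤ r - m),
                abs_of_nonneg hr0.le]
              ring
          _ = (r + m) * r := by ring
      have hPn : ‖(r + m)⁻¹ • ((2 * m) • (r • u') + (r - m) • (-(z - p)))‖ ≤ r := by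
        rw [norm_smul, Real.norm_eq_abs, abs_of_pos (inv_pos.2 hrm)]
        calc (r + m)⁻¹ * ‖(2 * m) • (r • u') + (r - m) • (-(z - p))‖
            ≤ (r + m)⁻¹ * ((r + m) * r) :=
              mul_le_mul_of_nonneg_left hbigPn (inv_nonneg.2 hrm.le)
          _ = r := by rw [← mul_assoc, inv_mul_cancel₀ (ne_of_gt hrm), one_mul]
      have hPφ : φ ((r + m)⁻¹ • ((2 * m) • (r • u') + (r - m) • (-(z - p)))) = m := by
        rw [map_smul, map_add, map_smul, map_smul, map_smul, hφu', hφnegw,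
          smul_eq_mul, smul_eq_mul, smul_eq_mul, smul_eq_mul]
        field_simp
        ring
      have hPB : Bc ((r + m)⁻¹ • ((2 * m) • (r • u') + (r - m) • (-(z - p)))) =
          (r + m)⁻¹ * (2 * m * r - (r - m) * Bc (z - p)) := by
        rw [map_smul, map_add, map_smul, map_smul, map_smul, hBu', hBnegw,
          smul_eq_mul, smul_eq_mul, smul_eq_mul, smul_eq_mul]
        ring
      have h10 := hEx1 _ hPn hPφ
      rw [hPB] at h10
      have h10' := mul_le_mul_of_nonneg_left h10 hrm.le
      rw [← mul_assoc, mul_inv_cancel₀ (ne_of_gt hrm), one_mul] at h10'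
      have hprod1 : 2 * m * r ≤ 2 * r * Bc (z - p) := by linarith [h10']
      have h11 : m ≤ Bc (z - p) := by
        by_contra hcon
        push_neg at hcon
        have hpp : 0 < r * (m - Bc (z - p)) := mul_pos hr0 (by linarith)
        linarith [hpp, hprod1]
      -- point Q
      have hbigQn : ‖(2 * m) • (r • u) + (r - m) • (-(z - q))‖ ≤ (r + m) * r := by
        calc ‖(2 * m) • (r • u) + (r - m) • (-(z - q))‖
            ≤ ‖(2 * m) • (r • u)‖ + ‖(r - m) • (-(z - q))‖ := norm_add_le _ _
          _ = (2 * m) * r + (r - m) * r := by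
              rw [norm_smul, norm_smul, norm_smul, norm_neg, hnw', hun,
                Real.norm_eq_abs, Real.norm_eq_abs, Real.norm_eq_abs,
                abs_of_nonneg (by linarith : (0:ℝ) ≤ 2 * m),
                abs_of_nonneg (by linarith : (0:ℝ) ≤ r - m),
                abs_of_nonneg hr0.le]
              ring
          _ = (r + m) * r := by ring
      have hQn : ‖(r + m)⁻¹ • ((2 * m) • (r • u) + (r - m) • (-(z - q)))‖ ≤ r := by
        rw [norm_smul, Real.norm_eq_abs, abs_of_pos (inv_pos.2 hrm)]
        calc (r + m)⁻¹ * ‖(2 * m) • (r • u) + (r - m) • (-(z - q))‖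
            ≤ (r + m)⁻¹ * ((r + m) * r) :=
              mul_le_mul_of_nonneg_left hbigQn (inv_nonneg.2 hrm.le)
          _ = r := by rw [← mul_assoc, inv_mul_cancel₀ (ne_of_gt hrm), one_mul]
      have hQφ : φ ((r + m)⁻¹ • ((2 * m) • (r • u) + (r - m) • (-(z - q)))) = m := by
        rw [map_smul, map_add, map_smul, map_smul, map_smul, hφu, hφnegw',
          smul_eq_mul, smul_eq_mul, smul_eq_mul, smul_eq_mul]
        field_simp
        ring
      have hQB : Bc ((r + m)⁻¹ • ((2 * m) • (r • u) + (r - m) • (-(z - q)))) =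
          (r + m)⁻¹ * (-(r - m) * (Bc (z - p) - t1)) := by
        rw [map_smul, map_add, map_smul, map_smul, map_smul, hBu, hBnegw',
          smul_eq_mul, smul_eq_mul, smul_eq_mul, smul_eq_mul]
        ring
      have h12 := hEx2 _ hQn hQφ
      rw [hQB] at h12
      have h12' := mul_le_mul_of_nonneg_left h12 hrm.le
      rw [← mul_assoc, mul_inv_cancel₀ (ne_of_gt hrm), one_mul] at h12'
      have hprod2 : 2 * r * (Bc (z - p) - t1) ≤ 0 := by linarith [h12']
      have h13 : Bc (z - p) ≤ t1 := by
        by_contra hcon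
        push_neg at hcon
        have hpp : 0 < r * (Bc (z - p) - t1) := mul_pos hr0 (by linarith)
        linarith [hpp, hprod2]
      have hmt : m = t1 := le_antisymm (by linarith) hup
      have hBweq : Bc (z - p) = t1 := le_antisymm h13 (by linarith)
      have hAw : A (z - p) = 0 := by
        have h := hφAB (z - p)
        linarith
      have hwt : z - p = t1 • u' := by
        calc z - p = A (z - p) • u + Bc (z - p) • u' := hrepr (z - p)
          _ = t1 • u' := by rw [hAw, hBweq]; simp
      have hrt : r = t1 := by
        rw [hr, hwt, norm_smul, Real.norm_eq_abs, abs_of_pos ht, hu'n, mul_one]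
      linarith
    constructor
    · exact key
    · rw [hφw', hnw']
      exact key
  · rintro ⟨h1, h2⟩
    have hzp0 : z - p ≠ 0 := by
      intro h
      have hz : z = p := sub_eq_zero.1 h
      rw [hz] at h2
      have : φ (p - q) = ‖p - q‖ := h2
      rw [map_sub] at this
      have hnpq : ‖p - q‖ = 0 := by linarith
      exact hpq (sub_eq_zero.1 (norm_eq_zero.1 hnpq))
    have hzq0 : z - q ≠ 0 := by
      intro h
      have hz : z = q := sub_eq_zero.1 h
      rw [hz] at h1
      have : φ (q - p) = ‖q - p‖ := h1
      rw [map_sub] at this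
      have hnpq : ‖q - p‖ = 0 := by linarith
      exact hpq (sub_eq_zero.1 (norm_eq_zero.1 hnpq)).symm
    have hφeq : φ (z - p) = φ (z - q) := by
      rw [map_sub, map_sub]
      linarith
    refine ⟨?_, ?_⟩
    · rw [← h1, ← h2, hφeq]
    · rw [hφst]
      obtain ⟨hA1, hB1'⟩ := hpos (z - p) hzp0 h1
      obtain ⟨hA2, hB2'⟩ := hpos (z - q) hzq0 h2
      have h8 : Bc (z - q) = Bc (z - p) - t1 := by
        have h9 : z - q = (z - p) - (q - p) := by abel
        rw [h9, map_sub, hBqp]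
      have := hφAB (z - p)
      linarith
end

section
/- Let (p,q) be a non-strict pair in X. For every real number c with 0 < c ≤ φ(s_t − p), there is exactly one point z ∈ bisec(p,q) with φ(z − p) = c. (Equivalently: every translate of the line through p and q lying strictly above that line and not above the translate through s_t intersects bisec(p,q) in exactly one point.) -/
variable {X : Type*} [NormedAddCommGroup X] [NormedSpace ℝ X]

lemma aux_convexOn_line (w v : X) : ConvexOn ℝ Set.univ (fun s : ℝ => ‖w + s • v‖) := by
  refine ⟨convex_univ, fun a _ b _ ta tb hta htb htab => ?_⟩
  have key : ta • (w + a • v) + tb • (w + b • v) = (ta + tb) • w + (ta * a + tb * b) • v := by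
    module
  rw [htab, one_smul] at key
  calc ‖w + (ta • a + tb • b) • v‖ = ‖ta • (w + a • v) + tb • (w + b • v)‖ := by
        rw [key]; norm_num [smul_eq_mul]
    _ ≤ ‖ta • (w + a • v)‖ + ‖tb • (w + b • v)‖ := norm_add_le _ _
    _ = ta * ‖w + a • v‖ + tb * ‖w + b • v‖ := by
        rw [norm_smul, norm_smul, Real.norm_eq_abs, Real.norm_eq_abs,
          abs_of_nonneg hta, abs_of_nonneg htb]

set_option maxHeartbeats 1000000

theorem bisector_lower_levels_unique_point
    (hdim : Module.finrank ℝ X = 2) (p q : X) (hpq : p ≠ q)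
    (hns : ¬ strictPair p q)
    (φ : X →L[ℝ] ℝ) (hφ : ‖φ‖ = 1) (hφpq : φ (p - q) = 0)
    (u u' : X) (huu' : u ≠ u')
    (hface : {x : X | ‖x‖ ≤ 1 ∧ φ x = 1} = segment ℝ u u')
    (hlabel : ∃ c : ℝ, 0 < c ∧ u' - u = c • (q - p))
    (s_t : X)
    (hst1 : ∃ t : ℝ, 0 ≤ t ∧ s_t = p + t • u')
    (hst2 : ∃ t : ℝ, 0 ≤ t ∧ s_t = q + t • u) :
    ∀ c : ℝ, 0 < c → c ≤ φ (s_t - p) →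
      ∃! z : X, z ∈ bisec p q ∧ φ (z - p) = c := by
  intro c hc hcle
  have hFD : FiniteDimensional ℝ X := FiniteDimensional.of_finrank_eq_succ hdim
  set v := q - p with hv
  have hvne : v ≠ 0 := sub_ne_zero.mpr (Ne.symm hpq)
  have hvpos : 0 < ‖v‖ := norm_pos_iff.mpr hvne
  have hφv : φ v = 0 := by
    have h : φ (q - p) = -φ (p - q) := by rw [map_sub, map_sub]; ring
    rw [hv, h, hφpq, neg_zero]
  -- face endpoints
  have humem : u ∈ {x : X | ‖x‖ ≤ 1 ∧ φ x = 1} := by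
    rw [hface]; exact left_mem_segment ℝ u u'
  have hu'mem : u' ∈ {x : X | ‖x‖ ≤ 1 ∧ φ x = 1} := by
    rw [hface]; exact right_mem_segment ℝ u u'
  obtain ⟨hule, hφu⟩ := humem
  obtain ⟨hu'le, hφu'⟩ := hu'mem
  -- φ is bounded by the norm
  have hφle : ∀ x : X, φ x ≤ ‖x‖ := by
    intro x
    calc φ x ≤ |φ x| := le_abs_self _
      _ ≤ ‖φ‖ * ‖x‖ := φ.le_opNorm x
      _ = ‖x‖ := by rw [hφ, one_mul]
  -- the kernel of φ is the span of v
  have hkerspan : LinearMap.ker (φ : X →ₗ[ℝ] ℝ) = Submodule.span ℝ {v} := by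
    symm
    apply Submodule.eq_of_le_of_finrank_le
    · rw [Submodule.span_le, Set.singleton_subset_iff]
      simpa [LinearMap.mem_ker] using hφv
    · have hsurj : Function.Surjective (φ : X →ₗ[ℝ] ℝ) := by
        intro r
        exact ⟨r • u', by simp [hφu']⟩
      have h1 : Module.finrank ℝ (LinearMap.range (φ : X →ₗ[ℝ] ℝ)) = 1 := by
        rw [LinearMap.range_eq_top.mpr hsurj, finrank_top, Module.finrank_self]
      have h2 := LinearMap.finrank_range_add_finrank_ker (φ : X →ₗ[ℝ] ℝ)
      rw [hdim, h1] at h2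
      rw [finrank_span_singleton hvne]
      omega
  have hker : ∀ x : X, φ x = 0 → ∃ s : ℝ, x = s • v := by
    intro x hx
    have hx' : x ∈ LinearMap.ker (φ : X →ₗ[ℝ] ℝ) := by
      simpa [LinearMap.mem_ker] using hx
    rw [hkerspan] at hx'
    obtain ⟨s, hs⟩ := Submodule.mem_span_singleton.mp hx'
    exact ⟨s, hs.symm⟩
  -- any functional vanishing on v is a multiple of φ
  have hψφ : ∀ ψ : X →L[ℝ] ℝ, ψ v = 0 → ∀ x : X, ψ x = ψ u' * φ x := by
    intro ψ hψv x
    obtain ⟨s, hs⟩ := hker (x - φ x • u') (by simp [hφu'])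
    have hx : x = φ x • u' + s • v := by rw [← hs]; abel
    rw [hx]
    simp [hψv, hφv, hφu']
    ring
  -- determine t
  obtain ⟨t₁, ht₁0, hst1'⟩ := hst1
  obtain ⟨t₂, ht₂0, hst2'⟩ := hst2
  obtain ⟨clab, hclab0, hclab⟩ := hlabel
  have ht12 : t₂ = t₁ := by
    have h := hst1'.symm.trans hst2'
    have h2 := congrArg φ h
    simp only [map_add, map_smul, hφu, hφu', smul_eq_mul, mul_one] at h2
    have h3 : φ p = φ q := by
      have h4 := hφpq; rw [map_sub] at h4; linarith
    linarith
  have htclab : t₁ * clab = 1 := by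
    have h := hst1'.symm.trans hst2'
    rw [ht12] at h
    have h1 : v = t₁ • u' - t₁ • u := by
      rw [hv, sub_eq_sub_iff_add_eq_add, ← h]; abel
    have h2 : v = (t₁ * clab) • v := by
      nth_rewrite 1 [h1]
      rw [← smul_sub, hclab, smul_smul]
    have h3 : (t₁ * clab - 1) • v = 0 := by rw [sub_smul, one_smul, ← h2, sub_self]
    rcases smul_eq_zero.mp h3 with h4 | h4
    · linarith
    · exact absurd h4 hvne
  have hst_phi : φ (s_t - p) = t₁ := by
    rw [hst1']
    simp [hφu']
  have hct : c ≤ t₁ := by rw [hst_phi] at hcle; exact hcle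
  -- the distance function along the level line
  set w := c • u' with hw
  set d : ℝ → ℝ := fun s => ‖w + s • v‖ with hd
  have hdconv : ConvexOn ℝ Set.univ d := aux_convexOn_line w v
  have hdcont : Continuous d := by
    rw [hd]
    exact (continuous_const.add (continuous_id.smul continuous_const)).norm
  have hφw : ∀ s : ℝ, φ (w + s • v) = c := by
    intro s
    simp [hw, hφu', hφv]
  have hdc : ∀ s : ℝ, c ≤ d s := by
    intro s
    have h := hφle (w + s • v)
    rw [hφw s] at h
    exact h
  have hdlow : ∀ s : ℝ, |s| * ‖v‖ - ‖w‖ ≤ d s := by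
    intro s
    have h0 : w + s • v + -w = s • v := by abel
    have h1 := norm_add_le (w + s • v) (-w)
    rw [h0, norm_neg] at h1
    rw [norm_smul, Real.norm_eq_abs] at h1
    simp only [hd]
    linarith
  have hslope : ∀ x y z : ℝ, x < y → y < z →
      (d y - d x) / (y - x) ≤ (d z - d y) / (z - y) := fun x y z h1 h2 =>
    hdconv.slope_mono_adjacent (Set.mem_univ x) (Set.mem_univ z) h1 h2
  have hslope1 : ∀ s y : ℝ, s < y → d s - d (s - 1) ≤ (d y - d s) / (y - s) := by
    intro s y hsy
    have h := hslope (s - 1) s y (by linarith) hsy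
    rwa [show s - (s - 1) = 1 by ring, div_one] at h
  have hslope2 : ∀ x s : ℝ, x < s - 1 → (d (s - 1) - d x) / (s - 1 - x) ≤ d s - d (s - 1) := by
    intro x s hx
    have h := hslope x (s - 1) s hx (by linarith)
    rwa [show s - (s - 1) = 1 by ring, div_one] at h
  -- existence of a zero of f s = d s - d (s-1)
  set f : ℝ → ℝ := fun s => d s - d (s - 1) with hf
  have hfcont : Continuous f := by
    rw [hf]
    exact hdcont.sub (hdcont.comp (continuous_id.sub continuous_const))
  set R : ℝ := (d 0 + ‖w‖) / ‖v‖ + 2 with hR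
  have hd0 : 0 ≤ d 0 := norm_nonneg _
  have hwnn : 0 ≤ ‖w‖ := norm_nonneg _
  have hRge : 2 ≤ R := by
    have h : 0 ≤ (d 0 + ‖w‖) / ‖v‖ := div_nonneg (by linarith) hvpos.le
    rw [hR]; linarith
  have hRv : (R - 1) * ‖v‖ - ‖w‖ = d 0 + ‖v‖ := by
    have h := div_mul_cancel₀ (d 0 + ‖w‖) hvpos.ne'
    rw [hR]
    ring_nf
    ring_nf at h
    linarith
  have hfRpos : 0 ≤ f R := by
    have h1 : d 0 + ‖v‖ ≤ d (R - 1) := by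
      have h := hdlow (R - 1)
      rw [abs_of_nonneg (by linarith : (0:ℝ) ≤ R - 1)] at h
      linarith
    have h2 := hslope2 0 R (by linarith)
    have h3 : 0 ≤ (d (R - 1) - d 0) / (R - 1 - 0) := div_nonneg (by linarith) (by linarith)
    simp only [hf]
    linarith
  have hfRneg : f (-R) ≤ 0 := by
    have h1 : d 0 + ‖v‖ ≤ d (-R) := by
      have h := hdlow (-R)
      rw [abs_neg, abs_of_nonneg (by linarith : (0:ℝ) ≤ R)] at h
      have hr : R * ‖v‖ = (R - 1) * ‖v‖ + ‖v‖ := by ring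
      nlinarith
    have h2 := hslope1 (-R) 0 (by linarith)
    have h3 : (d 0 - d (-R)) / (0 - -R) ≤ 0 := by
      apply div_nonpos_of_nonpos_of_nonneg <;> linarith
    simp only [hf]
    linarith
  have hIVT := intermediate_value_Icc (by linarith : -R ≤ R) hfcont.continuousOn
  obtain ⟨s0, _, hs0⟩ := hIVT ⟨hfRneg, hfRpos⟩
  -- uniqueness of the zero
  have key : ∀ s₁ s₂ : ℝ, f s₁ = 0 → f s₂ = 0 → s₁ < s₂ → False := by
    intro s₁ s₂ hf1 hf2 hlt
    simp only [hf] at hf1 hf2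
    have e1 : d s₁ = d (s₁ - 1) := by linarith
    have e2 : d s₂ = d (s₂ - 1) := by linarith
    -- all four values equal m
    have hm1 : d s₁ ≤ d s₂ := by
      have h := hslope1 s₁ s₂ hlt
      by_contra hcon
      push_neg at hcon
      have h' : (d s₂ - d s₁) / (s₂ - s₁) < 0 :=
        div_neg_of_neg_of_pos (by linarith) (by linarith)
      linarith
    have hm2 : d (s₂ - 1) ≤ d (s₁ - 1) := by
      have h := hslope2 (s₁ - 1) s₂ (by linarith)
      by_contra hcon
      push_neg at hcon
      have h' : 0 < (d (s₂ - 1) - d (s₁ - 1)) / (s₂ - 1 - (s₁ - 1)) :=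
        div_pos (by linarith) (by linarith)
      linarith
    obtain ⟨m, hm⟩ : ∃ m : ℝ, m = d s₁ := ⟨_, rfl⟩
    have hms1' : d (s₁ - 1) = m := by rw [hm]; exact e1.symm
    have hms2 : d s₂ = m := by linarith
    have hms2' : d (s₂ - 1) = m := by linarith
    -- midpoint
    obtain ⟨y, hy⟩ : ∃ y : ℝ, y = (s₁ - 1 + s₂) / 2 := ⟨_, rfl⟩
    have hy1 : s₁ - 1 < y := by rw [hy]; linarith
    have hy2 : y < s₂ := by rw [hy]; linarith
    have hdyle : d y ≤ m := by
      have h := hdconv.2 (Set.mem_univ (s₁ - 1)) (Set.mem_univ s₂)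
        (by norm_num : (0:ℝ) ≤ 1/2) (by norm_num : (0:ℝ) ≤ 1/2)
        (by norm_num : (1:ℝ)/2 + 1/2 = 1)
      simp only [smul_eq_mul] at h
      have harg : (1/2 : ℝ) * (s₁ - 1) + (1/2 : ℝ) * s₂ = y := by
        rw [hy]; ring
      rw [harg, hms1', hms2] at h
      linarith
    have hdyge : m ≤ d y := by
      rcases lt_trichotomy y (s₂ - 1) with hlt' | heq | hgt
      · have h := hslope y (s₂ - 1) s₂ hlt' (by linarith)
        rw [show s₂ - (s₂ - 1) = 1 by ring, div_one] at h
        have h2 : d s₂ - d (s₂ - 1) = 0 := by rw [hms2, hms2']; ring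
        rw [h2] at h
        by_contra hcon
        push_neg at hcon
        have h' : 0 < (d (s₂ - 1) - d y) / (s₂ - 1 - y) :=
          div_pos (by rw [hms2']; linarith) (by linarith)
        linarith
      · rw [heq]; exact hms2'.ge
      · have h := hslope (s₁ - 1) (s₂ - 1) y (by linarith) hgt
        have h2 : (d (s₂ - 1) - d (s₁ - 1)) / (s₂ - 1 - (s₁ - 1)) = 0 := by
          rw [hms2', hms1']; simp
        rw [h2] at h
        by_contra hcon
        push_neg at hcon
        have h' : (d y - d (s₂ - 1)) / (y - (s₂ - 1)) < 0 :=
          div_neg_of_neg_of_pos (by rw [hms2']; linarith) (by linarith)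
        linarith
    have hdy : d y = m := le_antisymm hdyle hdyge
    have hmpos : 0 < m := by rw [hm]; exact lt_of_lt_of_le hc (hdc s₁)
    have hminv : 0 < m⁻¹ := inv_pos.mpr hmpos
    -- the three scaled points on the unit sphere
    obtain ⟨A, hA⟩ : ∃ A : X, A = m⁻¹ • (w + (s₁ - 1) • v) := ⟨_, rfl⟩
    obtain ⟨B, hB⟩ : ∃ B : X, B = m⁻¹ • (w + s₂ • v) := ⟨_, rfl⟩
    obtain ⟨M, hM⟩ : ∃ M : X, M = m⁻¹ • (w + y • v) := ⟨_, rfl⟩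
    have hnorm : ∀ s : ℝ, ‖m⁻¹ • (w + s • v)‖ = m⁻¹ * d s := by
      intro s
      rw [norm_smul, Real.norm_eq_abs, abs_of_pos hminv]
    have hAn : ‖A‖ = 1 := by
      rw [hA, hnorm, hms1', inv_mul_cancel₀ hmpos.ne']
    have hBn : ‖B‖ = 1 := by
      rw [hB, hnorm, hms2, inv_mul_cancel₀ hmpos.ne']
    have hMn : ‖M‖ = 1 := by
      rw [hM, hnorm, hdy, inv_mul_cancel₀ hmpos.ne']
    have hMne : M ≠ 0 := by
      intro h; rw [h, norm_zero] at hMn; norm_num at hMn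
    obtain ⟨ψ, hψn, hψM⟩ := exists_dual_vector ℝ M (norm_ne_zero_iff.mpr hMne)
    have hψM1 : ψ M = 1 := by rw [hMn] at hψM; exact_mod_cast hψM
    have hψle : ∀ x : X, ψ x ≤ ‖x‖ := by
      intro x
      calc ψ x ≤ |ψ x| := le_abs_self _
        _ ≤ ‖ψ‖ * ‖x‖ := ψ.le_opNorm x
        _ = ‖x‖ := by rw [hψn, one_mul]
    have hAB : A + B = M + M := by
      rw [hA, hB, hM, hy]
      module
    have hsum : ψ A + ψ B = 2 := by
      have h := congrArg ψ hAB
      rw [map_add, map_add, hψM1] at h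
      linarith only [h]
    have hψA : ψ A = 1 := by
      have h1 := hψle A
      have h2 := hψle B
      rw [hAn] at h1; rw [hBn] at h2
      linarith only [h1, h2, hsum]
    have hψB : ψ B = 1 := by
      have h1 := hψle A
      rw [hAn] at h1
      linarith only [h1, hsum, hψA]
    have hBA : B - A = (m⁻¹ * (s₂ - s₁ + 1)) • v := by
      rw [hA, hB]
      module
    have hψv : ψ v = 0 := by
      have h : ψ (B - A) = 0 := by rw [map_sub, hψA, hψB, sub_self]
      rw [hBA, map_smul, smul_eq_mul] at h
      rcases mul_eq_zero.mp h with h' | h'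
      · exfalso
        have hpos : 0 < m⁻¹ * (s₂ - s₁ + 1) := mul_pos hminv (by linarith only [hlt])
        linarith only [hpos, h']
      · exact h'
    have hψeq := hψφ ψ hψv
    have hlam : ψ u' ≤ 1 := by
      have h := hψle u'
      linarith only [h, hu'le]
    have hφA : φ A = m⁻¹ * c := by
      rw [hA, map_smul, smul_eq_mul, hφw]
    have h1 : 1 = ψ u' * (m⁻¹ * c) := by
      rw [← hψA, hψeq A, hφA]
    have hcm : m⁻¹ * c ≤ 1 := by
      have h : c ≤ m := by rw [hm]; exact hdc s₁
      calc m⁻¹ * c ≤ m⁻¹ * m := mul_le_mul_of_nonneg_left h hminv.le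
        _ = 1 := inv_mul_cancel₀ hmpos.ne'
    have hrpos : 0 < m⁻¹ * c := mul_pos hminv hc
    have hr1 : m⁻¹ * c = 1 := by
      have h2 : ψ u' * (m⁻¹ * c) ≤ 1 * (m⁻¹ * c) := mul_le_mul_of_nonneg_right hlam hrpos.le
      rw [one_mul] at h2
      linarith only [h1, h2, hcm]
    have hmc : m = c := by
      have h2 : m * (m⁻¹ * c) = m * 1 := by rw [hr1]
      rw [← mul_assoc, mul_inv_cancel₀ hmpos.ne', one_mul, mul_one] at h2
      exact h2.symm
    -- A and B lie in the face
    have hAface : A ∈ segment ℝ u u' := by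
      rw [← hface]
      exact ⟨le_of_eq hAn, by rw [hφA, hr1]⟩
    have hBface : B ∈ segment ℝ u u' := by
      rw [← hface]
      refine ⟨le_of_eq hBn, ?_⟩
      rw [hB, map_smul, smul_eq_mul, hφw, hr1]
    obtain ⟨α, β, hα, hβ, hαβ, hAdef⟩ := hAface
    obtain ⟨α', β', hα', hβ', hαβ', hBdef⟩ := hBface
    have hβle : β ≤ 1 := by linarith only [hαβ, hα]
    have hβ'le : β' ≤ 1 := by linarith only [hαβ', hα']
    have hdelta : B - A = (β' - β) • (u' - u) := by
      rw [← hAdef, ← hBdef, show α = 1 - β by linarith only [hαβ],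
        show α' = 1 - β' by linarith only [hαβ']]
      module
    have hs : m⁻¹ * (s₂ - s₁ + 1) = (β' - β) * clab := by
      have h := hBA.symm.trans hdelta
      rw [hclab, smul_smul] at h
      have h2 : (m⁻¹ * (s₂ - s₁ + 1) - (β' - β) * clab) • v = 0 := by
        rw [sub_smul, h, sub_self]
      rcases smul_eq_zero.mp h2 with h' | h'
      · linarith only [h']
      · exact absurd h' hvne
    -- derive the contradiction
    have hci : c * c⁻¹ = 1 := mul_inv_cancel₀ hc.ne'
    rw [hmc] at hs
    have h1' : s₂ - s₁ + 1 = c * ((β' - β) * clab) := by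
      have h := congrArg (fun r => c * r) hs
      rw [← mul_assoc, hci, one_mul] at h
      exact h
    have h2' : c * ((β' - β) * clab) ≤ c * clab := by
      have hcc : 0 ≤ c * clab := le_of_lt (mul_pos hc hclab0)
      have hb : β' - β ≤ 1 := by linarith only [hβ'le, hβ]
      calc c * ((β' - β) * clab) = (c * clab) * (β' - β) := by ring
        _ ≤ (c * clab) * 1 := mul_le_mul_of_nonneg_left hb hcc
        _ = c * clab := by ring
    have h3' : c * clab ≤ 1 := by
      have h4 := mul_le_mul_of_nonneg_right hct hclab0.le
      linarith only [h4, htclab]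
    linarith only [h1', h2', h3', hlt]
  have huniqs : ∀ s₁ s₂ : ℝ, f s₁ = 0 → f s₂ = 0 → s₁ = s₂ := by
    intro s₁ s₂ h1 h2
    rcases lt_trichotomy s₁ s₂ with h | h | h
    · exact absurd (key s₁ s₂ h1 h2 h) (not_false)
    · exact h
    · exact absurd (key s₂ s₁ h2 h1 h) (not_false)
  -- final assembly
  set z₀ : X := p + c • u' with hz0
  have hchar : ∀ z : X, φ (z - p) = c → ∃ s : ℝ, z = z₀ + s • v := by
    intro z hz
    have h0 : z - z₀ = (z - p) - c • u' := by rw [hz0]; abel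
    obtain ⟨s, hs⟩ := hker (z - z₀) (by rw [h0, map_sub, hz, map_smul, smul_eq_mul, hφu']; ring)
    exact ⟨s, by rw [← hs]; abel⟩
  have hsubp : ∀ s : ℝ, z₀ + s • v - p = w + s • v := by
    intro s
    rw [hz0, hw]; abel
  have hsubq : ∀ s : ℝ, z₀ + s • v - q = w + (s - 1) • v := by
    intro s
    rw [hz0, hw, hv]; module
  have hnormp : ∀ s : ℝ, ‖z₀ + s • v - p‖ = d s := by
    intro s; rw [hsubp]
  have hnormq : ∀ s : ℝ, ‖z₀ + s • v - q‖ = d (s - 1) := by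
    intro s; rw [hsubq]
  have hfs0 : f s0 = 0 := hs0
  refine ⟨z₀ + s0 • v, ⟨?_, ?_⟩, ?_⟩
  · show ‖z₀ + s0 • v - p‖ = ‖z₀ + s0 • v - q‖
    rw [hnormp, hnormq]
    simp only [hf] at hfs0
    linarith only [hfs0]
  · rw [hsubp, hφw]
  · rintro z' ⟨hz'b, hz'φ⟩
    obtain ⟨s', rfl⟩ := hchar z' hz'φ
    have hz'b' : ‖z₀ + s' • v - p‖ = ‖z₀ + s' • v - q‖ := hz'b
    rw [hnormp, hnormq] at hz'b'
    have hfs' : f s' = 0 := by simp only [hf]; linarith only [hz'b']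
    rw [huniqs s' s0 hfs' hfs0]
end

section
/- Let (p,q) be a non-strict pair in X and set B_t¹ = {z ∈ bisec(p,q) : 0 < φ(z − p) ≤ φ(s_t − p)}. Then for every z ∈ B_t¹, the set B_t¹ is contained in the double cone {z + λ(p − z) + μ(q − z) : λ, μ ∈ ℝ, λμ ≥ 0}. In particular, B_t¹ ⊆ conv{p, q, s_t}. -/
variable {X : Type*} [NormedAddCommGroup X] [NormedSpace ℝ X]

section Helpers
lemma three_pt (v w : X) {x y z : ℝ} (hxy : x < y) (hyz : y < z) :
    ‖y • v + w‖ * (z - x) ≤ ‖x • v + w‖ * (z - y) + ‖z • v + w‖ * (y - x) := by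
  have key : (z - x) • (y • v + w) = (z - y) • (x • v + w) + (y - x) • (z • v + w) := by
    module
  have h1 := norm_add_le ((z - y) • (x • v + w)) ((y - x) • (z • v + w))
  rw [← key, norm_smul, norm_smul, norm_smul, Real.norm_eq_abs, Real.norm_eq_abs,
    Real.norm_eq_abs, abs_of_pos (show (0:ℝ) < z - x by linarith),
    abs_of_pos (show (0:ℝ) < z - y by linarith),
    abs_of_pos (show (0:ℝ) < y - x by linarith)] at h1
  nlinarith [h1]

lemma mono_d (v w : X) {x x' : ℝ} (h : x ≤ x') :
    ‖x • v + w‖ + ‖(x' - 1) • v + w‖ ≤ ‖(x - 1) • v + w‖ + ‖x' • v + w‖ := by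
  rcases eq_or_lt_of_le h with rfl | h
  · linarith
  · have h1 := three_pt v w (show x - 1 < x by linarith) h
    have h2 := three_pt v w (show x - 1 < x' - 1 by linarith) (show x' - 1 < x' by linarith)
    nlinarith [h1, h2]


variable {X : Type*} [NormedAddCommGroup X] [NormedSpace ℝ X]

lemma phi_le_norm' (ψ : X →L[ℝ] ℝ) (hψ : ‖ψ‖ = 1) (x : X) : ψ x ≤ ‖x‖ :=
  (le_abs_self _).trans (by simpa [hψ] using ψ.le_opNorm x)

lemma lb_norm (φ : X →L[ℝ] ℝ) (hφ : ‖φ‖ = 1) (e u : X) (hφe : φ e = 0) (hφu : φ u = 1)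
    (a β : ℝ) : β ≤ ‖a • e + β • u‖ := by
  have h := phi_le_norm' φ hφ (a • e + β • u)
  simpa [hφe, hφu] using h

lemma plateau (φ : X →L[ℝ] ℝ) (hφ : ‖φ‖ = 1) (e u u' : X) (c : ℝ)
    (hφe : φ e = 0) (hφu : φ u = 1) (he : e ≠ 0) (hc : 0 < c) (hu' : u' = u + c • e)
    (hface : {x : X | ‖x‖ ≤ 1 ∧ φ x = 1} = segment ℝ u u')
    {a β : ℝ} (hβ : 0 < β) :
    ‖a • e + β • u‖ = β ↔ 0 ≤ a ∧ a ≤ c * β := by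
  constructor
  · intro hN
    have hmem : β⁻¹ • (a • e + β • u) ∈ segment ℝ u u' := by
      rw [← hface]
      constructor
      · rw [norm_smul, Real.norm_eq_abs, abs_of_pos (inv_pos.mpr hβ), hN]
        field_simp; exact le_rfl
      · simp [hφe, hφu, inv_mul_cancel₀ hβ.ne']
    rw [segment_eq_image] at hmem
    obtain ⟨θ, ⟨h0, h1⟩, hθ⟩ := hmem
    have hθ' : (1 - θ) • u + θ • u' = β⁻¹ • (a • e + β • u) := hθ
    have h2 : β • ((1 - θ) • u + θ • u') = a • e + β • u := by
      rw [hθ']; exact smul_inv_smul₀ hβ.ne' _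
    rw [hu'] at h2
    have hkey : (β * (θ * c) - a) • e = 0 := by
      rw [show (β * (θ * c) - a) • e
          = β • ((1 - θ) • u + θ • (u + c • e)) - (a • e + β • u) by module, h2, sub_self]
    have ha : a = β * (θ * c) := by
      by_contra hne
      exact he (by simpa [sub_eq_zero, smul_eq_zero, Ne.symm hne] using hkey)
    constructor
    · nlinarith [mul_nonneg (mul_nonneg hβ.le h0) hc.le]
    · nlinarith [mul_nonneg (mul_nonneg hβ.le hc.le) (by linarith : (0:ℝ) ≤ 1 - θ)]
  · rintro ⟨h0, h1⟩
    set θ : ℝ := a / (c * β) with hθdef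
    have hθ0 : 0 ≤ θ := div_nonneg h0 (by positivity)
    have hθ1 : θ ≤ 1 := by
      rw [hθdef, div_le_one (by positivity)]; linarith
    have hmem : (1 - θ) • u + θ • u' ∈ {x : X | ‖x‖ ≤ 1 ∧ φ x = 1} := by
      rw [hface, segment_eq_image]
      exact ⟨θ, ⟨hθ0, hθ1⟩, rfl⟩
    obtain ⟨hle, hphi⟩ := hmem
    have heq : ‖(1 - θ) • u + θ • u'‖ = 1 :=
      le_antisymm hle (by calc (1:ℝ) = φ _ := hphi.symm
                            _ ≤ _ := phi_le_norm' φ hφ _)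
    have hca : θ * (c * β) = a := by
      rw [hθdef]; field_simp
    have hrepr : a • e + β • u = β • ((1 - θ) • u + θ • u') := by
      rw [hu']
      match_scalars
      · nlinarith [hca]
      · ring
    rw [hrepr, norm_smul, Real.norm_eq_abs, abs_of_pos hβ, heq, mul_one]

lemma nhs (φ : X →L[ℝ] ℝ) (e u : X) (hu : ‖u‖ = 1) (hφe : φ e = 0) (hφu : φ u = 1)
    (hspan : ∀ v : X, ∃ a b : ℝ, v = a • e + b • u)
    (w : X) (r : ℝ) (hr : r ≠ 0)
    (hseg : ∀ θ : ℝ, 0 ≤ θ → θ ≤ 1 → ‖w + (θ * r) • e‖ = 1)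
    (h0 : 0 < φ w) (h1 : φ w < 1) : False := by
  have hm : ‖w + (2⁻¹ * r) • e‖ = 1 := hseg 2⁻¹ (by norm_num) (by norm_num)
  have hmne : w + (2⁻¹ * r) • e ≠ 0 := fun h => by rw [h, norm_zero] at hm; norm_num at hm
  obtain ⟨ψ, hψ1, hψ2⟩ := exists_dual_vector ℝ _ (norm_ne_zero_iff.mpr hmne)
  rw [hm] at hψ2
  have hψm : ψ w + 2⁻¹ * r * ψ e = 1 := by
    simpa [map_add, map_smul, smul_eq_mul] using hψ2
  have hψw : ψ w ≤ 1 := by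
    have h := phi_le_norm' ψ hψ1 w
    have hw0 : ‖w‖ = 1 := by simpa using hseg 0 le_rfl zero_le_one
    rw [hw0] at h; exact h
  have hψw1 : ψ w + r * ψ e ≤ 1 := by
    have h := phi_le_norm' ψ hψ1 (w + r • e)
    have hw1 : ‖w + r • e‖ = 1 := by simpa using hseg 1 zero_le_one le_rfl
    rw [map_add, map_smul, smul_eq_mul, hw1] at h
    exact h
  have hψweq : ψ w = 1 := by linarith
  have hψe0 : ψ e = 0 := by
    have : r * ψ e = 0 := by linarith
    rcases mul_eq_zero.mp this with h | h
    · exact absurd h hr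
    · exact h
  have hrep : ψ w = ψ u * φ w := by
    obtain ⟨a, b, hab⟩ := hspan w
    rw [hab]
    simp [map_add, map_smul, smul_eq_mul, hψe0, hφe, hφu, mul_comm]
  have h3 : ψ u ≤ 1 := by
    have h := phi_le_norm' ψ hψ1 u
    rw [hu] at h; exact h
  rw [hψweq] at hrep
  have h4 : ψ u * φ w ≤ 1 * φ w := mul_le_mul_of_nonneg_right h3 h0.le
  linarith

lemma eqs (a b : X) (ha : a ≠ 0) (hb : b ≠ 0) (habn : ‖a + b‖ = ‖a‖ + ‖b‖)
    (θ : ℝ) (h0 : 0 ≤ θ) (h1 : θ ≤ 1) :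
    ‖‖a‖⁻¹ • a + θ • (‖b‖⁻¹ • b - ‖a‖⁻¹ • a)‖ = 1 := by
  have hna : (0:ℝ) < ‖a‖ := norm_pos_iff.mpr ha
  have hnb : (0:ℝ) < ‖b‖ := norm_pos_iff.mpr hb
  have hab : a + b ≠ 0 := by
    intro h; rw [h, norm_zero] at habn; nlinarith
  obtain ⟨ψ, hψ1, hψ2⟩ := exists_dual_vector ℝ _ (norm_ne_zero_iff.mpr hab)
  have hψ2' : ψ a + ψ b = ‖a‖ + ‖b‖ := by
    rw [← map_add, ← habn]; simpa using hψ2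
  have hψa : ψ a = ‖a‖ := le_antisymm (phi_le_norm' ψ hψ1 a)
    (by linarith [phi_le_norm' ψ hψ1 b])
  have hψb : ψ b = ‖b‖ := by linarith
  have hub : ‖‖a‖⁻¹ • a + θ • (‖b‖⁻¹ • b - ‖a‖⁻¹ • a)‖ ≤ 1 := by
    have : ‖a‖⁻¹ • a + θ • (‖b‖⁻¹ • b - ‖a‖⁻¹ • a)
        = (1 - θ) • (‖a‖⁻¹ • a) + θ • (‖b‖⁻¹ • b) := by module
    rw [this]
    calc ‖(1 - θ) • (‖a‖⁻¹ • a) + θ • (‖b‖⁻¹ • b)‖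
        ≤ ‖(1 - θ) • (‖a‖⁻¹ • a)‖ + ‖θ • (‖b‖⁻¹ • b)‖ := norm_add_le _ _
      _ = (1 - θ) * (‖a‖⁻¹ * ‖a‖) + θ * (‖b‖⁻¹ * ‖b‖) := by
          rw [norm_smul, norm_smul, norm_smul, norm_smul]
          simp [Real.norm_eq_abs, abs_of_nonneg h0, abs_of_nonneg (by linarith : (0:ℝ) ≤ 1 - θ),
            abs_of_nonneg (inv_pos.mpr hna).le, abs_of_nonneg (inv_pos.mpr hnb).le]
      _ = 1 := by rw [inv_mul_cancel₀ hna.ne', inv_mul_cancel₀ hnb.ne']; ring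
  have hlb : ψ (‖a‖⁻¹ • a + θ • (‖b‖⁻¹ • b - ‖a‖⁻¹ • a)) = 1 := by
    simp only [map_add, map_smul, map_sub, smul_eq_mul, hψa, hψb]
    field_simp; ring
  have := phi_le_norm' ψ hψ1 (‖a‖⁻¹ • a + θ • (‖b‖⁻¹ • b - ‖a‖⁻¹ • a))
  rw [hlb] at this
  linarith


variable (φ : X →L[ℝ] ℝ) (e u u' : X) (c t : ℝ)

lemma tri_bound (hφ : ‖φ‖ = 1)
    (hφe : φ e = 0) (hφu : φ u = 1) (he : e ≠ 0) (hc : 0 < c) (hu' : u' = u + c • e)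
    (hface : {x : X | ‖x‖ ≤ 1 ∧ φ x = 1} = segment ℝ u u')
    (htc : t * c = 1) {α β : ℝ} (hβ : 0 < β) (hβt : β ≤ t)
    (hbis : ‖α • e + β • u‖ = ‖(α - 1) • e + β • u‖) :
    c * β ≤ α ∧ α ≤ 1 := by
  have ht : 0 < t := by nlinarith
  have hcβ1 : c * β ≤ 1 := by nlinarith
  have hpl := fun a => plateau φ hφ e u u' c hφe hφu he hc hu' hface (a := a) hβ
  have hlb := fun a => lb_norm φ hφ e u hφe hφu a β
  constructor
  · by_contra hlt
    push_neg at hlt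
    rcases le_or_gt 0 α with h0 | h0
    · have h1 : ‖α • e + β • u‖ = β := (hpl α).mpr ⟨h0, by linarith⟩
      have h2 : ‖(α - 1) • e + β • u‖ = β := by rw [← hbis]; exact h1
      have := ((hpl (α - 1)).mp h2).1
      linarith
    · have h0' : ‖(0:ℝ) • e + β • u‖ = β := (hpl 0).mpr ⟨le_rfl, by positivity⟩
      have h3 := three_pt e (β • u) (show α - 1 < α by linarith) h0
      rw [h0', ← hbis] at h3
      have hV : β < ‖α • e + β • u‖ := by
        rcases lt_or_eq_of_le (hlb α) with h | h
        · exact h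
        · exact absurd ((hpl α).mp h.symm).1 (not_le.mpr h0)
      nlinarith [h3, hV]
  · by_contra hlt
    push_neg at hlt
    rcases le_or_gt (α - 1) (c * β) with h1 | h1
    · have h2 : ‖(α - 1) • e + β • u‖ = β := (hpl (α - 1)).mpr ⟨by linarith, h1⟩
      have h3 : ‖α • e + β • u‖ = β := by rw [hbis]; exact h2
      have := ((hpl α).mp h3).2
      linarith
    · have hm : ‖(c * β) • e + β • u‖ = β := (hpl (c * β)).mpr ⟨by positivity, le_rfl⟩
      have h3 := three_pt e (β • u) h1 (show α - 1 < α by linarith)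
      rw [hm, ← hbis] at h3
      have hV : β < ‖α • e + β • u‖ := by
        rcases lt_or_eq_of_le (hlb α) with h | h
        · exact h
        · have := ((hpl α).mp h.symm).2; linarith
      nlinarith [h3, hV]

set_option maxHeartbeats 1000000 in
lemma same_height (hφ : ‖φ‖ = 1)
    (hφe : φ e = 0) (hφu : φ u = 1) (hu : ‖u‖ = 1) (he : e ≠ 0) (hc : 0 < c)
    (hu' : u' = u + c • e)
    (hface : {x : X | ‖x‖ ≤ 1 ∧ φ x = 1} = segment ℝ u u')
    (hspan : ∀ v : X, ∃ a b : ℝ, v = a • e + b • u)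
    (htc : t * c = 1) {β x y : ℝ} (hβ : 0 < β) (hβt : β ≤ t)
    (hx : ‖x • e + β • u‖ = ‖(x - 1) • e + β • u‖)
    (hy : ‖y • e + β • u‖ = ‖(y - 1) • e + β • u‖) (hxy : x < y) : False := by
  obtain ⟨hx1, hx2⟩ := tri_bound φ e u u' c t hφ hφe hφu he hc hu' hface htc hβ hβt hx
  obtain ⟨hy1, hy2⟩ := tri_bound φ e u u' c t hφ hφe hφu he hc hu' hface htc hβ hβt hy
  have hcb : 0 < c * β := by positivity
  have hyx : y - 1 < x := by linarith
  have e1 := three_pt e (β • u) (show x - 1 < y - 1 by linarith) hyx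
  have e2 := three_pt e (β • u) hyx hxy
  rw [← hx] at e1
  rw [← hy] at e1 e2
  have hVeq : ‖x • e + β • u‖ = ‖y • e + β • u‖ := by nlinarith [e1, e2]
  set V := ‖x • e + β • u‖ with hV
  have hVβ : β < V := by
    rcases lt_or_eq_of_le (lb_norm φ hφ e u hφe hφu x β) with h | h
    · exact h
    · have h2 := ((plateau φ hφ e u u' c hφe hφu he hc hu' hface hβ).mp h.symm).2
      have h3 : ‖(x - 1) • e + β • u‖ = β := by rw [← hx]; exact h.symm
      have h4 := ((plateau φ hφ e u u' c hφe hφu he hc hu' hface hβ).mp h3).1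
      nlinarith
  have hconst : ∀ s, x - 1 ≤ s → s ≤ y → ‖s • e + β • u‖ = V := by
    intro s hs1 hs2
    have hub : ‖s • e + β • u‖ ≤ V := by
      rcases eq_or_lt_of_le hs1 with rfl | h1
      · exact le_of_eq hx.symm
      · rcases eq_or_lt_of_le hs2 with heq | h2
        · rw [heq]; exact le_of_eq hVeq.symm
        · have h3 := three_pt e (β • u) h1 h2
          rw [← hx] at h3
          rw [← hVeq] at h3
          nlinarith [h3]
    have hlb2 : V ≤ ‖s • e + β • u‖ := by
      rcases lt_trichotomy s x with h1 | rfl | h1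
      · have h3 := three_pt e (β • u) h1 hxy
        rw [← hVeq] at h3
        nlinarith [h3]
      · exact le_rfl
      · have h3 := three_pt e (β • u) (show x - 1 < x by linarith) h1
        rw [← hx] at h3
        nlinarith [h3]
    linarith
  have hV0 : 0 < V := lt_trans hβ hVβ
  set w : X := V⁻¹ • ((x - 1) • e + β • u) with hw
  set r : ℝ := (y - x + 1) / V with hr
  have hrpos : 0 < r := by
    rw [hr]; apply div_pos <;> linarith
  have hrne : r ≠ 0 := hrpos.ne'
  have hseg : ∀ θ : ℝ, 0 ≤ θ → θ ≤ 1 → ‖w + (θ * r) • e‖ = 1 := by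
    intro θ h0 h1
    have hsv : w + (θ * r) • e = V⁻¹ • ((x - 1 + θ * (y - x + 1)) • e + β • u) := by
      rw [hw, hr]
      match_scalars <;> (field_simp; try ring)
    rw [hsv, norm_smul, Real.norm_eq_abs, abs_of_pos (inv_pos.mpr hV0),
      hconst _ (by nlinarith) (by nlinarith), inv_mul_cancel₀ hV0.ne']
  have hφw : φ w = V⁻¹ * β := by
    rw [hw]; simp [map_add, map_smul, hφe, hφu, smul_eq_mul]
  exact nhs φ e u hu hφe hφu hspan w r hrne hseg
    (by rw [hφw]; positivity)
    (by rw [hφw, inv_mul_lt_one₀ hV0]; exact hVβ)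

section Cases
variable (hφ : ‖φ‖ = 1) (hφe : φ e = 0) (hφu : φ u = 1) (hu : ‖u‖ = 1) (he : e ≠ 0)
  (hc : 0 < c) (hu' : u' = u + c • e)
  (hface : {x : X | ‖x‖ ≤ 1 ∧ φ x = 1} = segment ℝ u u')
  (hspan : ∀ v : X, ∃ a b : ℝ, v = a • e + b • u)
  (htc : t * c = 1)

set_option maxHeartbeats 1000000 in
include hφ hφe hφu hu he hc hu' hface hspan htc in
lemma caseA {α α' β k : ℝ} (hβ : 0 < β) (hβt : β ≤ t)
    (hk0 : 0 < k) (hk1 : k < 1)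
    (hbis : ‖α • e + β • u‖ = ‖(α - 1) • e + β • u‖)
    (hbis' : ‖α' • e + (k * β) • u‖ = ‖(α' - 1) • e + (k * β) • u‖) :
    k * α ≤ α' := by
  by_contra hlt
  push_neg at hlt
  have hkne : k ≠ 0 := hk0.ne'
  have h1kne : (1:ℝ) - k ≠ 0 := by intro h; rw [sub_eq_zero] at h; exact absurd h.symm hk1.ne
  have hR : β ≤ ‖α • e + β • u‖ := lb_norm φ hφ e u hφe hφu α β
  set R := ‖α • e + β • u‖ with hRdef
  have hR0 : 0 < R := lt_of_lt_of_le hβ hR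
  have hRne : R ≠ 0 := hR0.ne'
  rcases eq_or_lt_of_le hR with hRe | hRβ
  · have hplα := (plateau φ hφ e u u' c hφe hφu he hc hu' hface hβ).mp hRe.symm
    have h2 : ‖(α - 1) • e + β • u‖ = β := by rw [← hbis]; exact hRe.symm
    have hplα1 := (plateau φ hφ e u u' c hφe hφu he hc hu' hface hβ).mp h2
    have hkβ0 : 0 < k * β := by positivity
    have hkβt : k * β ≤ t := by nlinarith
    have htri := (tri_bound φ e u u' c t hφ hφe hφu he hc hu' hface htc hkβ0 hkβt hbis').1
    nlinarith [htri, hlt, hplα.2, hk0]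
  · have h1 : ‖(k * α) • e + (k * β) • u‖ = k * R := by
      rw [show (k * α) • e + (k * β) • u = k • (α • e + β • u) by module, norm_smul,
        Real.norm_eq_abs, abs_of_pos hk0]
    have hdiff : (k * α - 1) • e + (k * β) • u
        = ((α - 1) • e + β • u) - (1 - k) • (α • e + β • u) := by module
    have h2 : k * R ≤ ‖(k * α - 1) • e + (k * β) • u‖ := by
      have h3 := norm_sub_norm_le ((α - 1) • e + β • u) ((1 - k) • (α • e + β • u))
      rw [← hdiff, ← hbis, norm_smul, Real.norm_eq_abs,
        abs_of_pos (show (0:ℝ) < 1 - k by linarith)] at h3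
      nlinarith [h3]
    have h3 := mono_d e ((k * β) • u) hlt.le
    rw [hbis'] at h3
    have h4 : ‖(k * α - 1) • e + (k * β) • u‖ = k * R := by linarith
    set A := (k * α - 1) • e + (k * β) • u with hA
    set Bv := (1 - k) • (α • e + β • u) with hB
    have hnB : ‖Bv‖ = (1 - k) * R := by
      rw [hB, norm_smul, Real.norm_eq_abs, abs_of_pos (show (0:ℝ) < 1 - k by linarith)]
    have hA0 : A ≠ 0 := by
      intro h; rw [h, norm_zero] at h4; nlinarith
    have hB0 : Bv ≠ 0 := by
      intro h; rw [h, norm_zero] at hnB; nlinarith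
    have habn : ‖A + Bv‖ = ‖A‖ + ‖Bv‖ := by
      have hs : A + Bv = (α - 1) • e + β • u := by rw [hA, hB]; module
      rw [hs, ← hbis, h4, hnB]; ring
    have hd : ‖Bv‖⁻¹ • Bv - ‖A‖⁻¹ • A = (k * R)⁻¹ • e := by
      rw [h4, hnB, hA, hB]
      match_scalars <;> (field_simp; try ring)
    have hseg : ∀ θ : ℝ, 0 ≤ θ → θ ≤ 1 → ‖‖A‖⁻¹ • A + (θ * (k * R)⁻¹) • e‖ = 1 := by
      intro θ h0 h1'
      have hq := eqs A Bv hA0 hB0 habn θ h0 h1'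
      rw [hd, smul_smul] at hq
      exact hq
    have hφA : φ A = k * β := by
      rw [hA]; simp [map_add, map_smul, hφe, hφu, smul_eq_mul]
    have hφw : φ (‖A‖⁻¹ • A) = (k * R)⁻¹ * (k * β) := by
      rw [map_smul, smul_eq_mul, hφA, h4]
    have hkR : 0 < k * R := mul_pos hk0 hR0
    exact nhs φ e u hu hφe hφu hspan (‖A‖⁻¹ • A) ((k * R)⁻¹)
      (inv_ne_zero hkR.ne') hseg
      (by rw [hφw]; positivity)
      (by rw [hφw, inv_mul_lt_one₀ hkR]; nlinarith)

set_option maxHeartbeats 1000000 in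
include hφ hφe hφu hu he hc hu' hface hspan htc in
lemma caseB {α α' β k : ℝ} (hβ : 0 < β) (hβt : β ≤ t)
    (hk0 : 0 < k) (hk1 : k < 1)
    (hbis : ‖α • e + β • u‖ = ‖(α - 1) • e + β • u‖)
    (hbis' : ‖α' • e + (k * β) • u‖ = ‖(α' - 1) • e + (k * β) • u‖) :
    α' ≤ 1 - k + k * α := by
  by_contra hlt
  push_neg at hlt
  have hkne : k ≠ 0 := hk0.ne'
  have h1kne : (1:ℝ) - k ≠ 0 := by intro h; rw [sub_eq_zero] at h; exact absurd h.symm hk1.ne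
  have hR : β ≤ ‖α • e + β • u‖ := lb_norm φ hφ e u hφe hφu α β
  set R := ‖α • e + β • u‖ with hRdef
  have hR0 : 0 < R := lt_of_lt_of_le hβ hR
  have hRne : R ≠ 0 := hR0.ne'
  rcases eq_or_lt_of_le hR with hRe | hRβ
  · have hplα := (plateau φ hφ e u u' c hφe hφu he hc hu' hface hβ).mp hRe.symm
    have h2 : ‖(α - 1) • e + β • u‖ = β := by rw [← hbis]; exact hRe.symm
    have hplα1 := (plateau φ hφ e u u' c hφe hφu he hc hu' hface hβ).mp h2
    have hkβ0 : 0 < k * β := by positivity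
    have hkβt : k * β ≤ t := by nlinarith
    have htri := (tri_bound φ e u u' c t hφ hφe hφu he hc hu' hface htc hkβ0 hkβt hbis').2
    nlinarith [htri, hlt, hplα1.1, hk0]
  · have h2' : ‖(1 - k + k * α - 1) • e + (k * β) • u‖ = k * R := by
      rw [show (1 - k + k * α - 1) • e + (k * β) • u = k • ((α - 1) • e + β • u) by module,
        norm_smul, Real.norm_eq_abs, abs_of_pos hk0, ← hbis]
    have hdiff : (1 - k + k * α) • e + (k * β) • u
        = (α • e + β • u) - (1 - k) • ((α - 1) • e + β • u) := by module
    have h1' : k * R ≤ ‖(1 - k + k * α) • e + (k * β) • u‖ := by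
      have h3 := norm_sub_norm_le (α • e + β • u) ((1 - k) • ((α - 1) • e + β • u))
      rw [← hdiff, norm_smul, Real.norm_eq_abs,
        abs_of_pos (show (0:ℝ) < 1 - k by linarith), ← hbis, ← hRdef] at h3
      nlinarith [h3]
    have h3 := mono_d e ((k * β) • u) hlt.le
    rw [← hbis'] at h3
    have h4 : ‖(1 - k + k * α) • e + (k * β) • u‖ = k * R := by linarith
    set A := (1 - k + k * α) • e + (k * β) • u with hA
    set Bv := (1 - k) • ((α - 1) • e + β • u) with hB
    have hnB : ‖Bv‖ = (1 - k) * R := by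
      rw [hB, norm_smul, Real.norm_eq_abs, abs_of_pos (show (0:ℝ) < 1 - k by linarith), ← hbis]
    have hA0 : A ≠ 0 := by
      intro h; rw [h, norm_zero] at h4; nlinarith
    have hB0 : Bv ≠ 0 := by
      intro h; rw [h, norm_zero] at hnB; nlinarith
    have habn : ‖A + Bv‖ = ‖A‖ + ‖Bv‖ := by
      have hs : A + Bv = α • e + β • u := by rw [hA, hB]; module
      rw [hs, h4, hnB]; ring
    have hd : ‖Bv‖⁻¹ • Bv - ‖A‖⁻¹ • A = (-(k * R)⁻¹) • e := by
      rw [h4, hnB, hA, hB]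
      match_scalars <;> (field_simp; try ring)
    have hseg : ∀ θ : ℝ, 0 ≤ θ → θ ≤ 1 → ‖‖A‖⁻¹ • A + (θ * (-(k * R)⁻¹)) • e‖ = 1 := by
      intro θ h0 h1'
      have hq := eqs A Bv hA0 hB0 habn θ h0 h1'
      rw [hd, smul_smul] at hq
      exact hq
    have hφA : φ A = k * β := by
      rw [hA]; simp [map_add, map_smul, hφe, hφu, smul_eq_mul]
    have hφw : φ (‖A‖⁻¹ • A) = (k * R)⁻¹ * (k * β) := by
      rw [map_smul, smul_eq_mul, hφA, h4]
    have hkR : 0 < k * R := mul_pos hk0 hR0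
    exact nhs φ e u hu hφe hφu hspan (‖A‖⁻¹ • A) (-(k * R)⁻¹)
      (neg_ne_zero.mpr (inv_ne_zero hkR.ne')) hseg
      (by rw [hφw]; positivity)
      (by rw [hφw, inv_mul_lt_one₀ hkR]; nlinarith)

end Cases
end Helpers

set_option maxHeartbeats 1600000 in
theorem bisector_curve_part_in_double_cone
    (hdim : Module.finrank ℝ X = 2) (p q : X) (hpq : p ≠ q)
    (hns : ¬ strictPair p q)
    (φ : X →L[ℝ] ℝ) (hφ : ‖φ‖ = 1) (hφpq : φ (p - q) = 0)
    (u u' : X) (huu' : u ≠ u')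
    (hface : {x : X | ‖x‖ ≤ 1 ∧ φ x = 1} = segment ℝ u u')
    (hlabel : ∃ c : ℝ, 0 < c ∧ u' - u = c • (q - p))
    (s_t : X)
    (hst1 : ∃ t : ℝ, 0 ≤ t ∧ s_t = p + t • u')
    (hst2 : ∃ t : ℝ, 0 ≤ t ∧ s_t = q + t • u) :
    (∀ z ∈ {z ∈ bisec p q | 0 < φ (z - p) ∧ φ (z - p) ≤ φ (s_t - p)},
      {z ∈ bisec p q | 0 < φ (z - p) ∧ φ (z - p) ≤ φ (s_t - p)} ⊆
        {w : X | ∃ l m : ℝ, 0 ≤ l * m ∧ w = z + l • (p - z) + m • (q - z)}) ∧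
    {z ∈ bisec p q | 0 < φ (z - p) ∧ φ (z - p) ≤ φ (s_t - p)} ⊆
      convexHull ℝ {p, q, s_t} := by
  classical
  set e : X := q - p with he_def
  have he : e ≠ 0 := sub_ne_zero.mpr (Ne.symm hpq)
  have hq : q = p + e := by rw [he_def]; abel
  have hφe : φ e = 0 := by
    have h : φ (q - p) = - φ (p - q) := by rw [map_sub, map_sub]; ring
    rw [hφpq] at h
    simpa [he_def] using h
  obtain ⟨c, hc, hcu⟩ := hlabel
  have hu' : u' = u + c • e := by
    rw [he_def, ← hcu]; abel
  have humem : u ∈ {x : X | ‖x‖ ≤ 1 ∧ φ x = 1} := by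
    rw [hface]; exact left_mem_segment ℝ u u'
  have hφu : φ u = 1 := humem.2
  have hu : ‖u‖ = 1 := le_antisymm humem.1 (by
    have h := phi_le_norm' φ hφ u
    rw [hφu] at h; exact h)
  -- the parameter t
  obtain ⟨t1, ht1, hs1⟩ := hst1
  obtain ⟨t2, ht2, hs2⟩ := hst2
  have hte : (t1 * c - 1) • e + (t1 - t2) • u = 0 := by
    rw [show (t1 * c - 1) • e + (t1 - t2) • u = (p + t1 • (u + c • e)) - ((p + e) + t2 • u)
      by module, ← hu', ← hq, ← hs1, ← hs2, sub_self]
  have ht12 : t1 = t2 := by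
    have h := congrArg φ hte
    simp [map_add, map_smul, hφe, hφu, smul_eq_mul] at h
    linarith
  have htc : t1 * c = 1 := by
    rw [ht12, sub_self, zero_smul, add_zero] at hte
    rcases smul_eq_zero.mp hte with h | h
    · rw [ht12]; linarith [sub_eq_zero.mp h]
    · exact absurd h he
  rw [← ht12] at hs2
  set t := t1 with ht_def
  have ht0 : 0 < t := by nlinarith
  have hstp : s_t = p + (e + t • u) := by rw [hs2, hq]; abel
  have hφst : φ (s_t - p) = t := by
    rw [show s_t - p = e + t • u by rw [hstp]; abel]
    simp [hφe, hφu]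
  -- span
  have hind : LinearIndependent ℝ ![e, u] := by
    rw [linearIndependent_fin2]
    constructor
    · show u ≠ 0
      intro h; rw [h, norm_zero] at hu; norm_num at hu
    · intro a ha
      show False
      have ha' : a • u = e := ha
      have h := congrArg φ ha'
      simp only [map_smul, smul_eq_mul, hφu, mul_one, hφe] at h
      rw [h, zero_smul] at ha'
      exact he ha'.symm
  have hsp := hind.span_eq_top_of_card_eq_finrank (by simp [hdim])
  have hspan : ∀ v : X, ∃ a b : ℝ, v = a • e + b • u := by
    intro v
    have hv : v ∈ Submodule.span ℝ (Set.range ![e, u]) := by rw [hsp]; trivial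
    rw [show Set.range ![e, u] = {e, u} by
      ext x
      constructor
      · rintro ⟨i, rfl⟩
        fin_cases i
        · exact Set.mem_insert _ _
        · exact Set.mem_insert_of_mem _ rfl
      · intro hx
        rcases hx with rfl | hx
        · exact ⟨0, rfl⟩
        · rw [Set.mem_singleton_iff] at hx
          exact ⟨1, hx.symm⟩] at hv
    obtain ⟨a, b, hab⟩ := Submodule.mem_span_pair.mp hv
    exact ⟨a, b, hab.symm⟩
  -- coordinates
  have hcoord : ∀ z ∈ {z ∈ bisec p q | 0 < φ (z - p) ∧ φ (z - p) ≤ φ (s_t - p)},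
      ∃ a b : ℝ, z = p + (a • e + b • u) ∧ 0 < b ∧ b ≤ t ∧
        ‖a • e + b • u‖ = ‖(a - 1) • e + b • u‖ := by
    intro z hz
    obtain ⟨hzb, hz1, hz2⟩ := hz
    obtain ⟨a, b, hab⟩ := hspan (z - p)
    have hb : φ (z - p) = b := by rw [hab]; simp [hφe, hφu]
    have hzp : z = p + (a • e + b • u) := by rw [← hab]; abel
    refine ⟨a, b, hzp, ?_, ?_, ?_⟩
    · rw [← hb]; exact hz1
    · rw [← hb, ← hφst]; exact hz2
    · have hzq : z - q = (a - 1) • e + b • u := by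
        rw [hzp, hq]; module
      have hbb : ‖z - p‖ = ‖z - q‖ := hzb
      rw [hab, hzq] at hbb
      exact hbb
  constructor
  · -- double cone part
    rintro z hz z' hz'
    obtain ⟨a, b, hzp, hb0, hbt, hbis⟩ := hcoord z hz
    obtain ⟨a', b', hzp', hb0', hbt', hbis'⟩ := hcoord z' hz'
    refine ⟨(1 - a') - (b' / b) * (1 - a), a' - (b' / b) * a, ?_, ?_⟩
    · rcases lt_trichotomy b' b with hlt | heq | hgt
      · -- b' < b
        have hk0 : 0 < b' / b := div_pos hb0' hb0
        have hk1 : b' / b < 1 := (div_lt_one hb0).mpr hlt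
        have hkb : b' / b * b = b' := by field_simp
        rw [← hkb] at hbis'
        have hA := caseA φ e u u' c t hφ hφe hφu hu he hc hu' hface hspan htc
          hb0 hbt hk0 hk1 hbis hbis'
        have hB := caseB φ e u u' c t hφ hφe hφu hu he hc hu' hface hspan htc
          hb0 hbt hk0 hk1 hbis hbis'
        have hl : 0 ≤ (1 - a') - (b' / b) * (1 - a) := by nlinarith [hB]
        have hm : 0 ≤ a' - (b' / b) * a := by linarith [hA]
        exact mul_nonneg hl hm
      · -- b' = b
        rw [heq] at hbis'
        have haa : a = a' := by
          by_contra hne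
          rcases lt_or_gt_of_ne hne with h | h
          · exact same_height φ e u u' c t hφ hφe hφu hu he hc hu' hface hspan htc
              hb0 hbt hbis hbis' h
          · exact same_height φ e u u' c t hφ hφe hφu hu he hc hu' hface hspan htc
              hb0 hbt hbis' hbis h
        have hm : a' - b' / b * a = 0 := by
          rw [heq, div_self hb0.ne', ← haa]; ring
        rw [hm, mul_zero]
      · -- b < b'
        have hk0 : 0 < b / b' := div_pos hb0 hb0'
        have hk1 : b / b' < 1 := (div_lt_one hb0').mpr hgt
        have hkb : b / b' * b' = b := by field_simp
        have hbis2 := hbis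
        rw [← hkb] at hbis2
        have hA := caseA φ e u u' c t hφ hφe hφu hu he hc hu' hface hspan htc
          hb0' hbt' hk0 hk1 hbis' hbis2
        have hB := caseB φ e u u' c t hφ hφe hφu hu he hc hu' hface hspan htc
          hb0' hbt' hk0 hk1 hbis' hbis2
        -- hA : (b/b') * a' ≤ a ; hB : a ≤ 1 - b/b' + (b/b') * a'
        have hkpos : 0 ≤ b' / b := (div_pos hb0' hb0).le
        have hm : a' - b' / b * a ≤ 0 := by
          have h2 := mul_le_mul_of_nonneg_left hA hkpos
          have h3 : b' / b * (b / b' * a') = a' := by field_simp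
          linarith [h2, h3.symm.le, h3.le]
        have hl : (1 - a') - b' / b * (1 - a) ≤ 0 := by
          have h1 : b / b' * (1 - a') ≤ 1 - a := by nlinarith [hB]
          have h2 := mul_le_mul_of_nonneg_left h1 hkpos
          have h3 : b' / b * (b / b' * (1 - a')) = 1 - a' := by field_simp
          linarith [h2, h3.le, h3.symm.le]
        calc (0:ℝ) ≤ (-((1 - a') - b' / b * (1 - a))) * (-(a' - b' / b * a)) :=
              mul_nonneg (by linarith) (by linarith)
          _ = ((1 - a') - b' / b * (1 - a)) * (a' - b' / b * a) := by ring
    · -- representation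
      rw [hzp', hzp, hq]
      have hbne : b ≠ 0 := hb0.ne'
      match_scalars <;> (field_simp; try ring)
  · -- convex hull part
    intro z hz
    obtain ⟨a, b, hzp, hb0, hbt, hbis⟩ := hcoord z hz
    obtain ⟨h1, h2⟩ := tri_bound φ e u u' c t hφ hφe hφu he hc hu' hface htc hb0 hbt hbis
    have hrep : z = (1 - a) • p + (a - c * b) • q + (c * b) • s_t := by
      rw [hzp, hq, hstp]
      match_scalars
      · ring
      · ring
      · linear_combination (-b) * htc
    have hsum : (![1 - a, a - c * b, c * b] : Fin 3 → ℝ) 0 + ![1 - a, a - c * b, c * b] 1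
        + ![1 - a, a - c * b, c * b] 2 = 1 := by
      show (1 - a) + (a - c * b) + c * b = 1; ring
    have hmem := Finset.centerMass_mem_convexHull (Finset.univ : Finset (Fin 3))
      (w := ![1 - a, a - c * b, c * b]) (z := ![p, q, s_t]) (s := ({p, q, s_t} : Set X))
      (by intro i _
          fin_cases i
          · show (0:ℝ) ≤ 1 - a; linarith
          · show (0:ℝ) ≤ a - c * b; linarith
          · show (0:ℝ) ≤ c * b; positivity)
      (by rw [Fin.sum_univ_three, hsum]; norm_num)
      (by intro i _
          fin_cases i
          · exact Set.mem_insert _ _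
          · exact Set.mem_insert_of_mem _ (Set.mem_insert _ _)
          · exact Set.mem_insert_of_mem _ (Set.mem_insert_of_mem _ rfl))
    rw [Finset.centerMass_eq_of_sum_1 _ _ (by rw [Fin.sum_univ_three, hsum]),
      Fin.sum_univ_three] at hmem
    rw [hrep]
    simpa using hmem
end

section
/- Let (p,q) be a strict pair in X and let φ be a norm-one functional with φ(p − q) = 0. Then for every c ∈ ℝ there is exactly one point z ∈ bisec(p,q) with φ(z − p) = c; that is, every straight line parallel to p − q intersects bisec(p,q) exactly once. -/
variable {X : Type*} [NormedAddCommGroup X] [NormedSpace ℝ X]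

/-- Basic convexity inequality for `t ↦ ‖w + t • u‖`. -/
lemma conv_ineq (w u : X) {l m a b : ℝ} (hl : 0 ≤ l) (hm : 0 ≤ m) (hlm : l + m = 1) :
    ‖w + (l*a + m*b) • u‖ ≤ l * ‖w + a • u‖ + m * ‖w + b • u‖ := by
  have h : l • (w + a • u) + m • (w + b • u) = (l+m) • w + (l*a + m*b) • u := by module
  rw [hlm, one_smul] at h
  rw [← h]
  refine (norm_add_le _ _).trans ?_
  rw [norm_smul, norm_smul, Real.norm_of_nonneg hl, Real.norm_of_nonneg hm]

/-- Three-point convexity inequality, in cleared-denominator form. -/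
lemma conv3 (w u : X) {a x b : ℝ} (hax : a ≤ x) (hxb : x ≤ b) :
    (b - a) * ‖w + x • u‖ ≤ (b - x) * ‖w + a • u‖ + (x - a) * ‖w + b • u‖ := by
  rcases eq_or_lt_of_le (hax.trans hxb) with h | h
  · have hxa : x = a := le_antisymm (h ▸ hxb) hax
    subst hxa; rw [← h]; simp
  · have hba : 0 < b - a := by linarith
    have hl : 0 ≤ (b - x)/(b-a) := div_nonneg (by linarith) hba.le
    have hm : 0 ≤ (x - a)/(b-a) := div_nonneg (by linarith) hba.le
    have hlm : (b - x)/(b-a) + (x - a)/(b-a) = 1 := by field_simp; ring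
    have key := conv_ineq w u hl hm hlm (a := a) (b := b)
    have e : (b - x)/(b-a) * a + (x - a)/(b-a) * b = x := by field_simp; ring
    rw [e] at key
    have := mul_le_mul_of_nonneg_left key hba.le
    calc (b-a) * ‖w + x • u‖
        ≤ (b-a) * ((b - x)/(b-a) * ‖w + a • u‖ + (x - a)/(b-a) * ‖w + b • u‖) := this
      _ = (b - x) * ‖w + a • u‖ + (x - a) * ‖w + b • u‖ := by field_simp

/-- If the convex function `t ↦ ‖w + t • u‖` takes equal values at `t₁, t₁+1` and at
`t₂, t₂+1`, then it is constant on `[t₁, t₂]`. -/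
lemma flat_segment (w u : X) {t₁ t₂ : ℝ} (h12 : t₁ < t₂)
    (h1 : ‖w + t₁ • u‖ = ‖w + (t₁+1) • u‖) (h2 : ‖w + t₂ • u‖ = ‖w + (t₂+1) • u‖) :
    ∀ x ∈ Set.Icc t₁ t₂, ‖w + x • u‖ = ‖w + t₁ • u‖ := by
  have I1 := conv3 w u (a := t₁) (x := t₁ + 1) (b := t₂ + 1) (by linarith) (by linarith)
  rw [← h1, ← h2] at I1
  have hA : ‖w + t₁ • u‖ ≤ ‖w + t₂ • u‖ := by nlinarith [I1]
  have I2 := conv3 w u (a := t₁) (x := t₂) (b := t₂ + 1) (by linarith) (by linarith)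
  rw [← h2] at I2
  have hB : ‖w + t₂ • u‖ ≤ ‖w + t₁ • u‖ := by nlinarith [I2]
  have heq : ‖w + t₂ • u‖ = ‖w + t₁ • u‖ := le_antisymm hB hA
  intro x hx
  obtain ⟨hx1, hx2⟩ := hx
  have I3 := conv3 w u (a := t₁) (x := x) (b := t₂) hx1 hx2
  rw [heq] at I3
  have hup : ‖w + x • u‖ ≤ ‖w + t₁ • u‖ := by nlinarith [I3]
  have I4 := conv3 w u (a := x) (x := t₂) (b := t₂ + 1) hx2 (by linarith)
  rw [← h2, heq] at I4
  have hlo : ‖w + t₁ • u‖ ≤ ‖w + x • u‖ := by nlinarith [I4]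
  linarith

/-- Eventually the norm cannot keep strictly decreasing along a ray. -/
lemma exists_descent (w u : X) (hu : u ≠ 0) :
    ∃ t : ℝ, 0 ≤ t ∧ ‖w + t • u‖ ≤ ‖w + (t+1) • u‖ := by
  by_contra h
  push_neg at h
  have key : ∀ n : ℕ, ‖w + (n : ℝ) • u‖ ≤ ‖w‖ := by
    intro n
    induction n with
    | zero => simp
    | succ k ih =>
      have hk := h (k : ℝ) (Nat.cast_nonneg k)
      have e : ((k+1 : ℕ) : ℝ) = (k : ℝ) + 1 := by push_cast; ring
      rw [e]
      exact le_trans hk.le ih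
  have hnu : 0 < ‖u‖ := norm_pos_iff.mpr hu
  obtain ⟨n, hn⟩ := exists_nat_gt ((‖w‖ + ‖w‖) / ‖u‖)
  have h1 : ‖(n : ℝ) • u‖ ≤ ‖w + (n : ℝ) • u‖ + ‖w‖ := by
    have := norm_sub_le (w + (n : ℝ) • u) w
    simpa using this
  rw [norm_smul, Real.norm_natCast] at h1
  have h2 : (‖w‖ + ‖w‖) < (n : ℝ) * ‖u‖ := (div_lt_iff₀ hnu).mp hn
  have := key n
  linarith

lemma exists_ascent (w u : X) (hu : u ≠ 0) :
    ∃ s : ℝ, s ≤ 0 ∧ ‖w + (s+1) • u‖ ≤ ‖w + s • u‖ := by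
  obtain ⟨t, ht0, ht⟩ := exists_descent w (-u) (neg_ne_zero.mpr hu)
  refine ⟨-t - 1, by linarith, ?_⟩
  have e1 : w + (-t - 1 + 1) • u = w + t • (-u) := by module
  have e2 : w + (-t - 1) • u = w + (t + 1) • (-u) := by module
  rw [e1, e2]
  exact ht

/-- A flat piece of the bisector contradicts strictness. -/
lemma strict_contra (p q : X) (hpq : p ≠ q) (hs : strictPair p q) (w : X) {t₁ t₂ : ℝ}
    (h12 : t₁ < t₂) (h1 : ‖w + t₁ • (p-q)‖ = ‖w + (t₁+1) • (p-q)‖)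
    (h2 : ‖w + t₂ • (p-q)‖ = ‖w + (t₂+1) • (p-q)‖) : False := by
  have hu : p - q ≠ 0 := sub_ne_zero.mpr hpq
  have hflat := flat_segment w (p - q) h12 h1 h2
  have hr0 : 0 < ‖w + t₁ • (p-q)‖ := by
    rcases (norm_nonneg (w + t₁ • (p-q))).lt_or_eq with h | h
    · exact h
    · exfalso
      have e1 : w + t₁ • (p-q) = 0 := norm_eq_zero.mp h.symm
      have e2 : w + (t₁ + 1) • (p-q) = 0 := norm_eq_zero.mp (h1 ▸ h.symm)
      have e3 : (w + (t₁ + 1) • (p-q)) - (w + t₁ • (p-q)) = p - q := by module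
      rw [e1, e2, sub_self] at e3
      exact hu e3.symm
  set r : ℝ := ‖w + t₁ • (p-q)‖
  apply hs
  have hcoef : (t₂ - t₁) * r⁻¹ ≠ 0 :=
    mul_ne_zero (by linarith) (inv_ne_zero hr0.ne')
  refine ⟨r⁻¹ • (w + t₁ • (p-q)), r⁻¹ • (w + t₂ • (p-q)), ?_, ?_, ⟨(t₂ - t₁) * r⁻¹, ?_⟩⟩
  · intro h
    have e : r⁻¹ • (w + t₂ • (p-q)) - r⁻¹ • (w + t₁ • (p-q)) = ((t₂ - t₁) * r⁻¹) • (p-q) := by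
      module
    rw [← h, sub_self] at e
    exact hu ((smul_eq_zero.mp e.symm).resolve_left hcoef)
  · rintro x ⟨s, t, hs0, ht0, hst, hx⟩
    have hd : 0 ≤ t₂ - t₁ := by linarith
    have hs' : s = 1 - t := by linarith
    subst hs'
    have hpt : (1 - t) * t₁ + t * t₂ ∈ Set.Icc t₁ t₂ := by
      have k1 := mul_nonneg ht0 hd
      have k2 := mul_nonneg hs0 hd
      constructor
      · nlinarith
      · nlinarith
    have e : x = r⁻¹ • (w + ((1 - t) * t₁ + t * t₂) • (p-q)) := by
      rw [← hx]
      module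
    rw [Set.mem_setOf_eq, e, norm_smul, hflat _ hpt,
      Real.norm_of_nonneg (inv_nonneg.mpr hr0.le), inv_mul_cancel₀ hr0.ne']
  · module

theorem strict_bisector_meets_parallels_once
    (hdim : Module.finrank ℝ X = 2) (p q : X) (hpq : p ≠ q)
    (hs : strictPair p q)
    (φ : X →L[ℝ] ℝ) (hφ : ‖φ‖ = 1) (hφpq : φ (p - q) = 0) :
    ∀ c : ℝ, ∃! z : X, z ∈ bisec p q ∧ φ (z - p) = c := by
  intro c
  have hu : p - q ≠ 0 := sub_ne_zero.mpr hpq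
  -- a vector where φ is nonzero
  obtain ⟨v0, hv0⟩ : ∃ v0 : X, φ v0 ≠ 0 := by
    by_contra h
    push_neg at h
    have : φ = 0 := by ext x; simpa using h x
    rw [this] at hφ
    simp at hφ
  -- the kernel of φ is spanned by p - q
  have hker : ∀ x : X, φ x = 0 → ∃ d : ℝ, x = d • (p - q) := by
    have : FiniteDimensional ℝ X := FiniteDimensional.of_finrank_eq_succ (n := 1) hdim
    set ψ : X →ₗ[ℝ] ℝ := (φ : X →ₗ[ℝ] ℝ) with hψ
    have hsurj : Function.Surjective ψ := by
      intro x
      refine ⟨(x / φ v0) • v0, ?_⟩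
      show φ ((x / φ v0) • v0) = x
      rw [map_smul, smul_eq_mul]
      field_simp
    have hk : Module.finrank ℝ (LinearMap.ker ψ) = 1 := by
      have h := LinearMap.finrank_range_add_finrank_ker ψ
      rw [LinearMap.range_eq_top.mpr hsurj, finrank_top, Module.finrank_self, hdim] at h
      omega
    have hle : Submodule.span ℝ {p - q} ≤ LinearMap.ker ψ := by
      rw [Submodule.span_le, Set.singleton_subset_iff]
      exact LinearMap.mem_ker.mpr hφpq
    have hspan : Submodule.span ℝ {p - q} = LinearMap.ker ψ := by
      apply Submodule.eq_of_le_of_finrank_le hle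
      rw [hk, finrank_span_singleton hu]
    intro x hx
    have hx' : x ∈ Submodule.span ℝ ({p - q} : Set X) := by
      rw [hspan]; exact LinearMap.mem_ker.mpr hx
    obtain ⟨d, hd⟩ := Submodule.mem_span_singleton.mp hx'
    exact ⟨d, hd.symm⟩
  -- choose a base point on the line
  set v : X := (c / φ v0) • v0 with hvdef
  have hvc : φ v = c := by
    rw [hvdef, map_smul, smul_eq_mul]
    field_simp
  -- existence of a bisector point on the line, via IVT
  obtain ⟨t₂, ht₂0, ht₂⟩ := exists_descent v (p - q) hu
  obtain ⟨t₁, ht₁0, ht₁⟩ := exists_ascent v (p - q) hu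
  have hle : t₁ ≤ t₂ := le_trans ht₁0 ht₂0
  have hcont : ContinuousOn
      (fun t : ℝ => ‖v + t • (p-q)‖ - ‖v + (t+1) • (p-q)‖) (Set.Icc t₁ t₂) := by
    apply Continuous.continuousOn
    fun_prop
  have hivt := intermediate_value_Icc' hle hcont
  have h0mem : (0:ℝ) ∈ Set.Icc (‖v + t₂ • (p-q)‖ - ‖v + (t₂+1) • (p-q)‖)
      (‖v + t₁ • (p-q)‖ - ‖v + (t₁+1) • (p-q)‖) := ⟨by linarith, by linarith⟩
  obtain ⟨t₀, _, ht₀⟩ := hivt h0mem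
  have hroot : ‖v + t₀ • (p-q)‖ = ‖v + (t₀+1) • (p-q)‖ := by
    have := ht₀
    simp only at this
    linarith [this]
  -- the candidate point
  refine ⟨p + v + t₀ • (p - q), ⟨?_, ?_⟩, ?_⟩
  · show ‖(p + v + t₀ • (p - q)) - p‖ = ‖(p + v + t₀ • (p - q)) - q‖
    have e1 : (p + v + t₀ • (p - q)) - p = v + t₀ • (p - q) := by module
    have e2 : (p + v + t₀ • (p - q)) - q = v + (t₀ + 1) • (p - q) := by module
    rw [e1, e2, hroot]
  · have e1 : (p + v + t₀ • (p - q)) - p = v + t₀ • (p - q) := by module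
    rw [e1]
    simp only [map_add, map_smul, hφpq, smul_eq_mul, mul_zero, add_zero]
    exact hvc
  · -- uniqueness
    rintro y ⟨hy1, hy2⟩
    set z : X := p + v + t₀ • (p - q) with hzdef
    have hz1 : z ∈ bisec p q := by
      show ‖z - p‖ = ‖z - q‖
      have e1 : z - p = v + t₀ • (p - q) := by rw [hzdef]; module
      have e2 : z - q = v + (t₀ + 1) • (p - q) := by rw [hzdef]; module
      rw [e1, e2, hroot]
    have hz2 : φ (z - p) = c := by
      have e1 : z - p = v + t₀ • (p - q) := by rw [hzdef]; module
      rw [e1]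
      simp only [map_add, map_smul, hφpq, smul_eq_mul, mul_zero, add_zero]
      exact hvc
    -- y - z is in the kernel
    have hyz : φ (y - z) = 0 := by
      have : y - z = (y - p) - (z - p) := by module
      rw [this, map_sub, hy2, hz2, sub_self]
    obtain ⟨d, hd⟩ := hker _ hyz
    by_contra hne
    have hdne : d ≠ 0 := by
      intro h0
      rw [h0, zero_smul] at hd
      exact hne (sub_eq_zero.mp hd)
    -- two bisector equalities for the function t ↦ ‖(z - p) + t • (p-q)‖
    have hA : ‖(z - p) + (0:ℝ) • (p-q)‖ = ‖(z - p) + ((0:ℝ)+1) • (p-q)‖ := by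
      have e1 : (z - p) + (0:ℝ) • (p-q) = z - p := by module
      have e2 : (z - p) + ((0:ℝ)+1) • (p-q) = z - q := by module
      rw [e1, e2]
      exact hz1
    have hB : ‖(z - p) + d • (p-q)‖ = ‖(z - p) + (d+1) • (p-q)‖ := by
      have e1 : (z - p) + d • (p-q) = y - p := by
        rw [← hd]; module
      have e2 : (z - p) + (d+1) • (p-q) = y - q := by
        have : (z - p) + (d+1) • (p-q) = ((z - p) + d • (p-q)) + (p - q) := by module
        rw [this, e1]; module
      rw [e1, e2]
      exact hy1
    rcases lt_trichotomy d 0 with h | h | h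
    · exact strict_contra p q hpq hs (z - p) h hB hA
    · exact hdne h
    · exact strict_contra p q hpq hs (z - p) h hA hB
end

section
/- Let (p,q) be a strict pair in X. Then bisec(p,q) is homeomorphic to the real line ℝ. -/
set_option maxHeartbeats 1000000

variable {X : Type*} [NormedAddCommGroup X] [NormedSpace ℝ X]

lemma convexF (w d : X) : ConvexOn ℝ Set.univ (fun s : ℝ => ‖w + s • d‖) := by
  refine ⟨convex_univ, fun a _ b _ ta tb hta htb hab => ?_⟩
  have key : ta • (w + a • d) + tb • (w + b • d) = (ta + tb) • w + (ta * a + tb * b) • d := by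
    module
  rw [hab, one_smul] at key
  simp only [smul_eq_mul]
  calc ‖w + (ta * a + tb * b) • d‖ = ‖ta • (w + a • d) + tb • (w + b • d)‖ := by rw [key]
    _ ≤ ‖ta • (w + a • d)‖ + ‖tb • (w + b • d)‖ := norm_add_le _ _
    _ = ta * ‖w + a • d‖ + tb * ‖w + b • d‖ := by
        rw [norm_smul, norm_smul, Real.norm_eq_abs, Real.norm_eq_abs, abs_of_nonneg hta,
          abs_of_nonneg htb]

lemma convex_three {F : ℝ → ℝ} (hF : ConvexOn ℝ Set.univ F) {a b c : ℝ}
    (hab : a ≤ b) (hbc : b ≤ c) (hac : a < c) :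
    (c - a) * F b ≤ (c - b) * F a + (b - a) * F c := by
  have hca : (0:ℝ) < c - a := by linarith
  have h := hF.2 (Set.mem_univ a) (Set.mem_univ c)
    (show (0:ℝ) ≤ (c - b) / (c - a) from div_nonneg (by linarith) hca.le)
    (show (0:ℝ) ≤ (b - a) / (c - a) from div_nonneg (by linarith) hca.le)
    (by field_simp; ring)
  have hb : ((c - b) / (c - a)) • a + ((b - a) / (c - a)) • c = b := by
    rw [smul_eq_mul, smul_eq_mul, div_mul_eq_mul_div, div_mul_eq_mul_div, ← add_div,
      div_eq_iff hca.ne']; ring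
  rw [hb] at h
  simp only [smul_eq_mul] at h
  have := mul_le_mul_of_nonneg_left h hca.le
  calc (c - a) * F b ≤ (c - a) * ((c - b) / (c - a) * F a + (b - a) / (c - a) * F c) := this
    _ = (c - b) * F a + (b - a) * F c := by field_simp

lemma segment_of_const (p q : X) (hpq : p ≠ q) (hs : strictPair p q) (u : X) {α β r : ℝ}
    (hαβ : α < β) (hr : 0 < r)
    (hconst : ∀ t ∈ Set.Icc α β, ‖u + t • (p - q)‖ = r) : False := by
  have hd : p - q ≠ 0 := sub_ne_zero.mpr hpq
  apply hs
  refine ⟨r⁻¹ • (u + α • (p - q)), r⁻¹ • (u + β • (p - q)), ?_, ?_, r⁻¹ * (β - α), ?_⟩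
  · intro h
    have h2 : r⁻¹ • (u + β • (p - q)) - r⁻¹ • (u + α • (p - q)) = (r⁻¹ * (β - α)) • (p - q) := by
      module
    rw [← h, sub_self] at h2
    rcases smul_eq_zero.mp h2.symm with h3 | h3
    · have : r⁻¹ ≠ 0 := inv_ne_zero hr.ne'
      rcases mul_eq_zero.mp h3 with h4 | h4
      · exact this h4
      · linarith [sub_eq_zero.mp (by linarith : β - α = 0)]
    · exact hd h3
  · intro x hx
    obtain ⟨ta, tb, hta, htb, habs, hxeq⟩ := hx
    have key : ta • (r⁻¹ • (u + α • (p - q))) + tb • (r⁻¹ • (u + β • (p - q)))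
        = r⁻¹ • ((ta + tb) • u + (ta * α + tb * β) • (p - q)) := by module
    rw [habs, one_smul] at key
    have hmem : ta * α + tb * β ∈ Set.Icc α β := by
      have hta1 : ta = 1 - tb := by linarith
      subst hta1
      constructor
      · nlinarith [mul_nonneg htb (sub_nonneg.mpr hαβ.le)]
      · nlinarith [mul_nonneg hta (sub_nonneg.mpr hαβ.le)]
    show ‖x‖ = 1
    rw [← hxeq, key, norm_smul, hconst _ hmem, Real.norm_eq_abs,
      abs_of_pos (inv_pos.mpr hr), inv_mul_cancel₀ hr.ne']
  · rw [show r⁻¹ • (u + β • (p - q)) - r⁻¹ • (u + α • (p - q)) = (r⁻¹ * (β - α)) • (p - q) by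
      module]

lemma no_parallel (p q : X) (hpq : p ≠ q) (hs : strictPair p q)
    {z : X} {c : ℝ} (hc : 0 < c) (hz : z ∈ bisec p q) (hz' : z + c • (p - q) ∈ bisec p q) :
    False := by
  set d := p - q with hdd
  set u := z - q with hu
  set F : ℝ → ℝ := fun t => ‖u + t • d‖ with hFdef
  have hcv : ConvexOn ℝ Set.univ F := convexF u d
  have hz1 : ‖z - p‖ = ‖z - q‖ := hz
  have hz2 : ‖z + c • d - p‖ = ‖z + c • d - q‖ := hz'
  have e1 : u + (-1 : ℝ) • d = z - p := by rw [hu, hdd]; module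
  have e2 : u + (0 : ℝ) • d = z - q := by rw [hu]; module
  have e3 : u + (c - 1) • d = z + c • d - p := by rw [hu, hdd]; module
  have e4 : u + c • d = z + c • d - q := by rw [hu]; module
  have h10 : F (-1) = F 0 := by show ‖u + (-1:ℝ) • d‖ = ‖u + (0:ℝ) • d‖; rw [e1, e2, hz1]
  have hcc : F (c - 1) = F c := by show ‖u + (c-1) • d‖ = ‖u + c • d‖; rw [e3, e4, hz2]
  have hr1pos : 0 < F 0 := by
    have hF0 : F 0 = ‖z - q‖ := by show ‖u + (0:ℝ) • d‖ = _; rw [e2]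
    rw [hF0]
    rcases (norm_nonneg (z - q)).eq_or_lt with h | h
    · exfalso
      have hq : z = q := by rwa [eq_comm, norm_eq_zero, sub_eq_zero] at h
      have hp : z = p := by
        have : ‖z - p‖ = 0 := by rw [hz1, ← h]
        rwa [norm_eq_zero, sub_eq_zero] at this
      exact hpq (hp ▸ hq)
    · exact h
  have hr2pos : 0 < F c := by
    have hFc : F c = ‖z + c • d - q‖ := by show ‖u + c • d‖ = _; rw [e4]
    rw [hFc]
    rcases (norm_nonneg (z + c • d - q)).eq_or_lt with h | h
    · exfalso
      have hq : z + c • d = q := by rwa [eq_comm, norm_eq_zero, sub_eq_zero] at h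
      have hp : z + c • d = p := by
        have : ‖z + c • d - p‖ = 0 := by rw [hz2, ← h]
        rwa [norm_eq_zero, sub_eq_zero] at this
      exact hpq (hp ▸ hq)
    · exact h
  have T1 : F 0 ≤ F c := by
    have h := convex_three hcv (a := -1) (b := 0) (c := c) (by linarith) (by linarith) (by linarith)
    rw [h10] at h
    nlinarith
  rcases lt_or_ge c 1 with hc1 | hc1
  · have hA := convex_three hcv (a := -1) (b := c - 1) (c := 0) (by linarith) (by linarith)
      (by linarith)
    rw [h10] at hA
    have hr12 : F (c - 1) = F 0 := le_antisymm (by nlinarith) (by rw [hcc]; exact T1)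
    have hc0 : F c = F 0 := by rw [← hcc]; exact hr12
    have hconst : ∀ t ∈ Set.Icc (c - 1) 0, F t = F 0 := by
      rintro t ⟨ht1, ht2⟩
      have hup := convex_three hcv (a := -1) (b := t) (c := 0) (by linarith) ht2 (by linarith)
      rw [h10] at hup
      have hlo := convex_three hcv (a := t) (b := 0) (c := c) ht2 (by linarith) (by linarith)
      rw [hc0] at hlo
      have h1 : F 0 ≤ F t := by nlinarith
      have h2 : F t ≤ F 0 := by nlinarith
      linarith
    exact segment_of_const p q hpq hs u (show c - 1 < 0 by linarith) hr1pos hconst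
  · have hconst : ∀ t ∈ Set.Icc (c - 1) c, F t = F c := by
      rintro t ⟨ht1, ht2⟩
      rcases ht1.eq_or_lt with rfl | htl
      · exact hcc
      · have ht0 : 0 < t := lt_of_le_of_lt (by linarith) htl
        have hup := convex_three hcv (a := c - 1) (b := t) (c := c) ht1 ht2 (by linarith)
        rw [hcc] at hup
        have h2 : F t ≤ F c := by nlinarith
        have hL1 := convex_three hcv (a := -1) (b := 0) (c := t) (by norm_num) ht0.le
          (by linarith)
        rw [h10] at hL1
        have hF0t : F 0 ≤ F t := by nlinarith
        have hL2 := convex_three hcv (a := 0) (b := c - 1) (c := t) (by linarith) htl.le ht0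
        rw [hcc] at hL2
        have h1 : t * F c ≤ t * F t := by
          linarith [mul_le_mul_of_nonneg_left hF0t (show (0:ℝ) ≤ t - (c - 1) by linarith)]
        exact le_antisymm h2 (le_of_mul_le_mul_left h1 ht0)
    exact segment_of_const p q hpq hs u (show c - 1 < c by linarith) hr2pos hconst


lemma mem_bisec_iff (p q y : X) (s : ℝ) :
    y + s • (p - q) ∈ bisec p q ↔ ‖(y - q) + (s - 1) • (p - q)‖ = ‖(y - q) + s • (p - q)‖ := by
  have e1 : y + s • (p - q) - p = (y - q) + (s - 1) • (p - q) := by module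
  have e2 : y + s • (p - q) - q = (y - q) + s • (p - q) := by module
  rw [bisec, Set.mem_setOf_eq, e1, e2]

lemma norm_line_lower (w d : X) (s : ℝ) : |s| * ‖d‖ - ‖w‖ ≤ ‖w + s • d‖ := by
  have h : ‖s • d‖ ≤ ‖w + s • d‖ + ‖w‖ := by
    calc ‖s • d‖ = ‖(w + s • d) - w‖ := by rw [add_sub_cancel_left]
      _ ≤ ‖w + s • d‖ + ‖w‖ := norm_sub_le _ _
  rw [norm_smul, Real.norm_eq_abs] at h
  linarith

lemma g_neg (p q y : X) {s : ℝ} (h1 : 1 ≤ s) (h2 : 2 * ‖y - q‖ < s * ‖p - q‖) :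
    ‖(y - q) + (s - 1) • (p - q)‖ < ‖(y - q) + s • (p - q)‖ := by
  set w := y - q with hw
  set d := p - q with hd
  set F : ℝ → ℝ := fun t => ‖w + t • d‖ with hFdef
  have hcv : ConvexOn ℝ Set.univ F := convexF w d
  have T := convex_three hcv (a := 0) (b := s - 1) (c := s) (by linarith) (by linarith)
    (by linarith)
  have hF0 : F 0 = ‖w‖ := by show ‖w + (0:ℝ) • d‖ = ‖w‖; rw [zero_smul, add_zero]
  have hFs : s * ‖d‖ - ‖w‖ ≤ F s := by
    have := norm_line_lower w d s
    rwa [abs_of_pos (by linarith : (0:ℝ) < s)] at this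
  show F (s - 1) < F s
  nlinarith [hF0, T]

lemma g_pos (p q y : X) {s : ℝ} (h1 : s ≤ 0) (h2 : 2 * ‖y - q‖ < (1 - s) * ‖p - q‖) :
    ‖(y - q) + s • (p - q)‖ < ‖(y - q) + (s - 1) • (p - q)‖ := by
  set w := y - q with hw
  set d := p - q with hd
  set F : ℝ → ℝ := fun t => ‖w + t • d‖ with hFdef
  have hcv : ConvexOn ℝ Set.univ F := convexF w d
  have T := convex_three hcv (a := s - 1) (b := s) (c := 0) (by linarith) h1 (by linarith)
  have hF0 : F 0 = ‖w‖ := by show ‖w + (0:ℝ) • d‖ = ‖w‖; rw [zero_smul, add_zero]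
  have hFs : (1 - s) * ‖d‖ - ‖w‖ ≤ F (s - 1) := by
    have := norm_line_lower w d (s - 1)
    rwa [abs_of_neg (by linarith : s - 1 < 0), neg_sub] at this
  show F s < F (s - 1)
  nlinarith [hF0, T]

lemma exists_s (p q : X) (hpq : p ≠ q) (y : X) : ∃ s : ℝ, y + s • (p - q) ∈ bisec p q := by
  have hdpos : 0 < ‖p - q‖ := norm_pos_iff.mpr (sub_ne_zero.mpr hpq)
  set M := 2 * ‖y - q‖ / ‖p - q‖ with hM
  have hMnn : 0 ≤ M := by positivity
  have hMd : M * ‖p - q‖ = 2 * ‖y - q‖ := div_mul_cancel₀ _ hdpos.ne'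
  set g : ℝ → ℝ := fun s => ‖(y - q) + (s - 1) • (p - q)‖ - ‖(y - q) + s • (p - q)‖ with hg
  have hgc : Continuous g := by
    rw [hg]; fun_prop
  have hlo : min 0 (-M) ≤ max 1 (M + 1) := le_trans (min_le_left _ _) (by
    exact le_trans zero_le_one (le_max_left _ _))
  have hneg : g (max 1 (M + 1)) < 0 := by
    have := g_neg p q y (s := max 1 (M + 1)) (le_max_left _ _) (by
      have : (M + 1) * ‖p - q‖ ≤ max 1 (M + 1) * ‖p - q‖ :=
        mul_le_mul_of_nonneg_right (le_max_right _ _) hdpos.le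
      nlinarith)
    simp only [hg]
    linarith
  have hpos : 0 < g (min 0 (-M)) := by
    have := g_pos p q y (s := min 0 (-M)) (min_le_left _ _) (by
      have h3 : M ≤ -(min 0 (-M)) := by linarith [min_le_right (0:ℝ) (-M)]
      nlinarith)
    simp only [hg]
    linarith
  obtain ⟨s, _, hgs⟩ := intermediate_value_Icc' hlo hgc.continuousOn
    ⟨hneg.le, hpos.le⟩
  rw [hg] at hgs
  simp only at hgs
  exact ⟨s, (mem_bisec_iff p q y s).mpr (by linarith [hgs] : _)⟩

lemma s_bound (p q : X) (hpq : p ≠ q) (y : X) {s : ℝ}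
    (h : y + s • (p - q) ∈ bisec p q) :
    |s| ≤ 1 + 2 * ‖y - q‖ / ‖p - q‖ := by
  have hdpos : 0 < ‖p - q‖ := norm_pos_iff.mpr (sub_ne_zero.mpr hpq)
  set M := 2 * ‖y - q‖ / ‖p - q‖ with hM
  have hMnn : 0 ≤ M := by positivity
  have hMd : M * ‖p - q‖ = 2 * ‖y - q‖ := div_mul_cancel₀ _ hdpos.ne'
  rw [mem_bisec_iff] at h
  rw [abs_le]
  constructor
  · by_contra h'
    push_neg at h'
    have hs0 : s ≤ 0 := by linarith
    have := g_pos p q y hs0 (by nlinarith)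
    linarith [h, this]
  · by_contra h'
    push_neg at h'
    have hs1 : 1 ≤ s := by linarith
    have := g_neg p q y hs1 (by nlinarith)
    linarith [h, this]

theorem strict_bisector_homeomorphic_real
    (hdim : Module.finrank ℝ X = 2) (p q : X) (hpq : p ≠ q)
    (hs : strictPair p q) :
    Nonempty (ℝ ≃ₜ (bisec p q : Set X)) := by
  have hfd : FiniteDimensional ℝ X := FiniteDimensional.of_finrank_eq_succ (n := 1) hdim
  haveI : ProperSpace X := FiniteDimensional.proper ℝ X
  have hd : p - q ≠ 0 := sub_ne_zero.mpr hpq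
  have hdpos : 0 < ‖p - q‖ := norm_pos_iff.mpr hd
  obtain ⟨e, he⟩ : ∃ e, e ∉ Submodule.span ℝ {p - q} := by
    by_contra h
    push_neg at h
    have htop : Submodule.span ℝ {p - q} = ⊤ := eq_top_iff.mpr fun x _ => h x
    have h1 : Module.finrank ℝ X = 1 := by
      rw [← finrank_top ℝ X, ← htop, finrank_span_singleton hd]
    omega
  have hli : LinearIndependent ℝ ![e, p - q] := by
    rw [linearIndependent_fin2]
    refine ⟨?_, fun a ha => he ?_⟩
    · simpa using hd
    · simp only [Matrix.cons_val_one, Matrix.head_cons, Matrix.cons_val_zero] at ha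
      rw [← ha]
      exact Submodule.smul_mem _ _ (Submodule.mem_span_singleton_self _)
  let B : Module.Basis (Fin 2) ℝ X := basisOfLinearIndependentOfCardEqFinrank hli (by simp [hdim])
  have hB : ∀ i, B i = ![e, p - q] i := fun i => by
    rw [coe_basisOfLinearIndependentOfCardEqFinrank]
  have hB0 : B 0 = e := by rw [hB 0]; rfl
  have hB1 : B 1 = p - q := by rw [hB 1]; rfl
  set τ : X →ₗ[ℝ] ℝ := B.coord 0 with hτ
  set σ : X →ₗ[ℝ] ℝ := B.coord 1 with hσ
  have hτcont : Continuous τ := LinearMap.continuous_of_finiteDimensional τ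
  have hrep : ∀ z : X, τ z • e + σ z • (p - q) = z := by
    intro z
    have h := B.sum_repr z
    rw [Fin.sum_univ_two, hB0, hB1] at h
    exact h
  have hτe : τ e = 1 := by
    rw [hτ, ← hB0, Module.Basis.coord_apply, Module.Basis.repr_self, Finsupp.single_eq_same]
  have hτd : τ (p - q) = 0 := by
    rw [hτ, ← hB1, Module.Basis.coord_apply, Module.Basis.repr_self]
    exact Finsupp.single_eq_of_ne' (by decide)
  -- injectivity core
  have hinj : ∀ z ∈ bisec p q, ∀ c : ℝ, z + c • (p - q) ∈ bisec p q → c = 0 := by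
    intro z hz c hzc
    rcases lt_trichotomy c 0 with h | h | h
    · exfalso
      have hz2 : z + c • (p - q) + (-c) • (p - q) = z := by module
      exact no_parallel p q hpq hs (neg_pos.mpr h) hzc (by rw [hz2]; exact hz)
    · exact h
    · exact absurd (no_parallel p q hpq hs h hz hzc) not_false
  set Φ : {z : X // z ∈ bisec p q} → ℝ := fun z => τ z.1 with hΦ
  have hcont : Continuous Φ := hτcont.comp continuous_subtype_val
  have hΦbij : Function.Bijective Φ := by
    constructor
    · rintro ⟨z1, hz1⟩ ⟨z2, hz2⟩ h12
      simp only [hΦ] at h12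
      have key : z2 - z1 = (τ z2 - τ z1) • e + (σ z2 - σ z1) • (p - q) := by
        conv_lhs => rw [← hrep z2, ← hrep z1]
        module
      rw [← h12, sub_self, zero_smul, zero_add] at key
      have hz2' : z1 + (σ z2 - σ z1) • (p - q) = z2 := by rw [← key]; abel
      have hc := hinj z1 hz1 (σ z2 - σ z1) (by rw [hz2']; exact hz2)
      rw [hc, zero_smul, add_zero] at hz2'
      exact Subtype.ext hz2'
    · intro t
      obtain ⟨s, hsmem⟩ := exists_s p q hpq (t • e)
      refine ⟨⟨t • e + s • (p - q), hsmem⟩, ?_⟩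
      simp only [hΦ, map_add, map_smul, hτe, hτd, smul_eq_mul, mul_one, mul_zero, add_zero]
  set E : (bisec p q : Set X) ≃ ℝ := Equiv.ofBijective Φ hΦbij with hE
  have hclosed : IsClosed (bisec p q) :=
    isClosed_eq (continuous_id.sub continuous_const).norm
      (continuous_id.sub continuous_const).norm
  have hproper : IsProperMap Φ := by
    rw [isProperMap_iff_isCompact_preimage]
    refine ⟨hcont, fun K hK => ?_⟩
    rw [Subtype.isCompact_iff]
    obtain ⟨MK, hMK⟩ := (isBounded_iff_forall_norm_le).mp hK.isBounded
    have himg : (Subtype.val '' (Φ ⁻¹' K) : Set X) = bisec p q ∩ (τ ⁻¹' K) := by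
      ext z
      simp only [Set.mem_image, Set.mem_inter_iff, Set.mem_preimage]
      constructor
      · rintro ⟨⟨w, hw⟩, hwK, rfl⟩
        exact ⟨hw, hwK⟩
      · rintro ⟨hz, hzK⟩
        exact ⟨⟨z, hz⟩, hzK, rfl⟩
    rw [himg]
    apply Metric.isCompact_of_isClosed_isBounded
    · exact hclosed.inter (hK.isClosed.preimage hτcont)
    · rw [isBounded_iff_forall_norm_le]
      refine ⟨MK * ‖e‖ + (1 + 2 * (MK * ‖e‖ + ‖q‖) / ‖p - q‖) * ‖p - q‖, ?_⟩
      rintro z ⟨hz, hzK⟩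
      have hzrep := hrep z
      have hτb : |τ z| ≤ MK := by
        have := hMK (τ z) hzK
        rwa [Real.norm_eq_abs] at this
      have hMKnn : 0 ≤ MK := le_trans (abs_nonneg _) hτb
      have hmem : (τ z • e) + σ z • (p - q) ∈ bisec p q := by rw [hzrep]; exact hz
      have hsb := s_bound p q hpq (τ z • e) hmem
      have hyb : ‖τ z • e - q‖ ≤ MK * ‖e‖ + ‖q‖ := by
        calc ‖τ z • e - q‖ ≤ ‖τ z • e‖ + ‖q‖ := norm_sub_le _ _
          _ ≤ MK * ‖e‖ + ‖q‖ := by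
              rw [norm_smul, Real.norm_eq_abs]
              have := mul_le_mul_of_nonneg_right hτb (norm_nonneg e)
              linarith
      have hsb2 : |σ z| ≤ 1 + 2 * (MK * ‖e‖ + ‖q‖) / ‖p - q‖ := by
        refine le_trans hsb ?_
        gcongr
      calc ‖z‖ = ‖τ z • e + σ z • (p - q)‖ := by rw [hzrep]
        _ ≤ ‖τ z • e‖ + ‖σ z • (p - q)‖ := norm_add_le _ _
        _ ≤ MK * ‖e‖ + (1 + 2 * (MK * ‖e‖ + ‖q‖) / ‖p - q‖) * ‖p - q‖ := by
            rw [norm_smul, norm_smul, Real.norm_eq_abs, Real.norm_eq_abs]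
            have h1 := mul_le_mul_of_nonneg_right hτb (norm_nonneg e)
            have h2 := mul_le_mul_of_nonneg_right hsb2 (norm_nonneg (p - q))
            linarith
  have hclosedmap : IsClosedMap Φ := hproper.isClosedMap
  have hopen : IsOpenMap ⇑E := by
    intro U hU
    have himg : ⇑E '' U = (⇑E '' Uᶜ)ᶜ := by
      rw [← E.image_compl, compl_compl]
    rw [himg]
    exact (hclosedmap Uᶜ hU.isClosed_compl).isOpen_compl
  exact ⟨(Equiv.toHomeomorphOfContinuousOpen E hcont hopen).symm⟩
end

section
/- Let (p,q) be a non-strict pair in X. Then C(p,φ) ∩ C(q,φ) = conv({s_t + t(s_t − p) : t ≥ 0} ∪ {s_t + t(s_t − q) : t ≥ 0}); that is, the intersection of the two cones equals the convex hull of the ray from s_t opposite to p and the ray from s_t opposite to q. -/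
variable {X : Type*} [NormedAddCommGroup X] [NormedSpace ℝ X]

theorem cone_inter_cone_eq_convexHull_rays
    (hdim : Module.finrank ℝ X = 2) (p q : X) (hpq : p ≠ q)
    (hns : ¬ strictPair p q)
    (φ : X →L[ℝ] ℝ) (hφ : ‖φ‖ = 1) (hφpq : φ (p - q) = 0)
    (u u' : X) (huu' : u ≠ u')
    (hface : {x : X | ‖x‖ ≤ 1 ∧ φ x = 1} = segment ℝ u u')
    (hlabel : ∃ c : ℝ, 0 < c ∧ u' - u = c • (q - p))
    (s_t : X)
    (hst1 : ∃ t : ℝ, 0 ≤ t ∧ s_t = p + t • u')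
    (hst2 : ∃ t : ℝ, 0 ≤ t ∧ s_t = q + t • u) :
    cone p φ ∩ cone q φ =
      convexHull ℝ ({z : X | ∃ t : ℝ, 0 ≤ t ∧ z = s_t + t • (s_t - p)} ∪
        {z : X | ∃ t : ℝ, 0 ≤ t ∧ z = s_t + t • (s_t - q)}) := by
  obtain ⟨t₁, ht₁0, hs1⟩ := hst1
  obtain ⟨t₂, ht₂0, hs2⟩ := hst2
  have huF : u ∈ {x : X | ‖x‖ ≤ 1 ∧ φ x = 1} := by
    rw [hface]; exact left_mem_segment ℝ u u'
  have hu'F : u' ∈ {x : X | ‖x‖ ≤ 1 ∧ φ x = 1} := by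
    rw [hface]; exact right_mem_segment ℝ u u'
  have hφu : φ u = 1 := huF.2
  have hφu' : φ u' = 1 := hu'F.2
  have hun : ‖u‖ ≤ 1 := huF.1
  have hu'n : ‖u'‖ ≤ 1 := hu'F.1
  -- positivity of t₁, t₂
  have ht₁ : 0 < t₁ := by
    rcases ht₁0.lt_or_eq with h | h
    · exact h
    · exfalso
      rw [← h, zero_smul, add_zero] at hs1
      have hpq2 : p - q = t₂ • u := by rw [← hs1, hs2]; abel
      have ht2 : t₂ = 0 := by
        have := hφpq
        rw [hpq2, map_smul, hφu, smul_eq_mul, mul_one] at this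
        exact this
      rw [ht2, zero_smul, add_zero] at hs2
      exact hpq (hs1.symm.trans hs2)
  have ht₂ : 0 < t₂ := by
    rcases ht₂0.lt_or_eq with h | h
    · exact h
    · exfalso
      rw [← h, zero_smul, add_zero] at hs2
      have hpq2 : q - p = t₁ • u' := by rw [← hs2, hs1]; abel
      have ht1 : t₁ = 0 := by
        have h1 : φ (q - p) = t₁ := by
          rw [hpq2, map_smul, hφu', smul_eq_mul, mul_one]
        have h2 : φ (p - q) = -t₁ := by rw [← neg_sub q p, map_neg, h1]
        rw [hφpq] at h2; linarith
      rw [ht1, zero_smul, add_zero] at hs1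
      exact hpq (hs1.symm.trans hs2)
  -- membership in the cone at 0
  have hK : ∀ a : X, φ a = ‖a‖ ↔ ∃ α β : ℝ, 0 ≤ α ∧ 0 ≤ β ∧ a = α • u + β • u' := by
    intro a
    constructor
    · intro ha
      rcases eq_or_ne a 0 with rfl | h0
      · exact ⟨0, 0, le_refl 0, le_refl 0, by simp⟩
      · have hna : 0 < ‖a‖ := norm_pos_iff.mpr h0
        have hv : (‖a‖⁻¹ • a) ∈ {x : X | ‖x‖ ≤ 1 ∧ φ x = 1} := by
          constructor
          · rw [norm_smul, Real.norm_eq_abs, abs_of_pos (inv_pos.mpr hna),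
              inv_mul_cancel₀ hna.ne']
          · rw [map_smul, smul_eq_mul, ha, inv_mul_cancel₀ hna.ne']
        rw [hface] at hv
        obtain ⟨s1, s2, hs1', hs2', hsum, hvs⟩ := hv
        refine ⟨‖a‖ * s1, ‖a‖ * s2, by positivity, by positivity, ?_⟩
        have hstep : (‖a‖ * s1) • u + (‖a‖ * s2) • u' = ‖a‖ • (s1 • u + s2 • u') := by
          rw [smul_add, smul_smul, smul_smul]
        rw [hstep, hvs, smul_smul, mul_inv_cancel₀ hna.ne', one_smul]
    · rintro ⟨α, β, hα, hβ, rfl⟩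
      have h1 : φ (α • u + β • u') = α + β := by
        rw [map_add, map_smul, map_smul, hφu, hφu']; simp
      have h2 : ‖α • u + β • u'‖ ≤ α + β := by
        calc ‖α • u + β • u'‖ ≤ ‖α • u‖ + ‖β • u'‖ := norm_add_le _ _
          _ = α * ‖u‖ + β * ‖u'‖ := by
              rw [norm_smul, norm_smul, Real.norm_eq_abs, Real.norm_eq_abs,
                abs_of_nonneg hα, abs_of_nonneg hβ]
          _ ≤ α * 1 + β * 1 := by
              exact add_le_add (mul_le_mul_of_nonneg_left hun hα)
                (mul_le_mul_of_nonneg_left hu'n hβ)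
          _ = α + β := by ring
      have h3 : φ (α • u + β • u') ≤ ‖α • u + β • u'‖ := by
        calc φ (α • u + β • u') ≤ ‖φ‖ * ‖α • u + β • u'‖ :=
              le_trans (le_abs_self _) (φ.le_opNorm _)
          _ = ‖α • u + β • u'‖ := by rw [hφ, one_mul]
      linarith
  -- uniqueness of representation
  have huniq : ∀ α β γ δ : ℝ, α • u + β • u' = γ • u + δ • u' → α = γ ∧ β = δ := by
    intro α β γ δ h
    have hφh : α + β = γ + δ := by
      have := congrArg φ h
      simp only [map_add, map_smul, hφu, hφu', smul_eq_mul, mul_one] at this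
      exact this
    have h2 : (α - γ) • (u - u') = 0 := by
      have : (α - γ) • u = (δ - β) • u' := by
        rw [sub_smul, sub_smul]
        rw [← sub_eq_zero] at h ⊢
        rw [← sub_eq_zero]
        have := h
        abel_nf at this ⊢
        convert this using 2
      have hd : δ - β = α - γ := by linarith
      rw [hd] at this
      rw [smul_sub, this, sub_self]
    rcases smul_eq_zero.mp h2 with h3 | h3
    · have hag : α = γ := by linarith [sub_eq_zero.mp (by linarith [h3] : α - γ = 0)]
      constructor
      · exact hag
      · have : β = δ := by linarith [hφh, hag]
        exact this
    · exact absurd (sub_eq_zero.mp h3) huu'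
  -- convexity of cones
  have hconv : ∀ x : X, Convex ℝ (cone x φ) := by
    intro x z₁ h₁ z₂ h₂ a b ha hb hab
    simp only [cone, Set.mem_setOf_eq] at h₁ h₂ ⊢
    obtain rfl : b = 1 - a := by linarith
    have heq : a • z₁ + (1 - a) • z₂ - x = a • (z₁ - x) + (1 - a) • (z₂ - x) := by
      module
    rw [heq]
    have hle : φ (a • (z₁ - x) + (1 - a) • (z₂ - x)) ≤ ‖a • (z₁ - x) + (1 - a) • (z₂ - x)‖ := by
      calc φ _ ≤ ‖φ‖ * ‖a • (z₁ - x) + (1 - a) • (z₂ - x)‖ :=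
            le_trans (le_abs_self _) (φ.le_opNorm _)
        _ = _ := by rw [hφ, one_mul]
    have hge : ‖a • (z₁ - x) + (1 - a) • (z₂ - x)‖ ≤
        φ (a • (z₁ - x) + (1 - a) • (z₂ - x)) := by
      calc ‖a • (z₁ - x) + (1 - a) • (z₂ - x)‖
          ≤ ‖a • (z₁ - x)‖ + ‖(1 - a) • (z₂ - x)‖ := norm_add_le _ _
        _ = a * ‖z₁ - x‖ + (1 - a) * ‖z₂ - x‖ := by
            rw [norm_smul, norm_smul, Real.norm_eq_abs, Real.norm_eq_abs,
              abs_of_nonneg ha, abs_of_nonneg hb]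
        _ = φ (a • (z₁ - x) + (1 - a) • (z₂ - x)) := by
            rw [map_add, map_smul, map_smul, smul_eq_mul, smul_eq_mul, h₁, h₂]
    linarith
  -- the two key facts about s_t
  have hsp : s_t - p = t₁ • u' := by rw [hs1]; abel
  have hsq : s_t - q = t₂ • u := by rw [hs2]; abel
  ext z
  constructor
  · rintro ⟨hzp, hzq⟩
    simp only [cone, Set.mem_setOf_eq] at hzp hzq
    obtain ⟨α, β, hα, hβ, hab⟩ := (hK _).mp hzp
    obtain ⟨γ, δ, hγ, hδ, hgd⟩ := (hK _).mp hzq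
    -- z - s_t two ways
    have e1 : z - s_t = α • u + (β - t₁) • u' := by
      have : z - s_t = (z - p) - (s_t - p) := by abel
      rw [this, hab, hsp, sub_smul]; abel
    have e2 : z - s_t = (γ - t₂) • u + δ • u' := by
      have : z - s_t = (z - q) - (s_t - q) := by abel
      rw [this, hgd, hsq, sub_smul]; abel
    obtain ⟨hαγ, hβδ⟩ := huniq _ _ _ _ (e1.symm.trans e2)
    -- z = s_t + α • u + δ • u'
    have hz : z = s_t + α • u + δ • u' := by
      rw [← hβδ]
      have := e1
      rw [sub_eq_iff_eq_add] at this
      rw [this]; abel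
    -- express as midpoint of two generator points
    have hA : s_t + (2 * δ / t₁) • (s_t - p) ∈
        ({z : X | ∃ t : ℝ, 0 ≤ t ∧ z = s_t + t • (s_t - p)} ∪
          {z : X | ∃ t : ℝ, 0 ≤ t ∧ z = s_t + t • (s_t - q)}) :=
      Or.inl ⟨2 * δ / t₁, by positivity, rfl⟩
    have hB : s_t + (2 * α / t₂) • (s_t - q) ∈
        ({z : X | ∃ t : ℝ, 0 ≤ t ∧ z = s_t + t • (s_t - p)} ∪
          {z : X | ∃ t : ℝ, 0 ≤ t ∧ z = s_t + t • (s_t - q)}) :=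
      Or.inr ⟨2 * α / t₂, by positivity, rfl⟩
    have hA' := subset_convexHull ℝ _ hA
    have hB' := subset_convexHull ℝ _ hB
    have hcomb := convex_convexHull ℝ _ hA' hB'
      (by norm_num : (0:ℝ) ≤ 1/2) (by norm_num : (0:ℝ) ≤ 1/2) (by norm_num)
    convert hcomb using 1
    rw [hz, hsp, hsq]
    rw [smul_smul, smul_smul]
    have e3 : 2 * δ / t₁ * t₁ = 2 * δ := by field_simp
    have e4 : 2 * α / t₂ * t₂ = 2 * α := by field_simp
    rw [e3, e4]
    module
  · intro hz
    have hsub : ({z : X | ∃ t : ℝ, 0 ≤ t ∧ z = s_t + t • (s_t - p)} ∪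
        {z : X | ∃ t : ℝ, 0 ≤ t ∧ z = s_t + t • (s_t - q)}) ⊆ cone p φ ∩ cone q φ := by
      rintro w (⟨t, ht, rfl⟩ | ⟨t, ht, rfl⟩)
      · constructor
        · show φ _ = ‖_‖
          refine (hK _).mpr ⟨0, (1 + t) * t₁, le_refl 0, by positivity, ?_⟩
          have : s_t + t • (s_t - p) - p = (1 + t) • (s_t - p) := by module
          rw [this, hsp, smul_smul, zero_smul, zero_add]
        · show φ _ = ‖_‖
          refine (hK _).mpr ⟨t₂, t * t₁, le_of_lt ht₂, by positivity, ?_⟩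
          have : s_t + t • (s_t - p) - q = (s_t - q) + t • (s_t - p) := by module
          rw [this, hsp, hsq, smul_smul]
      · constructor
        · show φ _ = ‖_‖
          refine (hK _).mpr ⟨t * t₂, t₁, by positivity, le_of_lt ht₁, ?_⟩
          have : s_t + t • (s_t - q) - p = (s_t - p) + t • (s_t - q) := by module
          rw [this, hsp, hsq, smul_smul]; abel
        · show φ _ = ‖_‖
          refine (hK _).mpr ⟨(1 + t) * t₂, 0, by positivity, le_refl 0, ?_⟩
          have : s_t + t • (s_t - q) - q = (1 + t) • (s_t - q) := by module
          rw [this, hsq, smul_smul, zero_smul, add_zero]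
    exact convexHull_min hsub ((hconv p).inter (hconv q)) hz
end

section
/- Let X be a two-dimensional real normed vector space with unit sphere S, let a, b ∈ S with a ≠ b such that the segment [a,b] is contained in S, and let x be a point in the relative interior of [a,b] (i.e., x = λa + (1−λ)b for some 0 < λ < 1). Then x has a unique norming functional: there is exactly one continuous linear functional φ : X → ℝ with operator norm 1 and φ(x) = ‖x‖. -/
variable {X : Type*} [NormedAddCommGroup X] [NormedSpace ℝ X]

theorem unique_norming_functional_of_relint_segment
    (hdim : Module.finrank ℝ X = 2)
    (a b : X) (ha : ‖a‖ = 1) (hb : ‖b‖ = 1) (hab : a ≠ b)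
    (hseg : segment ℝ a b ⊆ {x : X | ‖x‖ = 1})
    (x : X) (l : ℝ) (hl0 : 0 < l) (hl1 : l < 1) (hx : x = l • a + (1 - l) • b) :
    ∃! φ : X →L[ℝ] ℝ, ‖φ‖ = 1 ∧ φ x = ‖x‖ := by
  have hx_seg : x ∈ segment ℝ a b :=
    ⟨l, 1 - l, le_of_lt hl0, by linarith, by ring, hx.symm⟩
  have hxn : ‖x‖ = 1 := hseg hx_seg
  have hx0 : x ≠ 0 := by
    intro h; rw [h, norm_zero] at hxn; norm_num at hxn
  have ha0 : a ≠ 0 := by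
    intro h; rw [h, norm_zero] at ha; norm_num at ha
  have hbna : b ≠ -a := by
    intro h
    have h0 : (0 : X) ∈ segment ℝ a b := by
      refine ⟨1/2, 1/2, by norm_num, by norm_num, by norm_num, ?_⟩
      rw [h]; module
    have := hseg h0
    simp only [Set.mem_setOf_eq, norm_zero] at this
    norm_num at this
  -- linear independence of a, b
  have hli : LinearIndependent ℝ ![a, b] := by
    rw [LinearIndependent.pair_iff]
    intro s t hst
    rcases eq_or_ne t 0 with ht | ht
    · subst ht
      refine ⟨?_, rfl⟩
      have : s • a = 0 := by simpa using hst
      rcases smul_eq_zero.mp this with h | h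
      · exact h
      · exact absurd h ha0
    · exfalso
      have hbeq : b = (-(s/t)) • a := by
        have h1 : t • b = (-s) • a := by
          rw [neg_smul]; exact eq_neg_of_add_eq_zero_right hst
        calc b = t⁻¹ • (t • b) := by rw [smul_smul, inv_mul_cancel₀ ht, one_smul]
          _ = t⁻¹ • ((-s) • a) := by rw [h1]
          _ = (-(s/t)) • a := by rw [smul_smul]; congr 1; field_simp
      have habs : |s/t| = 1 := by
        have := congrArg norm hbeq
        rw [hb, norm_smul, ha, mul_one] at this
        rw [abs_div] at *
        simpa using this.symm
      rcases abs_eq (by norm_num : (0:ℝ) ≤ 1) |>.mp habs with h | h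
      · rw [h] at hbeq
        simp at hbeq
        exact hbna (by rw [hbeq])
      · rw [h] at hbeq
        simp at hbeq
        exact hab hbeq.symm
  -- key: any norming functional takes value 1 at a and b
  have key : ∀ φ : X →L[ℝ] ℝ, ‖φ‖ = 1 → φ x = ‖x‖ → φ a = 1 ∧ φ b = 1 := by
    intro φ hφn hφx
    have hA : φ a ≤ 1 := by
      have := φ.le_opNorm a
      rw [hφn, ha, one_mul] at this
      exact (abs_le.mp (by simpa using this)).2
    have hB : φ b ≤ 1 := by
      have := φ.le_opNorm b
      rw [hφn, hb, one_mul] at this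
      exact (abs_le.mp (by simpa using this)).2
    have hsum : l * φ a + (1 - l) * φ b = 1 := by
      have : φ x = l * φ a + (1 - l) * φ b := by
        rw [hx]; simp [map_add, map_smul]
      rw [← this, hφx, hxn]
    constructor <;> nlinarith
  have hx1 : x ≠ 0 := hx0
  obtain ⟨φ₀, hφ₀n, hφ₀x⟩ := exists_dual_vector ℝ x (norm_ne_zero_iff.mpr hx0)
  have hφ₀x' : φ₀ x = ‖x‖ := by exact_mod_cast hφ₀x
  refine ⟨φ₀, ⟨hφ₀n, hφ₀x'⟩, ?_⟩
  intro ψ ⟨hψn, hψx⟩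
  obtain ⟨ha1, hb1⟩ := key φ₀ hφ₀n hφ₀x'
  obtain ⟨ha2, hb2⟩ := key ψ hψn hψx
  let B := basisOfLinearIndependentOfCardEqFinrank hli (by simp [hdim])
  have hcoe : (ψ : X →ₗ[ℝ] ℝ) = (φ₀ : X →ₗ[ℝ] ℝ) := by
    apply B.ext
    intro i
    have hBc : ⇑B = ![a, b] := coe_basisOfLinearIndependentOfCardEqFinrank hli _
    fin_cases i <;> simp [hBc, ha1, hb1, ha2, hb2]
  exact ContinuousLinearMap.coe_injective hcoe
end
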